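/- arXiv:1009.2463 — 6 statements merged into one kernel-verified Lean document; each statement's English description precedes it below -/
import Mathlib

section
/- Let f be a probability density function on [0,∞) that is positive on [0,∞), absolutely continuous, and such that f′ is bounded on every compact subinterval of [0,∞). Let F̄(t) = ∫ₜ^∞ f(x) dx be the survival function, r(t) = f(t)/F̄(t) the hazard rate, and m the renewal density, i.e., the solution of m(t) = f(t) + ∫₀ᵗ m(x) f(t−x) dx for t ≥ 0. Then m is absolutely continuous and for all t > 0: m′(t) = r′(t) F̄(t) + ∫₀ᵗ m′(x) [r(t−x) − r(t)] F̄(t−x) dx. -/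
open MeasureTheory Set

/-- The survival function `F̄ t = ∫_t^∞ f x dx` of a density `f` on `[0, ∞)`. -/
noncomputable def survival (f : ℝ → ℝ) (t : ℝ) : ℝ := ∫ x in Set.Ioi t, f x

/-- The hazard rate `r t = f t / F̄ t`. -/
noncomputable def hazardRate (f : ℝ → ℝ) (t : ℝ) : ℝ := f t / survival f t

/-- A version of the derivative of the hazard rate, expressed through the a.e. derivative
`f'` of `f` (using `F̄' = -f`): `r' = (f' F̄ + f²) / F̄²`. -/
noncomputable def hazardRate' (f f' : ℝ → ℝ) (t : ℝ) : ℝ :=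
  (f' t * survival f t + (f t) ^ 2) / (survival f t) ^ 2

section FubiniAux
open intervalIntegral

/-- Fubini swap for a separable integrand over the triangle `{0 < x, 0 < y, x + y ≤ t}`. -/
lemma renewal_aux_sep_swap (t : ℝ) (ht : 0 ≤ t) (g h : ℝ → ℝ)
    (hgm : Measurable g) (hhm : Measurable h)
    (hgi : IntegrableOn g (Ioc 0 t)) (hhi : IntegrableOn h (Ioc 0 t)) :
    ∫ x in (0:ℝ)..t, g x * (∫ y in (0:ℝ)..(t - x), h y)
      = ∫ y in (0:ℝ)..t, h y * (∫ x in (0:ℝ)..(t - y), g x) := by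
  set S : Set (ℝ × ℝ) := {p | 0 < p.1 ∧ 0 < p.2 ∧ p.1 + p.2 ≤ t} with hSdef
  have hSm : MeasurableSet S := by
    exact (measurableSet_lt measurable_const measurable_fst).inter
      ((measurableSet_lt measurable_const measurable_snd).inter
        (measurableSet_le (measurable_fst.add measurable_snd) measurable_const))
  set Φ : ℝ × ℝ → ℝ := S.indicator (fun p => g p.1 * h p.2) with hΦdef
  have hsub : S ⊆ (Ioc 0 t) ×ˢ (Ioc 0 t) := by
    rintro ⟨x, y⟩ ⟨hx, hy, hxy⟩
    exact ⟨⟨hx, by linarith⟩, ⟨hy, by linarith⟩⟩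
  have hprod : IntegrableOn (fun p : ℝ × ℝ => g p.1 * h p.2) ((Ioc 0 t) ×ˢ (Ioc 0 t))
      ((volume : Measure ℝ).prod volume) := by
    rw [IntegrableOn, ← Measure.prod_restrict]
    exact hgi.mul_prod hhi
  have hΦint : Integrable Φ ((volume : Measure ℝ).prod volume) :=
    (integrable_indicator_iff hSm).mpr (hprod.mono_set hsub)
  have hswap : (∫ x, ∫ y, Φ (x, y)) = ∫ y, ∫ x, Φ (x, y) :=
    integral_integral_swap (f := fun x y => Φ (x, y)) hΦint
  have hL : (fun x => ∫ y, Φ (x, y))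
      = (Ioc 0 t).indicator (fun x => g x * ∫ y in Ioc 0 (t - x), h y) := by
    funext x
    by_cases hx : x ∈ Ioc 0 t
    · rw [Set.indicator_of_mem hx]
      have hsl : (fun y => Φ (x, y)) = (Ioc 0 (t - x)).indicator (fun y => g x * h y) := by
        funext y
        by_cases hy : y ∈ Ioc 0 (t - x)
        · rw [Set.indicator_of_mem hy]
          exact Set.indicator_of_mem (show (x, y) ∈ S from ⟨hx.1, hy.1, by linarith [hy.2]⟩) _
        · rw [Set.indicator_of_notMem hy]
          refine Set.indicator_of_notMem (fun hmem => ?_) _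
          have h2 : 0 < y := hmem.2.1
          have h3 : x + y ≤ t := hmem.2.2
          exact hy ⟨h2, by linarith⟩
      rw [hsl, MeasureTheory.integral_indicator measurableSet_Ioc,
        MeasureTheory.integral_const_mul]
    · rw [Set.indicator_of_notMem hx]
      have hsl : (fun y => Φ (x, y)) = fun _ => (0:ℝ) := by
        funext y
        refine Set.indicator_of_notMem (fun hmem => ?_) _
        have h1 : 0 < x := hmem.1
        have h2 : 0 < y := hmem.2.1
        have h3 : x + y ≤ t := hmem.2.2
        exact hx ⟨h1, by linarith⟩
      rw [hsl, MeasureTheory.integral_zero]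
  have hR : (fun y => ∫ x, Φ (x, y))
      = (Ioc 0 t).indicator (fun y => h y * ∫ x in Ioc 0 (t - y), g x) := by
    funext y
    by_cases hy : y ∈ Ioc 0 t
    · rw [Set.indicator_of_mem hy]
      have hsl : (fun x => Φ (x, y)) = (Ioc 0 (t - y)).indicator (fun x => g x * h y) := by
        funext x
        by_cases hx : x ∈ Ioc 0 (t - y)
        · rw [Set.indicator_of_mem hx]
          exact Set.indicator_of_mem (show (x, y) ∈ S from ⟨hx.1, hy.1, by linarith [hx.2]⟩) _
        · rw [Set.indicator_of_notMem hx]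
          refine Set.indicator_of_notMem (fun hmem => ?_) _
          have h1 : 0 < x := hmem.1
          have h3 : x + y ≤ t := hmem.2.2
          exact hx ⟨h1, by linarith⟩
      rw [hsl, MeasureTheory.integral_indicator measurableSet_Ioc,
        MeasureTheory.integral_mul_const, mul_comm]
    · rw [Set.indicator_of_notMem hy]
      have hsl : (fun x => Φ (x, y)) = fun _ => (0:ℝ) := by
        funext x
        refine Set.indicator_of_notMem (fun hmem => ?_) _
        have h1 : 0 < x := hmem.1
        have h2 : 0 < y := hmem.2.1
        have h3 : x + y ≤ t := hmem.2.2
        exact hy ⟨h2, by linarith⟩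
      rw [hsl, MeasureTheory.integral_zero]
  have key : (∫ x in Ioc (0:ℝ) t, g x * ∫ y in Ioc 0 (t - x), h y)
      = ∫ y in Ioc (0:ℝ) t, h y * ∫ x in Ioc 0 (t - y), g x := by
    rw [← MeasureTheory.integral_indicator measurableSet_Ioc,
      ← MeasureTheory.integral_indicator measurableSet_Ioc, ← hL, ← hR]
    exact hswap
  rw [integral_of_le ht, integral_of_le ht]
  calc (∫ x in Ioc (0:ℝ) t, g x * ∫ y in (0:ℝ)..(t - x), h y)
      = ∫ x in Ioc (0:ℝ) t, g x * ∫ y in Ioc 0 (t - x), h y := by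
        apply setIntegral_congr_fun measurableSet_Ioc
        intro x hx
        dsimp only
        rw [integral_of_le (by linarith [hx.2] : (0:ℝ) ≤ t - x)]
    _ = ∫ y in Ioc (0:ℝ) t, h y * ∫ x in Ioc 0 (t - y), g x := key
    _ = ∫ y in Ioc (0:ℝ) t, h y * ∫ x in (0:ℝ)..(t - y), g x := by
        apply setIntegral_congr_fun measurableSet_Ioc
        intro y hy
        dsimp only
        rw [integral_of_le (by linarith [hy.2] : (0:ℝ) ≤ t - y)]

/-- Fubini swap over the triangle `{0 < x ≤ s ≤ t}` for a general integrand. -/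
lemma renewal_aux_tri_swap (t : ℝ) (ht : 0 ≤ t) (F : ℝ → ℝ → ℝ)
    (hFi : IntegrableOn (fun p : ℝ × ℝ => F p.1 p.2)
      {p : ℝ × ℝ | 0 < p.2 ∧ p.2 ≤ p.1 ∧ p.1 ≤ t} ((volume : Measure ℝ).prod volume)) :
    ∫ s in (0:ℝ)..t, (∫ x in (0:ℝ)..s, F s x) = ∫ x in (0:ℝ)..t, (∫ s in x..t, F s x) := by
  set S : Set (ℝ × ℝ) := {p | 0 < p.2 ∧ p.2 ≤ p.1 ∧ p.1 ≤ t} with hSdef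
  have hSm : MeasurableSet S :=
    (measurableSet_lt measurable_const measurable_snd).inter
      ((measurableSet_le measurable_snd measurable_fst).inter
        (measurableSet_le measurable_fst measurable_const))
  set Φ : ℝ × ℝ → ℝ := S.indicator (fun p => F p.1 p.2) with hΦdef
  have hΦint : Integrable Φ ((volume : Measure ℝ).prod volume) :=
    (integrable_indicator_iff hSm).mpr hFi
  have hswap : (∫ s, ∫ x, Φ (s, x)) = ∫ x, ∫ s, Φ (s, x) :=
    integral_integral_swap (f := fun s x => Φ (s, x)) hΦint
  have hL : (fun s => ∫ x, Φ (s, x))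
      = (Ioc 0 t).indicator (fun s => ∫ x in Ioc 0 s, F s x) := by
    funext s
    by_cases hs : s ∈ Ioc 0 t
    · rw [Set.indicator_of_mem hs]
      have hsl : (fun x => Φ (s, x)) = (Ioc 0 s).indicator (fun x => F s x) := by
        funext x
        by_cases hx : x ∈ Ioc 0 s
        · rw [Set.indicator_of_mem hx]
          exact Set.indicator_of_mem (show (s, x) ∈ S from ⟨hx.1, hx.2, hs.2⟩) _
        · rw [Set.indicator_of_notMem hx]
          refine Set.indicator_of_notMem (fun hmem => ?_) _
          exact hx ⟨hmem.1, hmem.2.1⟩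
      rw [hsl, MeasureTheory.integral_indicator measurableSet_Ioc]
    · rw [Set.indicator_of_notMem hs]
      have hsl : (fun x => Φ (s, x)) = fun _ => (0:ℝ) := by
        funext x
        refine Set.indicator_of_notMem (fun hmem => ?_) _
        have h1 : 0 < x := hmem.1
        have h2 : x ≤ s := hmem.2.1
        have h3 : s ≤ t := hmem.2.2
        exact hs ⟨by linarith, h3⟩
      rw [hsl, MeasureTheory.integral_zero]
  have hR : (fun x => ∫ s, Φ (s, x))
      = (Ioc 0 t).indicator (fun x => ∫ s in Ioc x t, F s x) := by
    funext x
    by_cases hx : x ∈ Ioc 0 t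
    · rw [Set.indicator_of_mem hx]
      have hsl : (fun s => Φ (s, x)) = (Icc x t).indicator (fun s => F s x) := by
        funext s
        by_cases hs : s ∈ Icc x t
        · rw [Set.indicator_of_mem hs]
          exact Set.indicator_of_mem (show (s, x) ∈ S from ⟨hx.1, hs.1, hs.2⟩) _
        · rw [Set.indicator_of_notMem hs]
          refine Set.indicator_of_notMem (fun hmem => ?_) _
          exact hs ⟨hmem.2.1, hmem.2.2⟩
      rw [hsl, MeasureTheory.integral_indicator measurableSet_Icc,
        MeasureTheory.integral_Icc_eq_integral_Ioc]
    · rw [Set.indicator_of_notMem hx]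
      have hsl : (fun s => Φ (s, x)) = fun _ => (0:ℝ) := by
        funext s
        refine Set.indicator_of_notMem (fun hmem => ?_) _
        have h1 : 0 < x := hmem.1
        have h2 : x ≤ s := hmem.2.1
        have h3 : s ≤ t := hmem.2.2
        exact hx ⟨h1, by linarith⟩
      rw [hsl, MeasureTheory.integral_zero]
  have key : (∫ s in Ioc (0:ℝ) t, ∫ x in Ioc 0 s, F s x)
      = ∫ x in Ioc (0:ℝ) t, ∫ s in Ioc x t, F s x := by
    rw [← MeasureTheory.integral_indicator measurableSet_Ioc,
      ← MeasureTheory.integral_indicator measurableSet_Ioc, ← hL, ← hR]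
    exact hswap
  rw [integral_of_le ht, integral_of_le ht]
  calc (∫ s in Ioc (0:ℝ) t, ∫ x in (0:ℝ)..s, F s x)
      = ∫ s in Ioc (0:ℝ) t, ∫ x in Ioc 0 s, F s x := by
        apply setIntegral_congr_fun measurableSet_Ioc
        intro s hs
        dsimp only
        rw [integral_of_le hs.1.le]
    _ = ∫ x in Ioc (0:ℝ) t, ∫ s in Ioc x t, F s x := key
    _ = ∫ x in Ioc (0:ℝ) t, ∫ s in x..t, F s x := by
        apply setIntegral_congr_fun measurableSet_Ioc
        intro x hx
        dsimp only
        rw [integral_of_le hx.2]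

/-- Fubini for convolution-type integrands: swapping the order of a double convolution
integral, with `h` bounded on `[0, t]` and `g` integrable. -/
lemma renewal_aux_conv_swap (t : ℝ) (ht : 0 ≤ t) (g h : ℝ → ℝ)
    (hgm : Measurable g) (hhm : Measurable h)
    (hgi : IntegrableOn g (Ioc 0 t)) (C : ℝ) (hhb : ∀ y ∈ Icc 0 t, |h y| ≤ C) :
    ∫ s in (0:ℝ)..t, (∫ x in (0:ℝ)..s, g x * h (s - x))
      = ∫ x in (0:ℝ)..t, g x * (∫ y in (0:ℝ)..(t - x), h y) := by
  have hTm : MeasurableSet {p : ℝ × ℝ | 0 < p.2 ∧ p.2 ≤ p.1 ∧ p.1 ≤ t} :=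
    (measurableSet_lt measurable_const measurable_snd).inter
      ((measurableSet_le measurable_snd measurable_fst).inter
        (measurableSet_le measurable_fst measurable_const))
  have hTsub : {p : ℝ × ℝ | 0 < p.2 ∧ p.2 ≤ p.1 ∧ p.1 ≤ t} ⊆ (Ioc 0 t) ×ˢ (Ioc 0 t) := by
    rintro ⟨s, x⟩ ⟨h1, h2, h3⟩
    exact ⟨⟨by linarith, h3⟩, ⟨h1, by linarith⟩⟩
  have hbig : IntegrableOn (fun p : ℝ × ℝ => C * |g p.2|) ((Ioc 0 t) ×ˢ (Ioc 0 t))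
      ((volume : Measure ℝ).prod volume) := by
    rw [IntegrableOn, ← Measure.prod_restrict]
    exact ((Iff.mpr integrableOn_const_iff (Or.inr measure_Ioc_lt_top)) :
      IntegrableOn (fun _ : ℝ => C) (Ioc 0 t) volume).mul_prod hgi.abs
  have hFi : IntegrableOn (fun p : ℝ × ℝ => g p.2 * h (p.1 - p.2))
      {p : ℝ × ℝ | 0 < p.2 ∧ p.2 ≤ p.1 ∧ p.1 ≤ t} ((volume : Measure ℝ).prod volume) := by
    refine Integrable.mono' (hbig.mono_set hTsub) ?_ ?_
    · exact ((hgm.comp measurable_snd).mul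
        (hhm.comp (measurable_fst.sub measurable_snd))).aestronglyMeasurable
    · rw [ae_restrict_iff' hTm]
      refine ae_of_all _ (fun p hp => ?_)
      have h1 : 0 < p.2 := hp.1
      have h2 : p.2 ≤ p.1 := hp.2.1
      have h3 : p.1 ≤ t := hp.2.2
      have hb : |h (p.1 - p.2)| ≤ C := hhb _ ⟨by linarith, by linarith⟩
      calc ‖g p.2 * h (p.1 - p.2)‖ = |g p.2| * |h (p.1 - p.2)| := abs_mul _ _
        _ ≤ |g p.2| * C := mul_le_mul_of_nonneg_left hb (abs_nonneg _)
        _ = C * |g p.2| := mul_comm _ _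
  rw [renewal_aux_tri_swap t ht (fun s x => g x * h (s - x)) hFi]
  apply intervalIntegral.integral_congr
  intro x hx
  dsimp only
  rw [intervalIntegral.integral_const_mul]
  congr 1
  rw [intervalIntegral.integral_comp_sub_right (fun y => h y) x, sub_self]

end FubiniAux

/-- **Lemma 1 (key identity, Equation (4) of the paper).**
Let `f` be a probability density on `[0, ∞)` that is positive, absolutely continuous (with
a.e. derivative `f'`, so that `f t = f 0 + ∫ x in 0..t, f' x`), and such that `f'` is bounded
on every compact subinterval of `[0, ∞)`.  Let `F̄` be the survival function, `r = f / F̄` the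
hazard rate, and `m` the renewal density, i.e. the solution of
`m t = f t + ∫ x in 0..t, m x * f (t - x)` for `t ≥ 0`.  Then `m` is absolutely continuous
and a version `m'` of its derivative satisfies, for all `t > 0`,
`m' t = r' t * F̄ t + ∫ x in 0..t, m' x * (r (t - x) - r t) * F̄ (t - x)`. -/
theorem renewal_density_derivative_key_identity
    (f f' m : ℝ → ℝ)
    (hf_meas : Measurable f)
    (hf_pos : ∀ x ∈ Set.Ici (0 : ℝ), 0 < f x)
    (hf_int : IntegrableOn f (Set.Ici 0))
    (hf_one : (∫ x in Set.Ici (0 : ℝ), f x) = 1)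
    (hf'_meas : Measurable f')
    (hf'_intloc : ∀ a b : ℝ, IntervalIntegrable f' volume a b)
    (hf_ac : ∀ t ∈ Set.Ici (0 : ℝ), f t = f 0 + ∫ x in (0 : ℝ)..t, f' x)
    (hf'_bdd : ∀ a b : ℝ, ∃ C : ℝ, ∀ x ∈ Set.Icc a b, |f' x| ≤ C)
    (hm_meas : Measurable m)
    (hm_loc : LocallyIntegrableOn m (Set.Ici 0))
    (hm_eq : ∀ t ∈ Set.Ici (0 : ℝ), m t = f t + ∫ x in (0 : ℝ)..t, m x * f (t - x)) :
    ∃ m' : ℝ → ℝ,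
      (∀ a b : ℝ, IntervalIntegrable m' volume a b) ∧
      (∀ t ∈ Set.Ici (0 : ℝ), m t = m 0 + ∫ x in (0 : ℝ)..t, m' x) ∧
      ∀ t : ℝ, 0 < t →
        m' t = hazardRate' f f' t * survival f t +
          ∫ x in (0 : ℝ)..t,
            m' x * (hazardRate f (t - x) - hazardRate f t) * survival f (t - x) := by
  classical
  -- the primitive of `f`
  set P : ℝ → ℝ := fun s => ∫ y in (0:ℝ)..s, f y with hPdef
  have hfI : ∀ b : ℝ, IntegrableOn f (Ioc 0 b) := fun b =>
    hf_int.mono_set (fun x hx => le_of_lt hx.1)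
  have hf'Ioc : ∀ b : ℝ, 0 ≤ b → IntegrableOn f' (Ioc 0 b) := fun b hb =>
    (intervalIntegrable_iff_integrableOn_Ioc_of_le hb).mp (hf'_intloc 0 b)
  -- survival function basics
  have hsurv : ∀ s : ℝ, 0 ≤ s → survival f s = 1 - P s := by
    intro s hs
    have hunion : Ioc (0:ℝ) s ∪ Ioi s = Ioi 0 := Ioc_union_Ioi_eq_Ioi hs
    have hdisj : Disjoint (Ioc (0:ℝ) s) (Ioi s) := Ioc_disjoint_Ioi le_rfl
    have hint2 : IntegrableOn f (Ioi s) :=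
      hf_int.mono_set (fun x hx => le_of_lt (lt_of_le_of_lt hs hx))
    have h1 : (∫ x in Ioi (0:ℝ), f x) = 1 := by
      rw [← integral_Ici_eq_integral_Ioi]; exact hf_one
    have h2 := setIntegral_union hdisj measurableSet_Ioi (hfI s) hint2
    rw [hunion, h1] at h2
    have hPs : P s = ∫ x in Ioc (0:ℝ) s, f x := intervalIntegral.integral_of_le hs
    show (∫ x in Ioi s, f x) = 1 - P s
    rw [hPs]; linarith
  have hsurvpos : ∀ s : ℝ, 0 ≤ s → 0 < survival f s := by
    intro s hs
    have hint2 : IntegrableOn f (Ioi s) :=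
      hf_int.mono_set (fun x hx => le_of_lt (lt_of_le_of_lt hs hx))
    have hnn : 0 ≤ᵐ[volume.restrict (Ioi s)] f :=
      (ae_restrict_iff' measurableSet_Ioi).mpr
        (ae_of_all _ (fun x hx => (hf_pos x (le_of_lt (lt_of_le_of_lt hs hx))).le))
    show 0 < ∫ x in Ioi s, f x
    rw [setIntegral_pos_iff_support_of_nonneg_ae hnn hint2]
    have hsup : Ioi s ⊆ Function.support f ∩ Ioi s := by
      intro x hx
      exact ⟨ne_of_gt (hf_pos x (le_of_lt (lt_of_le_of_lt hs hx))), hx⟩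
    calc (0:ENNReal) < volume (Ioi s) := by rw [Real.volume_Ioi]; exact ENNReal.zero_lt_top
      _ ≤ volume (Function.support f ∩ Ioi s) := measure_mono hsup
  have hPnonneg : ∀ s : ℝ, 0 ≤ s → 0 ≤ P s := fun s hs =>
    intervalIntegral.integral_nonneg hs (fun u hu => (hf_pos u hu.1).le)
  have hPle : ∀ s : ℝ, 0 ≤ s → P s ≤ 1 := by
    intro s hs
    have h1 := hsurvpos s hs
    have h2 := hsurv s hs
    linarith
  have hm0 : m 0 = f 0 := by
    have := hm_eq 0 (le_refl (0:ℝ))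
    simpa using this
  have hmI : ∀ t : ℝ, IntegrableOn m (Ioc 0 t) := by
    intro t
    rcases le_or_gt t 0 with h | h
    · rw [Ioc_eq_empty (by exact fun hlt => absurd (lt_of_lt_of_le hlt h) (lt_irrefl 0))]
      exact integrableOn_empty
    · exact (hm_loc.integrableOn_compact_subset (fun x hx => hx.1) isCompact_Icc).mono_set
        Ioc_subset_Icc_self
  -- bounds
  have hf'B : ∀ t : ℝ, 0 ≤ t → ∃ C, 0 ≤ C ∧ ∀ x ∈ Icc (0:ℝ) t, |f' x| ≤ C := by
    intro t _
    obtain ⟨C, hC⟩ := hf'_bdd 0 t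
    exact ⟨max C 0, le_max_right _ _, fun x hx => (hC x hx).trans (le_max_left _ _)⟩
  have hfB : ∀ t : ℝ, 0 ≤ t → ∃ B, 0 ≤ B ∧ ∀ s ∈ Icc (0:ℝ) t, |f s| ≤ B := by
    intro t ht
    obtain ⟨C, hC0, hC⟩ := hf'B t ht
    refine ⟨|f 0| + C * t, by positivity, fun s hs => ?_⟩
    rw [hf_ac s hs.1]
    have hb : ‖∫ x in (0:ℝ)..s, f' x‖ ≤ C * |s - 0| := by
      refine intervalIntegral.norm_integral_le_of_norm_le_const (fun x hx => ?_)
      rw [uIoc_of_le hs.1] at hx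
      rw [Real.norm_eq_abs]
      exact hC x ⟨hx.1.le, hx.2.trans hs.2⟩
    rw [Real.norm_eq_abs] at hb
    have h2 : |s - 0| ≤ t := by rw [sub_zero, abs_of_nonneg hs.1]; exact hs.2
    calc |f 0 + ∫ x in (0:ℝ)..s, f' x| ≤ |f 0| + |∫ x in (0:ℝ)..s, f' x| := abs_add_le _ _
      _ ≤ |f 0| + C * t := by nlinarith
  -- the convolution part of `m'`, in a measurable guise
  set K : ℝ → ℝ := fun x => ∫ u, ({q : ℝ × ℝ | 0 < q.2 ∧ q.2 ≤ q.1}.indicator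
      (fun q => m q.2 * f' (q.1 - q.2))) (x, u) with hKdef
  have hKeq : ∀ x : ℝ, 0 ≤ x → K x = ∫ u in (0:ℝ)..x, m u * f' (x - u) := by
    intro x hx
    rw [intervalIntegral.integral_of_le hx,
      ← MeasureTheory.integral_indicator measurableSet_Ioc]
    refine MeasureTheory.integral_congr_ae (ae_of_all _ (fun u => ?_))
    by_cases hu : u ∈ Ioc 0 x
    · rw [Set.indicator_of_mem hu]
      exact Set.indicator_of_mem
        (show (x, u) ∈ {q : ℝ × ℝ | 0 < q.2 ∧ q.2 ≤ q.1} from ⟨hu.1, hu.2⟩) _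
    · rw [Set.indicator_of_notMem hu]
      exact Set.indicator_of_notMem (fun hmem => hu ⟨hmem.1, hmem.2⟩) _
  have hKmeas : Measurable K := by
    have hset : MeasurableSet {q : ℝ × ℝ | 0 < q.2 ∧ q.2 ≤ q.1} :=
      (measurableSet_lt measurable_const measurable_snd).inter
        (measurableSet_le measurable_snd measurable_fst)
    have hmeas : StronglyMeasurable ({q : ℝ × ℝ | 0 < q.2 ∧ q.2 ≤ q.1}.indicator
        (fun q : ℝ × ℝ => m q.2 * f' (q.1 - q.2))) :=
      (((hm_meas.comp measurable_snd).mul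
        (hf'_meas.comp (measurable_fst.sub measurable_snd))).indicator hset).stronglyMeasurable
    exact hmeas.integral_prod_right'.measurable
  have hKbdd : ∀ t : ℝ, 0 ≤ t → ∃ B, 0 ≤ B ∧ ∀ x ∈ Icc (0:ℝ) t, |K x| ≤ B := by
    intro t ht
    obtain ⟨C, hC0, hC⟩ := hf'B t ht
    have hmabs : (0:ℝ) ≤ ∫ u in Ioc (0:ℝ) t, |m u| :=
      setIntegral_nonneg measurableSet_Ioc (fun u _ => abs_nonneg _)
    refine ⟨C * ∫ u in Ioc (0:ℝ) t, |m u|, mul_nonneg hC0 hmabs, fun x hx => ?_⟩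
    rw [hKeq x hx.1, intervalIntegral.integral_of_le hx.1]
    have hb : ∀ u ∈ Ioc (0:ℝ) x, ‖m u * f' (x - u)‖ ≤ C * |m u| := by
      intro u hu
      rw [Real.norm_eq_abs, abs_mul]
      have : |f' (x - u)| ≤ C := hC _ ⟨by linarith [hu.2], by linarith [hu.1, hx.2]⟩
      calc |m u| * |f' (x - u)| ≤ |m u| * C := mul_le_mul_of_nonneg_left this (abs_nonneg _)
        _ = C * |m u| := mul_comm _ _
    have hi1 : IntegrableOn (fun u => m u * f' (x - u)) (Ioc 0 x) := by
      refine Integrable.mono' (((hmI x).abs.const_mul C)) ?_ ?_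
      · exact (hm_meas.mul (hf'_meas.comp (measurable_const.sub measurable_id))).aestronglyMeasurable
      · rw [ae_restrict_iff' measurableSet_Ioc]
        exact ae_of_all _ hb
    calc |∫ u in Ioc (0:ℝ) x, m u * f' (x - u)|
        = ‖∫ u in Ioc (0:ℝ) x, m u * f' (x - u)‖ := (Real.norm_eq_abs _).symm
      _ ≤ ∫ u in Ioc (0:ℝ) x, ‖m u * f' (x - u)‖ := norm_integral_le_integral_norm _
      _ ≤ ∫ u in Ioc (0:ℝ) x, C * |m u| := by
          refine setIntegral_mono_on hi1.norm ((hmI x).abs.const_mul C) measurableSet_Ioc hb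
      _ = C * ∫ u in Ioc (0:ℝ) x, |m u| := integral_const_mul _ _
      _ ≤ C * ∫ u in Ioc (0:ℝ) t, |m u| := by
          refine mul_le_mul_of_nonneg_left ?_ hC0
          refine setIntegral_mono_set (hmI t).abs
            ((ae_restrict_iff' measurableSet_Ioc).mpr
              (ae_of_all _ (fun u _ => abs_nonneg _)))
            (HasSubset.Subset.eventuallyLE (Ioc_subset_Ioc_right hx.2))
  -- m' candidate
  set g : ℝ → ℝ := fun x => if 0 ≤ x then f' x + m x * f 0 + K x else 0 with hgdef
  have hgmeas : Measurable g :=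
    Measurable.ite measurableSet_Ici
      ((hf'_meas.add (hm_meas.mul_const _)).add hKmeas) measurable_const
  have hgIcc : ∀ t : ℝ, 0 ≤ t → IntegrableOn g (Icc 0 t) := by
    intro t ht
    have h1 : IntegrableOn f' (Icc 0 t) :=
      Iff.mpr integrableOn_Icc_iff_integrableOn_Ioc (hf'Ioc t ht)
    have h2 : IntegrableOn (fun x => m x * f 0) (Icc 0 t) :=
      (hm_loc.integrableOn_compact_subset (fun x hx => hx.1) isCompact_Icc).mul_const _
    have h3 : IntegrableOn K (Icc 0 t) := by
      obtain ⟨B, hB0, hB⟩ := hKbdd t ht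
      refine Integrable.mono' (g := fun _ => B)
        (Iff.mpr (integrableOn_const_iff (C := B)) (Or.inr measure_Icc_lt_top))
        hKmeas.aestronglyMeasurable ?_
      rw [ae_restrict_iff' measurableSet_Icc]
      exact ae_of_all _ (fun x hx => by rw [Real.norm_eq_abs]; exact hB x hx)
    refine MeasureTheory.IntegrableOn.congr_fun ((h1.add h2).add h3) ?_ measurableSet_Icc
    intro x hx
    simp only [Pi.add_apply, hgdef]
    rw [if_pos hx.1]
  have hgI : ∀ t : ℝ, 0 ≤ t → IntegrableOn g (Ioc 0 t) := fun t ht =>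
    (hgIcc t ht).mono_set Ioc_subset_Icc_self
  have hgII : ∀ t : ℝ, 0 ≤ t → IntervalIntegrable g volume 0 t := fun t ht =>
    (intervalIntegrable_iff_integrableOn_Ioc_of_le ht).mpr (hgI t ht)
  -- helper: product of integrable and bounded a.e.-measurable is integrable
  have hprodII : ∀ t : ℝ, 0 ≤ t → ∀ φ q : ℝ → ℝ, IntegrableOn φ (Ioc 0 t) →
      AEStronglyMeasurable q (volume.restrict (Ioc 0 t)) → ∀ D : ℝ,
      (∀ x ∈ Ioc (0:ℝ) t, |q x| ≤ D) → IntegrableOn (fun x => φ x * q x) (Ioc 0 t) := by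
    intro t ht φ q hφ hq D hD
    refine Integrable.mono' (hφ.abs.mul_const D) (hφ.aestronglyMeasurable.mul hq) ?_
    rw [ae_restrict_iff' measurableSet_Ioc]
    refine ae_of_all _ (fun x hx => ?_)
    rw [Real.norm_eq_abs, abs_mul]
    exact mul_le_mul_of_nonneg_left (hD x hx) (abs_nonneg _)
  have hbddI : ∀ t : ℝ, 0 ≤ t → ∀ q : ℝ → ℝ,
      AEStronglyMeasurable q (volume.restrict (Ioc 0 t)) → ∀ D : ℝ,
      (∀ x ∈ Ioc (0:ℝ) t, |q x| ≤ D) → IntegrableOn q (Ioc 0 t) := by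
    intro t ht q hq D hD
    refine Integrable.mono' (g := fun _ => D)
      (Iff.mpr (integrableOn_const_iff (C := D)) (Or.inr measure_Ioc_lt_top)) hq ?_
    rw [ae_restrict_iff' measurableSet_Ioc]
    exact ae_of_all _ (fun x hx => by rw [Real.norm_eq_abs]; exact hD x hx)
  -- FTC: `∫₀ᵗ g = m t - m 0`
  have hFTC : ∀ t : ℝ, 0 ≤ t → (∫ x in (0:ℝ)..t, g x) = m t - m 0 := by
    intro t ht
    obtain ⟨C, hC0, hC⟩ := hf'B t ht
    obtain ⟨B, hB0, hB⟩ := hfB t ht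
    have e1 : (∫ x in (0:ℝ)..t, g x) = ∫ x in (0:ℝ)..t, (f' x + m x * f 0 + K x) := by
      apply intervalIntegral.integral_congr
      intro x hx
      rw [uIcc_of_le ht] at hx
      simp only [hgdef]
      rw [if_pos hx.1]
    have I1 : IntervalIntegrable f' volume 0 t := hf'_intloc 0 t
    have I2 : IntervalIntegrable (fun x => m x * f 0) volume 0 t :=
      (intervalIntegrable_iff_integrableOn_Ioc_of_le ht).mpr ((hmI t).mul_const _)
    have I3 : IntervalIntegrable K volume 0 t := by
      refine (intervalIntegrable_iff_integrableOn_Ioc_of_le ht).mpr ?_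
      obtain ⟨B', hB'0, hB'⟩ := hKbdd t ht
      exact hbddI t ht K hKmeas.aestronglyMeasurable B'
        (fun x hx => hB' x ⟨hx.1.le, hx.2⟩)
    rw [e1, intervalIntegral.integral_add (I1.add I2) I3, intervalIntegral.integral_add I1 I2]
    have e2 : (∫ x in (0:ℝ)..t, f' x) = f t - f 0 := by
      have := hf_ac t ht; linarith
    have e3 : (∫ x in (0:ℝ)..t, K x) = ∫ x in (0:ℝ)..t, m x * (f (t - x) - f 0) := by
      have h1 : (∫ x in (0:ℝ)..t, K x)
          = ∫ s in (0:ℝ)..t, (∫ x in (0:ℝ)..s, m x * f' (s - x)) := by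
        apply intervalIntegral.integral_congr
        intro s hs
        rw [uIcc_of_le ht] at hs
        exact hKeq s hs.1
      rw [h1, renewal_aux_conv_swap t ht m f' hm_meas hf'_meas (hmI t) C hC]
      apply intervalIntegral.integral_congr
      intro x hx
      rw [uIcc_of_le ht] at hx
      dsimp only
      rw [show (∫ y in (0:ℝ)..(t - x), f' y) = f (t - x) - f 0 from by
        rw [hf_ac (t - x) (by simp only [mem_Ici]; linarith [hx.2])]; ring]
    have II_mf : IntervalIntegrable (fun x => m x * f (t - x)) volume 0 t := by
      refine (intervalIntegrable_iff_integrableOn_Ioc_of_le ht).mpr ?_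
      refine hprodII t ht m (fun x => f (t - x)) (hmI t)
        ((hf_meas.comp (measurable_const.sub measurable_id)).aestronglyMeasurable) B ?_
      intro x hx
      exact hB _ ⟨by linarith [hx.2], by linarith [hx.1]⟩
    have e4 : (∫ x in (0:ℝ)..t, m x * (f (t - x) - f 0))
        = (∫ x in (0:ℝ)..t, m x * f (t - x)) - (∫ x in (0:ℝ)..t, m x) * f 0 := by
      rw [← intervalIntegral.integral_mul_const]
      rw [← intervalIntegral.integral_sub II_mf
        ((intervalIntegrable_iff_integrableOn_Ioc_of_le ht).mpr ((hmI t).mul_const _))]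
      apply intervalIntegral.integral_congr
      intro x _
      ring
    have e5 : (∫ x in (0:ℝ)..t, m x * f (t - x)) = m t - f t := by
      have := hm_eq t ht; linarith
    rw [e2, e3, e4, e5, intervalIntegral.integral_mul_const, hm0]
    ring
  -- key identity (★): the `f`-convolution of `g`
  have hstar : ∀ t : ℝ, 0 ≤ t → (∫ x in (0:ℝ)..t, g x * f (t - x))
      = m t * f 0 + (∫ x in (0:ℝ)..t, m x * f' (t - x)) - f 0 * f t := by
    intro t ht
    obtain ⟨C, hC0, hC⟩ := hf'B t ht
    set Q : ℝ → ℝ := fun x => ∫ y in (0:ℝ)..(t - x), f' y with hQdef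
    have hQcont : Continuous Q :=
      (intervalIntegral.continuous_primitive hf'_intloc 0).comp (continuous_const.sub continuous_id)
    have hQbd : ∀ x ∈ Ioc (0:ℝ) t, |Q x| ≤ C * t := by
      intro x hx
      have h0 : (0:ℝ) ≤ t - x := by linarith [hx.2]
      have hb : ‖∫ y in (0:ℝ)..(t - x), f' y‖ ≤ C * |t - x - 0| := by
        refine intervalIntegral.norm_integral_le_of_norm_le_const (fun y hy => ?_)
        rw [uIoc_of_le h0] at hy
        rw [Real.norm_eq_abs]
        exact hC y ⟨hy.1.le, by linarith [hy.2, hx.1]⟩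
      rw [Real.norm_eq_abs] at hb
      have h2 : |t - x - 0| ≤ t := by
        rw [sub_zero, abs_of_nonneg h0]; linarith [hx.1]
      calc |Q x| ≤ C * |t - x - 0| := hb
        _ ≤ C * t := mul_le_mul_of_nonneg_left h2 hC0
    have e1 : (∫ x in (0:ℝ)..t, g x * f (t - x))
        = ∫ x in (0:ℝ)..t, (g x * f 0 + g x * Q x) := by
      apply intervalIntegral.integral_congr
      intro x hx
      rw [uIcc_of_le ht] at hx
      dsimp only
      rw [hf_ac (t - x) (by simp only [mem_Ici]; linarith [hx.2]), mul_add]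
    have II_gQ : IntervalIntegrable (fun x => g x * Q x) volume 0 t :=
      (intervalIntegrable_iff_integrableOn_Ioc_of_le ht).mpr
        (hprodII t ht g Q (hgI t ht) hQcont.aestronglyMeasurable (C * t) hQbd)
    have II_gf0 : IntervalIntegrable (fun x => g x * f 0) volume 0 t := (hgII t ht).mul_const _
    rw [e1, intervalIntegral.integral_add II_gf0 II_gQ]
    have e2 : (∫ x in (0:ℝ)..t, g x * f 0) = (m t - m 0) * f 0 := by
      rw [intervalIntegral.integral_mul_const, hFTC t ht]
    have e3 : (∫ x in (0:ℝ)..t, g x * Q x)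
        = ∫ y in (0:ℝ)..t, f' y * (∫ x in (0:ℝ)..(t - y), g x) :=
      renewal_aux_sep_swap t ht g f' hgmeas hf'_meas (hgI t ht) (hf'Ioc t ht)
    have e4 : (∫ y in (0:ℝ)..t, f' y * (∫ x in (0:ℝ)..(t - y), g x))
        = ∫ y in (0:ℝ)..t, f' y * (m (t - y) - m 0) := by
      apply intervalIntegral.integral_congr
      intro y hy
      rw [uIcc_of_le ht] at hy
      dsimp only
      rw [hFTC (t - y) (by linarith [hy.2])]
    have e5 : (∫ y in (0:ℝ)..t, f' y * (m (t - y) - m 0))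
        = ∫ x in (0:ℝ)..t, f' (t - x) * (m x - m 0) := by
      have h := intervalIntegral.integral_comp_sub_left (a := (0:ℝ)) (b := t)
        (fun y => f' y * (m (t - y) - m 0)) t
      simp only [sub_zero, sub_self, sub_sub_cancel] at h
      exact h.symm
    have IIa : IntervalIntegrable (fun x => m x * f' (t - x)) volume 0 t := by
      refine (intervalIntegrable_iff_integrableOn_Ioc_of_le ht).mpr ?_
      refine hprodII t ht m (fun x => f' (t - x)) (hmI t)
        ((hf'_meas.comp (measurable_const.sub measurable_id)).aestronglyMeasurable) C ?_
      intro x hx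
      exact hC _ ⟨by linarith [hx.2], by linarith [hx.1]⟩
    have IIb : IntervalIntegrable (fun x => f' (t - x)) volume 0 t := by
      refine (intervalIntegrable_iff_integrableOn_Ioc_of_le ht).mpr ?_
      refine hbddI t ht (fun x => f' (t - x))
        ((hf'_meas.comp (measurable_const.sub measurable_id)).aestronglyMeasurable) C ?_
      intro x hx
      exact hC _ ⟨by linarith [hx.2], by linarith [hx.1]⟩
    have e6 : (∫ x in (0:ℝ)..t, f' (t - x) * (m x - m 0))
        = (∫ x in (0:ℝ)..t, m x * f' (t - x)) - m 0 * ∫ x in (0:ℝ)..t, f' (t - x) := by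
      rw [← intervalIntegral.integral_const_mul]
      rw [← intervalIntegral.integral_sub IIa (IIb.const_mul (m 0))]
      apply intervalIntegral.integral_congr
      intro x _
      ring
    have e7 : (∫ x in (0:ℝ)..t, f' (t - x)) = f t - f 0 := by
      have h := intervalIntegral.integral_comp_sub_left (a := (0:ℝ)) (b := t) f' t
      simp only [sub_zero, sub_self] at h
      rw [h]
      have := hf_ac t ht; linarith
    rw [e2, e3, e4, e5, e6, e7, hm0]
    ring
  -- measurability of `x ↦ P (t - x)` on `[0, t]`
  have hPaesm : ∀ t : ℝ, 0 ≤ t →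
      AEStronglyMeasurable (fun x => P (t - x)) (volume.restrict (Ioc 0 t)) := by
    intro t ht
    have h1 : ContinuousOn (fun s => ∫ y in Ioc (0:ℝ) s, f y) (Icc 0 t) :=
      intervalIntegral.continuousOn_primitive (hf_int.mono_set (fun x hx => hx.1))
    have h2 : ContinuousOn P (Icc 0 t) := by
      refine h1.congr ?_
      intro s hs
      exact intervalIntegral.integral_of_le hs.1
    have h3 : ContinuousOn (fun x => P (t - x)) (Icc 0 t) := by
      refine h2.comp ((continuous_const.sub continuous_id).continuousOn) ?_
      intro x hx
      exact ⟨show (0:ℝ) ≤ t - x by linarith [hx.2], show t - x ≤ t by linarith [hx.1]⟩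
    exact (h3.aestronglyMeasurable measurableSet_Icc).mono_measure
      (Measure.restrict_mono Ioc_subset_Icc_self le_rfl)
  have hPb : ∀ t : ℝ, 0 ≤ t → ∀ x ∈ Ioc (0:ℝ) t, |1 - P (t - x)| ≤ 1 := by
    intro t ht x hx
    have h0 : (0:ℝ) ≤ t - x := by linarith [hx.2]
    have h1 := hPnonneg (t - x) h0
    have h2 := hPle (t - x) h0
    rw [abs_le]; constructor <;> linarith
  -- the `F̄`-convolution of `g`
  have hI7 : ∀ t : ℝ, 0 ≤ t → (∫ x in (0:ℝ)..t, g x * (1 - P (t - x)))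
      = f t - f 0 * survival f t := by
    intro t ht
    obtain ⟨B, hB0, hB⟩ := hfB t ht
    have hqm : AEStronglyMeasurable (fun x => (1:ℝ) - P (t - x)) (volume.restrict (Ioc 0 t)) :=
      aestronglyMeasurable_const.sub (hPaesm t ht)
    have II_gP : IntervalIntegrable (fun x => g x * P (t - x)) volume 0 t := by
      refine (intervalIntegrable_iff_integrableOn_Ioc_of_le ht).mpr ?_
      refine hprodII t ht g (fun x => P (t - x)) (hgI t ht) (hPaesm t ht) 1 ?_
      intro x hx
      have h0 : (0:ℝ) ≤ t - x := by linarith [hx.2]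
      rw [abs_of_nonneg (hPnonneg _ h0)]
      exact hPle _ h0
    have e1 : (∫ x in (0:ℝ)..t, g x * (1 - P (t - x)))
        = (∫ x in (0:ℝ)..t, g x) - ∫ x in (0:ℝ)..t, g x * P (t - x) := by
      rw [← intervalIntegral.integral_sub (hgII t ht) II_gP]
      apply intervalIntegral.integral_congr
      intro x _
      ring
    have e2 : (∫ x in (0:ℝ)..t, g x * P (t - x))
        = ∫ y in (0:ℝ)..t, f y * (∫ x in (0:ℝ)..(t - y), g x) :=
      renewal_aux_sep_swap t ht g f hgmeas hf_meas (hgI t ht) (hfI t)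
    have e3 : (∫ y in (0:ℝ)..t, f y * (∫ x in (0:ℝ)..(t - y), g x))
        = ∫ y in (0:ℝ)..t, f y * (m (t - y) - m 0) := by
      apply intervalIntegral.integral_congr
      intro y hy
      rw [uIcc_of_le ht] at hy
      dsimp only
      rw [hFTC (t - y) (by linarith [hy.2])]
    have e4 : (∫ y in (0:ℝ)..t, f y * (m (t - y) - m 0))
        = ∫ x in (0:ℝ)..t, f (t - x) * (m x - m 0) := by
      have h := intervalIntegral.integral_comp_sub_left (a := (0:ℝ)) (b := t)
        (fun y => f y * (m (t - y) - m 0)) t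
      simp only [sub_zero, sub_self, sub_sub_cancel] at h
      exact h.symm
    have IIa : IntervalIntegrable (fun x => m x * f (t - x)) volume 0 t := by
      refine (intervalIntegrable_iff_integrableOn_Ioc_of_le ht).mpr ?_
      refine hprodII t ht m (fun x => f (t - x)) (hmI t)
        ((hf_meas.comp (measurable_const.sub measurable_id)).aestronglyMeasurable) B ?_
      intro x hx
      exact hB _ ⟨by linarith [hx.2], by linarith [hx.1]⟩
    have IIb : IntervalIntegrable (fun x => f (t - x)) volume 0 t := by
      refine (intervalIntegrable_iff_integrableOn_Ioc_of_le ht).mpr ?_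
      refine hbddI t ht (fun x => f (t - x))
        ((hf_meas.comp (measurable_const.sub measurable_id)).aestronglyMeasurable) B ?_
      intro x hx
      exact hB _ ⟨by linarith [hx.2], by linarith [hx.1]⟩
    have e5 : (∫ x in (0:ℝ)..t, f (t - x) * (m x - m 0))
        = (∫ x in (0:ℝ)..t, m x * f (t - x)) - m 0 * ∫ x in (0:ℝ)..t, f (t - x) := by
      rw [← intervalIntegral.integral_const_mul]
      rw [← intervalIntegral.integral_sub IIa (IIb.const_mul (m 0))]
      apply intervalIntegral.integral_congr
      intro x _
      ring
    have e6 : (∫ x in (0:ℝ)..t, f (t - x)) = P t := by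
      have h := intervalIntegral.integral_comp_sub_left (a := (0:ℝ)) (b := t) f t
      simp only [sub_zero, sub_self] at h
      exact h
    have e7 : (∫ x in (0:ℝ)..t, m x * f (t - x)) = m t - f t := by
      have := hm_eq t ht; linarith
    rw [e1, hFTC t ht, e2, e3, e4, e5, e6, e7, hm0, hsurv t ht]
    ring
  -- conclusion
  refine ⟨g, ?_, ?_, ?_⟩
  · -- interval integrability everywhere
    intro a b
    rw [intervalIntegrable_iff]
    have h1 : IntegrableOn g (Iio 0) := by
      have heq : EqOn (fun _ : ℝ => (0:ℝ)) g (Iio 0) := by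
        intro x hx
        simp only [hgdef]
        rw [if_neg (not_le.mpr (mem_Iio.mp hx))]
      exact (integrableOn_congr_fun heq measurableSet_Iio).mp integrableOn_zero
    have h2 : IntegrableOn g (Icc 0 (max 0 (max a b))) := hgIcc _ (le_max_left _ _)
    refine (h1.union h2).mono_set ?_
    intro x hx
    rw [Set.uIoc] at hx
    rcases lt_or_ge x 0 with h | h
    · exact Or.inl h
    · exact Or.inr ⟨h, le_trans hx.2 (le_max_right _ _)⟩
  · intro t ht
    have := hFTC t ht
    linarith
  · intro t ht
    have ht' : (0:ℝ) ≤ t := ht.le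
    obtain ⟨B, hB0, hB⟩ := hfB t ht'
    have hS := hsurvpos t ht'
    have hSne : survival f t ≠ 0 := ne_of_gt hS
    have e0 : (∫ x in (0:ℝ)..t, g x * (hazardRate f (t - x) - hazardRate f t) * survival f (t - x))
        = ∫ x in (0:ℝ)..t, (g x * f (t - x) - hazardRate f t * (g x * (1 - P (t - x)))) := by
      apply intervalIntegral.integral_congr
      intro x hx
      rw [uIcc_of_le ht'] at hx
      have h0 : (0:ℝ) ≤ t - x := by linarith [hx.2]
      have h1 : survival f (t - x) = 1 - P (t - x) := hsurv _ h0
      have h2 : hazardRate f (t - x) * (1 - P (t - x)) = f (t - x) := by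
        rw [← h1]
        simp only [hazardRate]
        exact div_mul_cancel₀ _ (ne_of_gt (hsurvpos _ h0))
      dsimp only
      rw [h1, ← h2]
      ring
    have II1 : IntervalIntegrable (fun x => g x * f (t - x)) volume 0 t := by
      refine (intervalIntegrable_iff_integrableOn_Ioc_of_le ht').mpr ?_
      refine hprodII t ht' g (fun x => f (t - x)) (hgI t ht')
        ((hf_meas.comp (measurable_const.sub measurable_id)).aestronglyMeasurable) B ?_
      intro x hx
      exact hB _ ⟨by linarith [hx.2], by linarith [hx.1]⟩
    have II2 : IntervalIntegrable (fun x => hazardRate f t * (g x * (1 - P (t - x)))) volume 0 t := by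
      refine IntervalIntegrable.const_mul ?_ _
      refine (intervalIntegrable_iff_integrableOn_Ioc_of_le ht').mpr ?_
      exact hprodII t ht' g (fun x => 1 - P (t - x)) (hgI t ht')
        (aestronglyMeasurable_const.sub (hPaesm t ht')) 1 (hPb t ht')
    have hgt : g t = f' t + m t * f 0 + ∫ u in (0:ℝ)..t, m u * f' (t - u) := by
      simp only [hgdef]
      rw [if_pos ht', hKeq t ht']
    rw [e0, intervalIntegral.integral_sub II1 II2, intervalIntegral.integral_const_mul,
      hstar t ht', hI7 t ht', hgt]
    simp only [hazardRate', hazardRate]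
    field_simp
    ring
end

section
/- Let f be a probability density function on [0,∞) that is positive, absolutely continuous, and such that f′ is bounded on every compact subinterval of [0,∞). Let m be the renewal density, i.e., the solution of m(t) = f(t) + ∫₀ᵗ m(x) f(t−x) dx for t ≥ 0. Then m is absolutely continuous and for all t > 0: m′(t) = f′(t) + m(t) f(0) + ∫₀ᵗ m(x) f′(t−x) dx. -/
open MeasureTheory Set

/-- **Equation (5) of the paper.**
Let `f` be a probability density on `[0, ∞)` that is positive, absolutely continuous (with
a.e. derivative `f'`, so that `f t = f 0 + ∫ x in 0..t, f' x`), and such that `f'` is bounded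
on every compact subinterval of `[0, ∞)`.  Let `m` be the renewal density, i.e. the solution
of `m t = f t + ∫ x in 0..t, m x * f (t - x)` for `t ≥ 0`.  Then `m` is absolutely continuous
and a version `m'` of its derivative satisfies, for all `t > 0`,
`m' t = f' t + m t * f 0 + ∫ x in 0..t, m x * f' (t - x)`. -/
theorem renewal_density_derivative_eq
    (f f' m : ℝ → ℝ)
    (hf_meas : Measurable f)
    (hf_pos : ∀ x ∈ Set.Ici (0 : ℝ), 0 < f x)
    (hf_int : IntegrableOn f (Set.Ici 0))
    (hf_one : (∫ x in Set.Ici (0 : ℝ), f x) = 1)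
    (hf'_meas : Measurable f')
    (hf'_intloc : ∀ a b : ℝ, IntervalIntegrable f' volume a b)
    (hf_ac : ∀ t ∈ Set.Ici (0 : ℝ), f t = f 0 + ∫ x in (0 : ℝ)..t, f' x)
    (hf'_bdd : ∀ a b : ℝ, ∃ C : ℝ, ∀ x ∈ Set.Icc a b, |f' x| ≤ C)
    (hm_meas : Measurable m)
    (hm_loc : LocallyIntegrableOn m (Set.Ici 0))
    (hm_eq : ∀ t ∈ Set.Ici (0 : ℝ), m t = f t + ∫ x in (0 : ℝ)..t, m x * f (t - x)) :
    ∃ m' : ℝ → ℝ,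
      (∀ a b : ℝ, IntervalIntegrable m' volume a b) ∧
      (∀ t ∈ Set.Ici (0 : ℝ), m t = m 0 + ∫ x in (0 : ℝ)..t, m' x) ∧
      ∀ t : ℝ, 0 < t →
        m' t = f' t + m t * f 0 + ∫ x in (0 : ℝ)..t, m x * f' (t - x) := by
  classical
  -- m 0 = f 0
  have hm0 : m 0 = f 0 := by simpa using hm_eq 0 (mem_Ici.2 le_rfl)
  -- m is integrable on every Ioc 0 b
  have hm_int : ∀ b : ℝ, IntegrableOn m (Ioc 0 b) := by
    intro b
    refine (hm_loc.integrableOn_compact_subset ?_ isCompact_Icc).mono_set Ioc_subset_Icc_self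
    exact fun x hx => hx.1
  -- nonnegative bound for |f'| on Icc 0 b
  have hK : ∀ b : ℝ, ∃ C : ℝ, 0 ≤ C ∧ ∀ x ∈ Icc (0:ℝ) b, |f' x| ≤ C := by
    intro b
    obtain ⟨C, hC⟩ := hf'_bdd 0 b
    exact ⟨max C 0, le_max_right _ _, fun x hx => (hC x hx).trans (le_max_left _ _)⟩
  -- the convolution kernel
  set F : ℝ → ℝ → ℝ := fun s y => (Ioc (0:ℝ) s).indicator (fun y => m y * f' (s - y)) y
    with hF_def
  have hF_meas : Measurable (Function.uncurry F) := by
    have hset : MeasurableSet {p : ℝ × ℝ | p.2 ∈ Ioc 0 p.1} := by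
      have : {p : ℝ × ℝ | p.2 ∈ Ioc 0 p.1} = {p : ℝ × ℝ | (0:ℝ) < p.2} ∩ {p | p.2 ≤ p.1} := by
        ext p; simp [Set.mem_Ioc, and_comm]
      rw [this]
      exact (measurableSet_lt measurable_const measurable_snd).inter
        (measurableSet_le measurable_snd measurable_fst)
    have heq : Function.uncurry F =
        Set.indicator {p : ℝ × ℝ | p.2 ∈ Ioc 0 p.1} (fun p => m p.2 * f' (p.1 - p.2)) := by
      funext p
      simp only [Function.uncurry, hF_def, Set.indicator_apply, Set.mem_setOf_eq]
    rw [heq]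
    exact Measurable.indicator
      ((hm_meas.comp measurable_snd).mul (hf'_meas.comp (measurable_fst.sub measurable_snd)))
      hset
  set G : ℝ → ℝ := fun s => ∫ y, F s y with hG_def
  have hG_meas : StronglyMeasurable G :=
    hF_meas.stronglyMeasurable.integral_prod_right
  -- per-s integrability of the kernel
  have hF_int : ∀ s : ℝ, Integrable (F s) volume := by
    intro s
    rw [hF_def]
    rw [integrable_indicator_iff measurableSet_Ioc]
    obtain ⟨C, hC0, hC⟩ := hK s
    refine Integrable.mono' ((hm_int s).norm.mul_const C) ?_ ?_
    · exact ((hm_meas.mul (hf'_meas.comp (measurable_const.sub measurable_id)))).aestronglyMeasurable.restrict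
    · filter_upwards [ae_restrict_mem measurableSet_Ioc] with y hy
      have h1 : s - y ∈ Icc (0:ℝ) s := ⟨by linarith [hy.2], by linarith [hy.1]⟩
      calc ‖m y * f' (s - y)‖ = |m y| * |f' (s - y)| := abs_mul _ _
        _ ≤ ‖m y‖ * C := mul_le_mul_of_nonneg_left (hC _ h1) (abs_nonneg _)
  -- G in interval-integral form
  have hG_eq : ∀ s : ℝ, 0 ≤ s → G s = ∫ y in (0:ℝ)..s, m y * f' (s - y) := by
    intro s hs
    rw [intervalIntegral.integral_of_le hs]
    simp only [hG_def, hF_def]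
    exact integral_indicator measurableSet_Ioc
  -- bound on the inner norm-integral of F over Ioc 0 t
  have hGnorm : ∀ t : ℝ, 0 ≤ t → ∀ C : ℝ, 0 ≤ C → (∀ x ∈ Icc (0:ℝ) t, |f' x| ≤ C) →
      ∀ s ∈ Ioc (0:ℝ) t, (∫ y, ‖F s y‖) ≤ C * ∫ y in Ioc (0:ℝ) t, ‖m y‖ := by
    intro t ht C hC0 hC s hs
    have h1 : (∫ y, ‖F s y‖) = ∫ y in Ioc (0:ℝ) s, ‖m y * f' (s - y)‖ := by
      rw [hF_def, ← integral_indicator measurableSet_Ioc]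
      congr 1
      funext y
      simp only [norm_indicator_eq_indicator_norm]
    rw [h1]
    have hint1 : IntegrableOn (fun y => ‖m y * f' (s - y)‖) (Ioc 0 s) := by
      have := (hF_int s).norm
      rw [hF_def] at this
      rwa [(by funext y; simp [norm_indicator_eq_indicator_norm] :
        (fun y => ‖(Ioc (0:ℝ) s).indicator (fun y => m y * f' (s - y)) y‖) =
        (Ioc (0:ℝ) s).indicator fun y => ‖m y * f' (s - y)‖),
        integrable_indicator_iff measurableSet_Ioc] at this
    have hint2 : IntegrableOn (fun y => ‖m y‖ * C) (Ioc 0 s) := (hm_int s).norm.mul_const C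
    have step1 : (∫ y in Ioc (0:ℝ) s, ‖m y * f' (s - y)‖) ≤ ∫ y in Ioc (0:ℝ) s, ‖m y‖ * C := by
      refine setIntegral_mono_on hint1 hint2 measurableSet_Ioc ?_
      intro y hy
      have h1 : s - y ∈ Icc (0:ℝ) t :=
        ⟨by linarith [hy.2], by linarith [hy.1, hs.2]⟩
      calc ‖m y * f' (s - y)‖ = |m y| * |f' (s - y)| := abs_mul _ _
        _ ≤ ‖m y‖ * C := mul_le_mul_of_nonneg_left (hC _ h1) (abs_nonneg _)
    have step2 : (∫ y in Ioc (0:ℝ) s, ‖m y‖ * C) ≤ ∫ y in Ioc (0:ℝ) t, ‖m y‖ * C := by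
      refine setIntegral_mono_set ((hm_int t).norm.mul_const C) ?_ ?_
      · filter_upwards with y using mul_nonneg (norm_nonneg _) hC0
      · exact HasSubset.Subset.eventuallyLE (Ioc_subset_Ioc_right hs.2)
    calc (∫ y in Ioc (0:ℝ) s, ‖m y * f' (s - y)‖) ≤ ∫ y in Ioc (0:ℝ) t, ‖m y‖ * C :=
          step1.trans step2
      _ = C * ∫ y in Ioc (0:ℝ) t, ‖m y‖ := by rw [integral_mul_const, mul_comm]
  -- G is integrable on every Ioc 0 b
  have hG_int : ∀ b : ℝ, IntegrableOn G (Ioc 0 b) := by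
    intro b
    rcases le_or_gt b 0 with hb | hb
    · rw [Ioc_eq_empty (by simpa using not_lt.2 hb)]
      exact integrableOn_empty
    obtain ⟨C, hC0, hC⟩ := hK b
    haveI : IsFiniteMeasure (volume.restrict (Ioc (0:ℝ) b)) :=
      ⟨by rw [Measure.restrict_apply_univ]; exact measure_Ioc_lt_top⟩
    refine Integrable.mono' (integrable_const (C * ∫ y in Ioc (0:ℝ) b, ‖m y‖))
      hG_meas.aestronglyMeasurable ?_
    filter_upwards [ae_restrict_mem measurableSet_Ioc] with s hs
    have h1 : ‖G s‖ ≤ ∫ y, ‖F s y‖ := norm_integral_le_integral_norm _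
    exact h1.trans (hGnorm b hb.le C hC0 hC s hs)
  -- the candidate derivative
  set D : ℝ → ℝ := fun s => if s ≤ 0 then 0 else f' s + m s * f 0 + G s with hD_def
  -- D is integrable on every Ioc 0 b
  have hD_Ioc : ∀ b : ℝ, IntegrableOn D (Ioc 0 b) := by
    intro b
    have hsum : IntegrableOn (fun s => f' s + m s * f 0 + G s) (Ioc 0 b) :=
      (((hf'_intloc 0 b).1).add ((hm_int b).mul_const (f 0))).add (hG_int b)
    refine hsum.congr_fun (fun s hs => ?_) measurableSet_Ioc
    simp [hD_def, not_le.2 hs.1]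
  have hD_on : ∀ a b : ℝ, IntegrableOn D (Ioc a b) := by
    intro a b
    have hind : Integrable ((Ioc (0:ℝ) (max b 0)).indicator D) :=
      (integrable_indicator_iff measurableSet_Ioc).2 (hD_Ioc (max b 0))
    refine (hind.integrableOn).congr_fun (fun x hx => ?_) measurableSet_Ioc
    by_cases hx0 : x ≤ 0
    · have : x ∉ Ioc (0:ℝ) (max b 0) := fun h => absurd h.1 (not_lt.2 hx0)
      simp [indicator_of_notMem this, hD_def, hx0]
    · have hx0' : (0:ℝ) < x := not_le.1 hx0
      have : x ∈ Ioc (0:ℝ) (max b 0) := ⟨hx0', le_trans hx.2 (le_max_left _ _)⟩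
      simp [indicator_of_mem this]
  refine ⟨D, fun a b => ⟨hD_on a b, hD_on b a⟩, ?_, ?_⟩
  · -- absolute continuity of m
    intro t ht
    rw [mem_Ici] at ht
    obtain ⟨C, hC0, hC⟩ := hK t
    haveI : IsFiniteMeasure (volume.restrict (Ioc (0:ℝ) t)) :=
      ⟨by rw [Measure.restrict_apply_univ]; exact measure_Ioc_lt_top⟩
    -- Fubini for the double integral
    have hprod : Integrable (Function.uncurry F) ((volume.restrict (Ioc (0:ℝ) t)).prod volume) := by
      rw [integrable_prod_iff hF_meas.aestronglyMeasurable]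
      constructor
      · exact Filter.Eventually.of_forall fun s => hF_int s
      · refine Integrable.mono' (integrable_const (C * ∫ y in Ioc (0:ℝ) t, ‖m y‖)) ?_ ?_
        · exact (hF_meas.norm.stronglyMeasurable.integral_prod_right
            (f := fun s y => ‖F s y‖)).aestronglyMeasurable
        · filter_upwards [ae_restrict_mem measurableSet_Ioc] with s hs
          have hnn : (0:ℝ) ≤ ∫ y, ‖F s y‖ := integral_nonneg fun y => norm_nonneg _
          show ‖∫ y, ‖F s y‖‖ ≤ C * ∫ y in Ioc (0:ℝ) t, ‖m y‖
          rw [Real.norm_eq_abs, abs_of_nonneg hnn]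
          exact hGnorm t ht C hC0 hC s hs
    have swap := integral_integral_swap hprod
    -- the inner integral after swapping
    have inner : ∀ y : ℝ, (∫ s in Ioc (0:ℝ) t, F s y) =
        (Ioc (0:ℝ) t).indicator (fun y => m y * (f (t - y) - f 0)) y := by
      intro y
      by_cases hy : y ∈ Ioc (0:ℝ) t
      · rw [indicator_of_mem hy]
        have hstep : ∀ s : ℝ, F s y = (Ici y).indicator (fun s => m y * f' (s - y)) s := by
          intro s
          simp only [hF_def, indicator_apply, mem_Ioc, mem_Ici]
          by_cases h : y ≤ s
          · simp [h, hy.1]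
          · simp [h]
        have hseteq : Ioc (0:ℝ) t ∩ Ici y = Icc y t := by
          ext s
          simp only [mem_inter_iff, mem_Ioc, mem_Ici, mem_Icc]
          constructor
          · rintro ⟨⟨_, hst⟩, hys⟩; exact ⟨hys, hst⟩
          · rintro ⟨hys, hst⟩; exact ⟨⟨lt_of_lt_of_le hy.1 hys, hst⟩, hys⟩
        calc (∫ s in Ioc (0:ℝ) t, F s y)
            = ∫ s in Ioc (0:ℝ) t, (Ici y).indicator (fun s => m y * f' (s - y)) s :=
              setIntegral_congr_fun measurableSet_Ioc fun s _ => hstep s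
          _ = ∫ s in Ioc (0:ℝ) t ∩ Ici y, m y * f' (s - y) :=
              setIntegral_indicator measurableSet_Ici
          _ = ∫ s in Ioc y t, m y * f' (s - y) := by
              rw [hseteq, integral_Icc_eq_integral_Ioc]
          _ = ∫ s in y..t, m y * f' (s - y) := (intervalIntegral.integral_of_le hy.2).symm
          _ = m y * ∫ s in y..t, f' (s - y) := intervalIntegral.integral_const_mul _ _
          _ = m y * ∫ u in (0:ℝ)..(t - y), f' u := by
              rw [intervalIntegral.integral_comp_sub_right (fun u => f' u) y, sub_self]
          _ = m y * (f (t - y) - f 0) := by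
              have h := hf_ac (t - y) (mem_Ici.2 (by linarith [hy.2]))
              rw [show (∫ u in (0:ℝ)..(t - y), f' u) = f (t - y) - f 0 by linarith]
      · rw [indicator_of_notMem hy]
        refine setIntegral_eq_zero_of_forall_eq_zero fun s hs => ?_
        exact indicator_of_notMem (fun hy' => hy ⟨hy'.1, le_trans hy'.2 hs.2⟩) _
    have hC3 : (∫ s in Ioc (0:ℝ) t, G s) = ∫ y in Ioc (0:ℝ) t, m y * (f (t - y) - f 0) := by
      calc (∫ s in Ioc (0:ℝ) t, G s) = ∫ y, ∫ s in Ioc (0:ℝ) t, F s y := swap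
        _ = ∫ y, (Ioc (0:ℝ) t).indicator (fun y => m y * (f (t - y) - f 0)) y :=
            integral_congr_ae (Filter.Eventually.of_forall inner)
        _ = ∫ y in Ioc (0:ℝ) t, m y * (f (t - y) - f 0) :=
            integral_indicator measurableSet_Ioc
    -- integrability of y ↦ m y * f (t - y)
    have hfb : ∀ u ∈ Icc (0:ℝ) t, |f u| ≤ |f 0| + C * t := by
      intro u hu
      have h := hf_ac u (mem_Ici.2 hu.1)
      have hbnd : ‖∫ x in (0:ℝ)..u, f' x‖ ≤ C * |u - 0| := by
        refine intervalIntegral.norm_integral_le_of_norm_le_const fun x hx => ?_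
        rw [uIoc_of_le hu.1] at hx
        exact hC x ⟨hx.1.le, le_trans hx.2 hu.2⟩
      rw [Real.norm_eq_abs] at hbnd
      have : |u - 0| = u := by rw [sub_zero, abs_of_nonneg hu.1]
      rw [this] at hbnd
      have hCu : C * u ≤ C * t := mul_le_mul_of_nonneg_left hu.2 hC0
      calc |f u| = |f 0 + ∫ x in (0:ℝ)..u, f' x| := by rw [← h]
        _ ≤ |f 0| + |∫ x in (0:ℝ)..u, f' x| := abs_add_le _ _
        _ ≤ |f 0| + C * t := by linarith
    have h4 : IntegrableOn (fun y => m y * f (t - y)) (Ioc 0 t) := by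
      refine Integrable.mono' ((hm_int t).norm.mul_const (|f 0| + C * t))
        ((hm_meas.mul (hf_meas.comp (measurable_const.sub measurable_id))).aestronglyMeasurable)
        ?_
      filter_upwards [ae_restrict_mem measurableSet_Ioc] with y hy
      have hty : t - y ∈ Icc (0:ℝ) t := ⟨by linarith [hy.2], by linarith [hy.1]⟩
      calc ‖m y * f (t - y)‖ = |m y| * |f (t - y)| := abs_mul _ _
        _ ≤ ‖m y‖ * (|f 0| + C * t) := mul_le_mul_of_nonneg_left (hfb _ hty) (abs_nonneg _)
    have hsplit : (∫ y in Ioc (0:ℝ) t, m y * (f (t - y) - f 0)) =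
        (∫ y in Ioc (0:ℝ) t, m y * f (t - y)) - (∫ y in Ioc (0:ℝ) t, m y) * f 0 := by
      have hform : ∀ y : ℝ, m y * (f (t - y) - f 0) = m y * f (t - y) - m y * f 0 :=
        fun y => by ring
      simp_rw [hform]
      rw [integral_sub h4 ((hm_int t).mul_const (f 0)), integral_mul_const]
    -- now assemble
    have hDeq : (∫ s in Ioc (0:ℝ) t, D s) = ∫ s in Ioc (0:ℝ) t, (f' s + m s * f 0 + G s) :=
      setIntegral_congr_fun measurableSet_Ioc fun s hs => by simp [hD_def, not_le.2 hs.1]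
    have hadd : (∫ s in Ioc (0:ℝ) t, (f' s + m s * f 0 + G s)) =
        (∫ s in Ioc (0:ℝ) t, f' s) + (∫ s in Ioc (0:ℝ) t, m s * f 0) +
          (∫ s in Ioc (0:ℝ) t, G s) := by
      have e1 := integral_add (μ := volume.restrict (Ioc (0:ℝ) t))
        (((hf'_intloc 0 t).1).add ((hm_int t).mul_const (f 0))) (hG_int t)
      have e2 := integral_add (μ := volume.restrict (Ioc (0:ℝ) t))
        ((hf'_intloc 0 t).1) ((hm_int t).mul_const (f 0))
      simp only [Pi.add_apply] at e1 e2
      rw [e2] at e1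
      exact e1
    have hA : (∫ s in Ioc (0:ℝ) t, f' s) = f t - f 0 := by
      have h := hf_ac t (mem_Ici.2 ht)
      rw [← intervalIntegral.integral_of_le ht]
      linarith
    have hB : (∫ s in Ioc (0:ℝ) t, m s * f 0) = (∫ s in Ioc (0:ℝ) t, m s) * f 0 :=
      integral_mul_const _ _
    have hmt : m t = f t + ∫ y in Ioc (0:ℝ) t, m y * f (t - y) := by
      have h := hm_eq t (mem_Ici.2 ht)
      rwa [intervalIntegral.integral_of_le ht] at h
    rw [intervalIntegral.integral_of_le ht, hDeq, hadd, hA, hB, hC3, hsplit, hm0]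
    linarith
  · -- the formula for the derivative
    intro t ht
    have h1 : ¬ t ≤ 0 := not_le.2 ht
    simp only [hD_def, if_neg h1]
    rw [hG_eq t ht.le]
end

section
/- Let f be a probability density function on [0,∞) that is positive, absolutely continuous, and such that f′ is bounded on every compact subinterval of [0,∞). Let m be the renewal density, i.e., the solution of m(t) = f(t) + ∫₀ᵗ m(x) f(t−x) dx for t ≥ 0. Then m is absolutely continuous and for all t > 0: m′(t) = f′(t) + m(0) f(t) + ∫₀ᵗ m′(x) f(t−x) dx. -/
open MeasureTheory Set

namespace RenewalAux

def tri : Set (ℝ × ℝ) := {q : ℝ × ℝ | q.2 ≤ q.1}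

def anti (t : ℝ) : Set (ℝ × ℝ) := {q : ℝ × ℝ | q.1 + q.2 ≤ t}

lemma measurableSet_tri : MeasurableSet tri :=
  measurableSet_le measurable_snd measurable_fst

lemma measurableSet_anti (t : ℝ) : MeasurableSet (anti t) :=
  measurableSet_le (measurable_fst.add measurable_snd) measurable_const

lemma sect_tri (t x : ℝ) (hx : x ∈ Ioc (0:ℝ) t) (F : ℝ × ℝ → ℝ) :
    (∫ y in Ioc (0:ℝ) t, tri.indicator F (x, y)) = ∫ y in Ioc (0:ℝ) x, F (x, y) := by
  have h1 : (fun y => tri.indicator F (x, y)) = (Iic x).indicator (fun y => F (x, y)) := by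
    funext y
    by_cases h : y ≤ x
    · rw [Set.indicator_of_mem (show ((x, y) : ℝ × ℝ) ∈ tri from h),
        Set.indicator_of_mem (show y ∈ Iic x from h)]
    · rw [Set.indicator_of_notMem (show ((x, y) : ℝ × ℝ) ∉ tri from h),
        Set.indicator_of_notMem (show y ∉ Iic x from h)]
  rw [h1, setIntegral_indicator measurableSet_Iic, Ioc_inter_Iic, inf_eq_right.2 hx.2]

lemma sect_tri' (t y : ℝ) (hy : y ∈ Ioc (0:ℝ) t) (F : ℝ × ℝ → ℝ) :
    (∫ x in Ioc (0:ℝ) t, tri.indicator F (x, y)) = ∫ x in Ioc y t, F (x, y) := by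
  have h1 : (fun x => tri.indicator F (x, y)) = (Ici y).indicator (fun x => F (x, y)) := by
    funext x
    by_cases h : y ≤ x
    · rw [Set.indicator_of_mem (show ((x, y) : ℝ × ℝ) ∈ tri from h),
        Set.indicator_of_mem (show x ∈ Ici y from h)]
    · rw [Set.indicator_of_notMem (show ((x, y) : ℝ × ℝ) ∉ tri from h),
        Set.indicator_of_notMem (show x ∉ Ici y from h)]
  have h2 : Ioc (0:ℝ) t ∩ Ici y = Icc y t := by
    ext x
    simp only [mem_inter_iff, mem_Ioc, mem_Ici, mem_Icc]
    constructor
    · rintro ⟨⟨_, hxt⟩, hyx⟩; exact ⟨hyx, hxt⟩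
    · rintro ⟨hyx, hxt⟩; exact ⟨⟨lt_of_lt_of_le hy.1 hyx, hxt⟩, hyx⟩
  rw [h1, setIntegral_indicator measurableSet_Ici, h2, integral_Icc_eq_integral_Ioc]

lemma sect_anti (t x : ℝ) (hx : x ∈ Ioc (0:ℝ) t) (F : ℝ × ℝ → ℝ) :
    (∫ y in Ioc (0:ℝ) t, (anti t).indicator F (x, y)) = ∫ y in Ioc (0:ℝ) (t - x), F (x, y) := by
  have h1 : (fun y => (anti t).indicator F (x, y))
      = (Iic (t - x)).indicator (fun y => F (x, y)) := by
    funext y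
    by_cases h : y ≤ t - x
    · rw [Set.indicator_of_mem (show ((x, y) : ℝ × ℝ) ∈ anti t by
        simp only [anti, mem_setOf_eq]; linarith),
        Set.indicator_of_mem (show y ∈ Iic (t - x) from h)]
    · rw [Set.indicator_of_notMem (show ((x, y) : ℝ × ℝ) ∉ anti t by
        simp only [anti, mem_setOf_eq]; intro hc; exact h (by linarith)),
        Set.indicator_of_notMem (show y ∉ Iic (t - x) from h)]
  rw [h1, setIntegral_indicator measurableSet_Iic, Ioc_inter_Iic,
    inf_eq_right.2 (show t - x ≤ t by linarith [hx.1])]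

lemma sect_anti' (t y : ℝ) (hy : y ∈ Ioc (0:ℝ) t) (F : ℝ × ℝ → ℝ) :
    (∫ x in Ioc (0:ℝ) t, (anti t).indicator F (x, y)) = ∫ x in Ioc (0:ℝ) (t - y), F (x, y) := by
  have h1 : (fun x => (anti t).indicator F (x, y))
      = (Iic (t - y)).indicator (fun x => F (x, y)) := by
    funext x
    by_cases h : x ≤ t - y
    · rw [Set.indicator_of_mem (show ((x, y) : ℝ × ℝ) ∈ anti t by
        simp only [anti, mem_setOf_eq]; linarith),
        Set.indicator_of_mem (show x ∈ Iic (t - y) from h)]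
    · rw [Set.indicator_of_notMem (show ((x, y) : ℝ × ℝ) ∉ anti t by
        simp only [anti, mem_setOf_eq]; intro hc; exact h (by linarith)),
        Set.indicator_of_notMem (show x ∉ Iic (t - y) from h)]
  rw [h1, setIntegral_indicator measurableSet_Iic, Ioc_inter_Iic,
    inf_eq_right.2 (show t - y ≤ t by linarith [hy.1])]

lemma swap_tri {t : ℝ} {F : ℝ × ℝ → ℝ}
    (hF : Integrable (tri.indicator F)
      ((volume.restrict (Ioc (0:ℝ) t)).prod (volume.restrict (Ioc (0:ℝ) t)))) :
    (∫ x in Ioc (0:ℝ) t, ∫ y in Ioc (0:ℝ) x, F (x, y)) =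
      ∫ y in Ioc (0:ℝ) t, ∫ x in Ioc y t, F (x, y) := by
  have hswap := MeasureTheory.integral_integral_swap
      (f := fun x y => tri.indicator F (x, y))
      (μ := volume.restrict (Ioc (0:ℝ) t)) (ν := volume.restrict (Ioc (0:ℝ) t)) hF
  have h1 : (∫ x in Ioc (0:ℝ) t, ∫ y in Ioc (0:ℝ) x, F (x, y)) =
      ∫ x in Ioc (0:ℝ) t, ∫ y in Ioc (0:ℝ) t, tri.indicator F (x, y) :=
    setIntegral_congr_fun measurableSet_Ioc (fun x hx => (sect_tri t x hx F).symm)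
  have h2 : (∫ y in Ioc (0:ℝ) t, ∫ x in Ioc (0:ℝ) t, tri.indicator F (x, y)) =
      ∫ y in Ioc (0:ℝ) t, ∫ x in Ioc y t, F (x, y) :=
    setIntegral_congr_fun measurableSet_Ioc (fun y hy => sect_tri' t y hy F)
  rw [h1, hswap, h2]

lemma swap_anti {t : ℝ} {F : ℝ × ℝ → ℝ}
    (hF : Integrable ((anti t).indicator F)
      ((volume.restrict (Ioc (0:ℝ) t)).prod (volume.restrict (Ioc (0:ℝ) t)))) :
    (∫ x in Ioc (0:ℝ) t, ∫ y in Ioc (0:ℝ) (t - x), F (x, y)) =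
      ∫ y in Ioc (0:ℝ) t, ∫ x in Ioc (0:ℝ) (t - y), F (x, y) := by
  have hswap := MeasureTheory.integral_integral_swap
      (f := fun x y => (anti t).indicator F (x, y))
      (μ := volume.restrict (Ioc (0:ℝ) t)) (ν := volume.restrict (Ioc (0:ℝ) t)) hF
  have h1 : (∫ x in Ioc (0:ℝ) t, ∫ y in Ioc (0:ℝ) (t - x), F (x, y)) =
      ∫ x in Ioc (0:ℝ) t, ∫ y in Ioc (0:ℝ) t, (anti t).indicator F (x, y) :=
    setIntegral_congr_fun measurableSet_Ioc (fun x hx => (sect_anti t x hx F).symm)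
  have h2 : (∫ y in Ioc (0:ℝ) t, ∫ x in Ioc (0:ℝ) t, (anti t).indicator F (x, y)) =
      ∫ y in Ioc (0:ℝ) t, ∫ x in Ioc (0:ℝ) (t - y), F (x, y) :=
    setIntegral_congr_fun measurableSet_Ioc (fun y hy => sect_anti' t y hy F)
  rw [h1, hswap, h2]

lemma integrable_anti_kernel {t : ℝ} {a b : ℝ → ℝ}
    (hai : IntegrableOn a (Ioc (0:ℝ) t)) (hbi : IntegrableOn b (Ioc (0:ℝ) t)) :
    Integrable ((anti t).indicator (fun q : ℝ × ℝ => a q.1 * b q.2))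
      ((volume.restrict (Ioc (0:ℝ) t)).prod (volume.restrict (Ioc (0:ℝ) t))) :=
  (hai.mul_prod hbi).indicator (measurableSet_anti t)

lemma integrable_tri_kernel {t : ℝ} (ht : 0 ≤ t) (a b c : ℝ → ℝ)
    (ha : Measurable a) (hb : Measurable b) (hc : Measurable c)
    {C : ℝ} (haC : ∀ y ∈ Icc (0:ℝ) t, |a y| ≤ C)
    (hbi : IntegrableOn b (Icc (0:ℝ) t)) (hci : IntegrableOn c (Icc (0:ℝ) t)) :
    Integrable (tri.indicator (fun q : ℝ × ℝ => a q.2 * b (q.1 - q.2) * c q.1))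
      ((volume.restrict (Ioc (0:ℝ) t)).prod (volume.restrict (Ioc (0:ℝ) t))) := by
  have hC0 : 0 ≤ C := le_trans (abs_nonneg _) (haC 0 ⟨le_refl _, ht⟩)
  set G : ℝ × ℝ → ℝ := tri.indicator (fun q : ℝ × ℝ => a q.2 * b (q.1 - q.2) * c q.1) with hGdef
  set b1 : ℝ → ℝ := (Icc (0:ℝ) t).indicator b with hb1def
  have hb1 : Integrable b1 volume := (integrable_indicator_iff measurableSet_Icc).2 hbi
  have hGm : Measurable G :=
    (((ha.comp measurable_snd).mul (hb.comp (measurable_fst.sub measurable_snd))).mul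
      (hc.comp measurable_fst)).indicator measurableSet_tri
  have key : ∀ x ∈ Ioc (0:ℝ) t, ∀ y ∈ Ioc (0:ℝ) t,
      ‖G (x, y)‖ ≤ C * |c x| * |b1 (x - y)| := by
    intro x hx y hy
    rw [Real.norm_eq_abs]
    by_cases h : ((x, y) : ℝ × ℝ) ∈ tri
    · rw [hGdef, Set.indicator_of_mem h]
      have hy' : y ≤ x := h
      have hxy : x - y ∈ Icc (0:ℝ) t := ⟨by linarith, by linarith [hx.2, hy.1]⟩
      have hbb : b1 (x - y) = b (x - y) := Set.indicator_of_mem hxy b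
      rw [hbb, abs_mul, abs_mul]
      have h1 : |a y| ≤ C := haC y ⟨hy.1.le, hy.2⟩
      have h2 : |a y| * |b (x - y)| * |c x| ≤ C * |b (x - y)| * |c x| :=
        mul_le_mul_of_nonneg_right (mul_le_mul_of_nonneg_right h1 (abs_nonneg _)) (abs_nonneg _)
      calc |a y| * |b (x - y)| * |c x| ≤ C * |b (x - y)| * |c x| := h2
        _ = C * |c x| * |b (x - y)| := by ring
    · rw [hGdef, Set.indicator_of_notMem h, abs_zero]
      positivity
  have hdom : ∀ x : ℝ, Integrable (fun y => C * |c x| * |b1 (x - y)|)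
      (volume.restrict (Ioc (0:ℝ) t)) := by
    intro x
    exact ((hb1.abs.comp_sub_left x).const_mul (C * |c x|)).integrableOn
  refine (integrable_prod_iff hGm.aestronglyMeasurable).2 ⟨?_, ?_⟩
  · rw [ae_restrict_iff' measurableSet_Ioc]
    refine Filter.Eventually.of_forall (fun x hx => ?_)
    refine (hdom x).mono' ?_ ?_
    · exact (hGm.comp (measurable_const.prodMk measurable_id)).aestronglyMeasurable
    · rw [ae_restrict_iff' measurableSet_Ioc]
      exact Filter.Eventually.of_forall (fun y hy => key x hx y hy)
  · have hsm : AEStronglyMeasurable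
        (fun x => ∫ y, ‖G (x, y)‖ ∂(volume.restrict (Ioc (0:ℝ) t)))
        (volume.restrict (Ioc (0:ℝ) t)) :=
      (hGm.norm.stronglyMeasurable.integral_prod_right').aestronglyMeasurable
    refine Integrable.mono' (g := fun x => (C * ∫ u, |b1 u|) * |c x|) ?_ hsm ?_
    · exact (((hci.mono_set Ioc_subset_Icc_self).abs).const_mul _)
    · rw [ae_restrict_iff' measurableSet_Ioc]
      refine Filter.Eventually.of_forall (fun x hx => ?_)
      have hnn : 0 ≤ ∫ y in Ioc (0:ℝ) t, ‖G (x, y)‖ :=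
        integral_nonneg (fun y => norm_nonneg _)
      rw [Real.norm_eq_abs, abs_of_nonneg hnn]
      have step1 : (∫ y in Ioc (0:ℝ) t, ‖G (x, y)‖)
          ≤ ∫ y in Ioc (0:ℝ) t, C * |c x| * |b1 (x - y)| := by
        refine integral_mono_of_nonneg (Filter.Eventually.of_forall fun y => norm_nonneg _)
          (hdom x) ?_
        exact (ae_restrict_iff' measurableSet_Ioc).2
          (Filter.Eventually.of_forall (fun y hy => key x hx y hy))
      have step2 : (∫ y in Ioc (0:ℝ) t, C * |c x| * |b1 (x - y)|)
          = C * |c x| * ∫ y in Ioc (0:ℝ) t, |b1 (x - y)| := integral_const_mul _ _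
      have step3 : (∫ y in Ioc (0:ℝ) t, |b1 (x - y)|) ≤ ∫ y, |b1 (x - y)| :=
        setIntegral_le_integral (hb1.abs.comp_sub_left x)
          (Filter.Eventually.of_forall fun y => abs_nonneg _)
      have step4 : (∫ y, |b1 (x - y)|) = ∫ u, |b1 u| :=
        integral_sub_left_eq_self (fun u => |b1 u|) volume x
      calc (∫ y in Ioc (0:ℝ) t, ‖G (x, y)‖)
          ≤ C * |c x| * ∫ y in Ioc (0:ℝ) t, |b1 (x - y)| := by rw [← step2]; exact step1
        _ ≤ C * |c x| * ∫ u, |b1 u| := by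
            refine mul_le_mul_of_nonneg_left ?_ (by positivity)
            rw [← step4]; exact step3
        _ = (C * ∫ u, |b1 u|) * |c x| := by ring

end RenewalAux

/-- **Equation (6) of the paper.**
Let `f` be a probability density on `[0, ∞)` that is positive, absolutely continuous (with
a.e. derivative `f'`, so that `f t = f 0 + ∫ x in 0..t, f' x`), and such that `f'` is bounded
on every compact subinterval of `[0, ∞)`.  Let `m` be the renewal density, i.e. the solution
of `m t = f t + ∫ x in 0..t, m x * f (t - x)` for `t ≥ 0`.  Then `m` is absolutely continuous
and a version `m'` of its derivative satisfies, for all `t > 0`,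
`m' t = f' t + m 0 * f t + ∫ x in 0..t, m' x * f (t - x)`. -/
theorem renewal_density_derivative_eq'
    (f f' m : ℝ → ℝ)
    (hf_meas : Measurable f)
    (hf_pos : ∀ x ∈ Set.Ici (0 : ℝ), 0 < f x)
    (hf_int : IntegrableOn f (Set.Ici 0))
    (hf_one : (∫ x in Set.Ici (0 : ℝ), f x) = 1)
    (hf'_meas : Measurable f')
    (hf'_intloc : ∀ a b : ℝ, IntervalIntegrable f' volume a b)
    (hf_ac : ∀ t ∈ Set.Ici (0 : ℝ), f t = f 0 + ∫ x in (0 : ℝ)..t, f' x)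
    (hf'_bdd : ∀ a b : ℝ, ∃ C : ℝ, ∀ x ∈ Set.Icc a b, |f' x| ≤ C)
    (hm_meas : Measurable m)
    (hm_loc : LocallyIntegrableOn m (Set.Ici 0))
    (hm_eq : ∀ t ∈ Set.Ici (0 : ℝ), m t = f t + ∫ x in (0 : ℝ)..t, m x * f (t - x)) :
    ∃ m' : ℝ → ℝ,
      (∀ a b : ℝ, IntervalIntegrable m' volume a b) ∧
      (∀ t ∈ Set.Ici (0 : ℝ), m t = m 0 + ∫ x in (0 : ℝ)..t, m' x) ∧
      ∀ t : ℝ, 0 < t →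
        m' t = f' t + m 0 * f t + ∫ x in (0 : ℝ)..t, m' x * f (t - x) := by
  classical
  have hm0 : m 0 = f 0 := by
    have h := hm_eq 0 Set.self_mem_Ici
    simpa using h
  have hmIcc : ∀ t : ℝ, IntegrableOn m (Icc (0:ℝ) t) :=
    fun t => hm_loc.integrableOn_compact_subset (fun x hx => hx.1) isCompact_Icc
  have hfIcc : ∀ t : ℝ, IntegrableOn f (Icc (0:ℝ) t) :=
    fun t => hf_int.mono_set (fun x hx => hx.1)
  have hf'Icc : ∀ t : ℝ, IntegrableOn f' (Icc (0:ℝ) t) := by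
    intro t
    rcases le_or_gt 0 t with h | h
    · exact (intervalIntegrable_iff_integrableOn_Icc_of_le h).1 (hf'_intloc 0 t)
    · rw [Icc_eq_empty (by intro hc; linarith)]
      exact integrableOn_empty
  -- `f` is bounded on `[0, t]`
  have hfB : ∀ t : ℝ, 0 < t → ∃ B : ℝ, 0 ≤ B ∧ ∀ x ∈ Icc (0:ℝ) t, |f x| ≤ B := by
    intro t ht
    obtain ⟨C, hC⟩ := hf'_bdd 0 t
    have hC0 : 0 ≤ C := le_trans (abs_nonneg _) (hC 0 ⟨le_refl _, ht.le⟩)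
    refine ⟨|f 0| + C * t, by positivity, ?_⟩
    intro x hx
    have hfx := hf_ac x hx.1
    have hbd : ‖∫ y in (0:ℝ)..x, f' y‖ ≤ C * |x - 0| := by
      apply intervalIntegral.norm_integral_le_of_norm_le_const
      intro y hy
      rw [uIoc_of_le hx.1] at hy
      rw [Real.norm_eq_abs]
      exact hC y ⟨hy.1.le, le_trans hy.2 hx.2⟩
    rw [Real.norm_eq_abs] at hbd
    have h1 : |x - 0| ≤ t := by rw [sub_zero, abs_of_nonneg hx.1]; exact hx.2
    have habs : |f x| ≤ |f 0| + |∫ y in (0:ℝ)..x, f' y| := by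
      rw [hfx]; exact abs_add_le _ _
    nlinarith [mul_le_mul_of_nonneg_left h1 hC0]
  -- integrability of the renewal convolution integrand
  have imf : ∀ t : ℝ, 0 < t → IntegrableOn (fun x => m x * f (t - x)) (Ioc (0:ℝ) t) := by
    intro t ht
    obtain ⟨B, hB0, hB⟩ := hfB t ht
    refine Integrable.mono' (g := fun x => B * |m x|)
      ((((hmIcc t).mono_set Ioc_subset_Icc_self).abs).const_mul B) ?_ ?_
    · exact (hm_meas.mul (hf_meas.comp (measurable_const.sub measurable_id))).aestronglyMeasurable
    · rw [ae_restrict_iff' measurableSet_Ioc]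
      refine Filter.Eventually.of_forall (fun x hx => ?_)
      have hmem : t - x ∈ Icc (0:ℝ) t := ⟨by linarith [hx.2], by linarith [hx.1]⟩
      rw [Real.norm_eq_abs, abs_mul]
      calc |m x| * |f (t - x)| ≤ |m x| * B :=
            mul_le_mul_of_nonneg_left (hB _ hmem) (abs_nonneg _)
        _ = B * |m x| := mul_comm _ _
  -- reflection integrability
  have hrefl : ∀ (t : ℝ) (b : ℝ → ℝ), IntegrableOn b (Icc (0:ℝ) t) →
      IntegrableOn (fun y => b (t - y)) (Icc (0:ℝ) t) := by
    intro t b hbi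
    have h1 : Integrable ((Icc (0:ℝ) t).indicator b) volume :=
      (integrable_indicator_iff measurableSet_Icc).2 hbi
    have h2 := (h1.comp_sub_left t).integrableOn (s := Icc (0:ℝ) t)
    apply h2.congr
    refine (ae_restrict_iff' measurableSet_Icc).2 (Filter.Eventually.of_forall fun y hy => ?_)
    have hmem : t - y ∈ Icc (0:ℝ) t := ⟨by linarith [hy.2], by linarith [hy.1]⟩
    show ((Icc (0:ℝ) t).indicator b) (t - y) = b (t - y)
    exact Set.indicator_of_mem hmem b
  have hmr : ∀ t : ℝ, IntegrableOn (fun y => m (t - y)) (Ioc (0:ℝ) t) :=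
    fun t => (hrefl t m (hmIcc t)).mono_set Ioc_subset_Icc_self
  have hfr : ∀ t : ℝ, IntegrableOn (fun y => f (t - y)) (Ioc (0:ℝ) t) :=
    fun t => (hrefl t f (hfIcc t)).mono_set Ioc_subset_Icc_self
  -- the triangle kernel for f' and m
  have hK1 : ∀ t : ℝ, 0 < t → Integrable
      (RenewalAux.tri.indicator fun q : ℝ × ℝ => f' q.2 * m (q.1 - q.2))
      ((volume.restrict (Ioc (0:ℝ) t)).prod (volume.restrict (Ioc (0:ℝ) t))) := by
    intro t ht
    obtain ⟨C, hC⟩ := hf'_bdd 0 t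
    have h := RenewalAux.integrable_tri_kernel ht.le f' m (fun _ => (1:ℝ)) hf'_meas hm_meas
      measurable_const (fun y hy => hC y hy) (hmIcc t)
      (integrableOn_const measure_Icc_lt_top.ne)
    have heq : (fun q : ℝ × ℝ => f' q.2 * m (q.1 - q.2) * (fun _ : ℝ => (1:ℝ)) q.1)
        = fun q : ℝ × ℝ => f' q.2 * m (q.1 - q.2) := funext fun q => mul_one _
    rwa [heq] at h
  -- the candidate derivative
  set conv : ℝ → ℝ := fun x => ∫ y in (0:ℝ)..x, f' y * m (x - y) with hconv
  set g : ℝ → ℝ := fun x => if 0 ≤ x then f' x + f 0 * m x + conv x else 0 with hgdef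
  have hconv_int : ∀ t : ℝ, 0 < t → IntegrableOn conv (Ioc (0:ℝ) t) := by
    intro t ht
    have H := (hK1 t ht).integral_prod_left
    apply H.congr
    refine (ae_restrict_iff' measurableSet_Ioc).2 (Filter.Eventually.of_forall fun x hx => ?_)
    show (∫ y in Ioc (0:ℝ) t,
        (RenewalAux.tri.indicator fun q : ℝ × ℝ => f' q.2 * m (q.1 - q.2)) (x, y)) = conv x
    rw [RenewalAux.sect_tri t x hx _]
    exact (intervalIntegral.integral_of_le hx.1.le).symm
  -- fundamental theorem of calculus identity for g
  have key2 : ∀ t : ℝ, 0 < t → (∫ x in (0:ℝ)..t, g x) = m t - m 0 := by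
    intro t ht
    have htIci : t ∈ Ici (0:ℝ) := ht.le
    have if' : IntegrableOn f' (Ioc (0:ℝ) t) := (hf'Icc t).mono_set Ioc_subset_Icc_self
    have im : IntegrableOn m (Ioc (0:ℝ) t) := (hmIcc t).mono_set Ioc_subset_Icc_self
    have iconv := hconv_int t ht
    have e0 : (∫ x in (0:ℝ)..t, g x) = ∫ x in Ioc (0:ℝ) t, (f' x + f 0 * m x + conv x) := by
      rw [intervalIntegral.integral_of_le ht.le]
      refine setIntegral_congr_fun measurableSet_Ioc (fun x hx => ?_)
      show (if 0 ≤ x then f' x + f 0 * m x + conv x else 0) = f' x + f 0 * m x + conv x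
      exact if_pos hx.1.le
    have e1 : (∫ x in Ioc (0:ℝ) t, (f' x + f 0 * m x + conv x))
        = ((∫ x in Ioc (0:ℝ) t, f' x) + ∫ x in Ioc (0:ℝ) t, f 0 * m x)
          + ∫ x in Ioc (0:ℝ) t, conv x := by
      have iadd : IntegrableOn (fun x => f' x + f 0 * m x) (Ioc (0:ℝ) t) volume :=
        if'.add (im.const_mul (f 0))
      have icm : IntegrableOn (fun x => f 0 * m x) (Ioc (0:ℝ) t) volume := im.const_mul (f 0)
      rw [integral_add iadd iconv, integral_add if' icm]
    have eA : (∫ x in Ioc (0:ℝ) t, f' x) = f t - f 0 := by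
      rw [← intervalIntegral.integral_of_le ht.le]
      have := hf_ac t htIci; linarith
    have eB : (∫ x in Ioc (0:ℝ) t, f 0 * m x) = f 0 * ∫ x in Ioc (0:ℝ) t, m x :=
      integral_const_mul _ _
    have eC1 : (∫ x in Ioc (0:ℝ) t, conv x)
        = ∫ x in Ioc (0:ℝ) t, ∫ y in Ioc (0:ℝ) x, f' y * m (x - y) := by
      refine setIntegral_congr_fun measurableSet_Ioc (fun x hx => ?_)
      exact intervalIntegral.integral_of_le hx.1.le
    have eC2 : (∫ x in Ioc (0:ℝ) t, ∫ y in Ioc (0:ℝ) x, f' y * m (x - y))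
        = ∫ y in Ioc (0:ℝ) t, ∫ x in Ioc y t, f' y * m (x - y) :=
      RenewalAux.swap_tri (F := fun q : ℝ × ℝ => f' q.2 * m (q.1 - q.2)) (hK1 t ht)
    have eC3 : (∫ y in Ioc (0:ℝ) t, ∫ x in Ioc y t, f' y * m (x - y))
        = ∫ y in Ioc (0:ℝ) t, ∫ u in Ioc (0:ℝ) (t - y), f' y * m u := by
      refine setIntegral_congr_fun measurableSet_Ioc (fun y hy => ?_)
      have hty : (0:ℝ) ≤ t - y := by linarith [hy.2]
      rw [← intervalIntegral.integral_of_le hy.2, intervalIntegral.integral_const_mul]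
      rw [intervalIntegral.integral_comp_sub_right (fun u => m u) y, sub_self]
      rw [intervalIntegral.integral_of_le hty]
      exact (integral_const_mul _ _).symm
    have hK2 : Integrable ((RenewalAux.anti t).indicator fun q : ℝ × ℝ => f' q.1 * m q.2)
        ((volume.restrict (Ioc (0:ℝ) t)).prod (volume.restrict (Ioc (0:ℝ) t))) :=
      RenewalAux.integrable_anti_kernel if' im
    have eC4 : (∫ y in Ioc (0:ℝ) t, ∫ u in Ioc (0:ℝ) (t - y), f' y * m u)
        = ∫ u in Ioc (0:ℝ) t, ∫ y in Ioc (0:ℝ) (t - u), f' y * m u :=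
      RenewalAux.swap_anti (F := fun q : ℝ × ℝ => f' q.1 * m q.2) hK2
    have eC5 : (∫ u in Ioc (0:ℝ) t, ∫ y in Ioc (0:ℝ) (t - u), f' y * m u)
        = ∫ u in Ioc (0:ℝ) t, (f (t - u) - f 0) * m u := by
      refine setIntegral_congr_fun measurableSet_Ioc (fun u hu => ?_)
      have htu : (0:ℝ) ≤ t - u := by linarith [hu.2]
      rw [integral_mul_const]
      congr 1
      rw [← intervalIntegral.integral_of_le htu]
      have := hf_ac (t - u) htu; linarith
    have imf' : IntegrableOn (fun u => f (t - u) * m u) (Ioc (0:ℝ) t) :=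
      (imf t ht).congr (Filter.Eventually.of_forall fun x => mul_comm _ _)
    have eC6 : (∫ u in Ioc (0:ℝ) t, (f (t - u) - f 0) * m u)
        = (∫ u in Ioc (0:ℝ) t, f (t - u) * m u) - f 0 * ∫ u in Ioc (0:ℝ) t, m u := by
      simp_rw [sub_mul]
      rw [integral_sub imf' (im.const_mul (f 0)), integral_const_mul]
    have eC7 : (∫ u in Ioc (0:ℝ) t, f (t - u) * m u) = m t - f t := by
      have h := hm_eq t htIci
      rw [intervalIntegral.integral_of_le ht.le] at h
      have h2 : (∫ u in Ioc (0:ℝ) t, f (t - u) * m u) = ∫ x in Ioc (0:ℝ) t, m x * f (t - x) :=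
        setIntegral_congr_fun measurableSet_Ioc (fun u _ => mul_comm _ _)
      rw [h2]; linarith
    rw [e0, e1, eA, eB, eC1, eC2, eC3, eC4, eC5, eC6, eC7]
    linarith [hm0]
  -- integrability of g on intervals
  have hneg : IntegrableOn g (Iic (0:ℝ)) volume := by
    have h0 : IntegrableOn (fun _ : ℝ => (0:ℝ)) (Iic (0:ℝ)) volume := integrableOn_zero
    apply h0.congr
    rw [show volume.restrict (Iic (0:ℝ)) = volume.restrict (Iio (0:ℝ)) from
      (Measure.restrict_congr_set Iio_ae_eq_Iic).symm]
    refine (ae_restrict_iff' measurableSet_Iio).2 (Filter.Eventually.of_forall fun x hx => ?_)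
    show (0:ℝ) = g x
    exact (if_neg (not_le.2 hx)).symm
  have hpos : ∀ v : ℝ, IntegrableOn g (Ioc (0:ℝ) v) volume := by
    intro v
    rcases le_or_gt v 0 with hv | hv
    · rw [Ioc_eq_empty (not_lt.2 hv)]
      exact integrableOn_empty
    · have hint : IntegrableOn (fun x => f' x + f 0 * m x + conv x) (Ioc (0:ℝ) v) :=
        (((hf'Icc v).mono_set Ioc_subset_Icc_self).add
          (((hmIcc v).mono_set Ioc_subset_Icc_self).const_mul (f 0))).add (hconv_int v hv)
      apply hint.congr
      refine (ae_restrict_iff' measurableSet_Ioc).2 (Filter.Eventually.of_forall fun x hx => ?_)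
      show f' x + f 0 * m x + conv x = g x
      exact (if_pos hx.1.le).symm
  have key1 : ∀ u v : ℝ, IntegrableOn g (Ioc u v) volume := by
    intro u v
    rcases le_or_gt v 0 with hb | hb
    · exact hneg.mono_set (fun x hx => le_trans hx.2 hb)
    · refine (hneg.union (hpos v)).mono_set ?_
      intro x hx
      rcases le_or_gt x 0 with h' | h'
      · exact Or.inl h'
      · exact Or.inr ⟨h', hx.2⟩
  refine ⟨g, ?_, ?_, ?_⟩
  · -- interval integrability
    intro a b
    rcases le_total a b with hab | hab
    · exact (intervalIntegrable_iff_integrableOn_Ioc_of_le hab).2 (key1 a b)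
    · exact ((intervalIntegrable_iff_integrableOn_Ioc_of_le hab).2 (key1 b a)).symm
  · -- fundamental theorem of calculus
    intro t ht
    have ht0 : (0:ℝ) ≤ t := ht
    rcases eq_or_lt_of_le ht0 with h | h
    · rw [← h, intervalIntegral.integral_same]; ring
    · have := key2 t h; linarith
  · -- the renewal equation for the derivative
    intro t ht
    obtain ⟨C, hC⟩ := hf'_bdd 0 t
    have hC0 : 0 ≤ C := le_trans (abs_nonneg _) (hC 0 ⟨le_refl _, ht.le⟩)
    have if' : IntegrableOn f' (Ioc (0:ℝ) t) := (hf'Icc t).mono_set Ioc_subset_Icc_self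
    have im : IntegrableOn m (Ioc (0:ℝ) t) := (hmIcc t).mono_set Ioc_subset_Icc_self
    have hgt : g t = f' t + f 0 * m t + ∫ y in Ioc (0:ℝ) t, f' y * m (t - y) := by
      show (if 0 ≤ t then f' t + f 0 * m t + conv t else 0) = _
      rw [if_pos ht.le]
      congr 1
      exact intervalIntegral.integral_of_le ht.le
    have hcr : IntegrableOn (fun x => f (t - x)) (Icc (0:ℝ) t) := hrefl t f (hfIcc t)
    have hK3 : Integrable ((RenewalAux.tri).indicator fun q : ℝ × ℝ =>
        f' q.2 * m (q.1 - q.2) * f (t - q.1))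
        ((volume.restrict (Ioc (0:ℝ) t)).prod (volume.restrict (Ioc (0:ℝ) t))) :=
      RenewalAux.integrable_tri_kernel ht.le f' m (fun x => f (t - x)) hf'_meas hm_meas
        (hf_meas.comp (measurable_const.sub measurable_id)) hC (hmIcc t) hcr
    have j1 : IntegrableOn (fun x => f' x * f (t - x)) (Ioc (0:ℝ) t) := by
      refine Integrable.mono' (((hfr t).abs).const_mul C) ?_ ?_
      · exact (hf'_meas.mul
          (hf_meas.comp (measurable_const.sub measurable_id))).aestronglyMeasurable
      · rw [ae_restrict_iff' measurableSet_Ioc]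
        refine Filter.Eventually.of_forall (fun x hx => ?_)
        rw [Real.norm_eq_abs, abs_mul]
        exact mul_le_mul_of_nonneg_right (hC x ⟨hx.1.le, hx.2⟩) (abs_nonneg _)
    have j1' : IntegrableOn (fun y => f' y * m (t - y)) (Ioc (0:ℝ) t) := by
      refine Integrable.mono' (((hmr t).abs).const_mul C) ?_ ?_
      · exact (hf'_meas.mul
          (hm_meas.comp (measurable_const.sub measurable_id))).aestronglyMeasurable
      · rw [ae_restrict_iff' measurableSet_Ioc]
        refine Filter.Eventually.of_forall (fun x hx => ?_)
        rw [Real.norm_eq_abs, abs_mul]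
        exact mul_le_mul_of_nonneg_right (hC x ⟨hx.1.le, hx.2⟩) (abs_nonneg _)
    have j2 : IntegrableOn (fun x => f 0 * m x * f (t - x)) (Ioc (0:ℝ) t) := by
      have h := (imf t ht).const_mul (f 0)
      exact h.congr (Filter.Eventually.of_forall fun x => (mul_assoc _ _ _).symm)
    have j3 : IntegrableOn (fun x => conv x * f (t - x)) (Ioc (0:ℝ) t) := by
      have H := hK3.integral_prod_left
      apply H.congr
      refine (ae_restrict_iff' measurableSet_Ioc).2 (Filter.Eventually.of_forall fun x hx => ?_)
      show (∫ y in Ioc (0:ℝ) t, ((RenewalAux.tri).indicator fun q : ℝ × ℝ =>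
          f' q.2 * m (q.1 - q.2) * f (t - q.1)) (x, y)) = conv x * f (t - x)
      calc (∫ y in Ioc (0:ℝ) t, ((RenewalAux.tri).indicator fun q : ℝ × ℝ =>
              f' q.2 * m (q.1 - q.2) * f (t - q.1)) (x, y))
          = ∫ y in Ioc (0:ℝ) x, f' y * m (x - y) * f (t - x) :=
            RenewalAux.sect_tri t x hx _
        _ = (∫ y in Ioc (0:ℝ) x, f' y * m (x - y)) * f (t - x) := integral_mul_const _ _
        _ = conv x * f (t - x) := by
            congr 1
            exact (intervalIntegral.integral_of_le hx.1.le).symm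
    have r0 : (∫ x in (0:ℝ)..t, g x * f (t - x))
        = ∫ x in Ioc (0:ℝ) t,
            (f' x * f (t - x) + f 0 * m x * f (t - x) + conv x * f (t - x)) := by
      rw [intervalIntegral.integral_of_le ht.le]
      refine setIntegral_congr_fun measurableSet_Ioc (fun x hx => ?_)
      show (if 0 ≤ x then f' x + f 0 * m x + conv x else 0) * f (t - x) = _
      rw [if_pos hx.1.le]; ring
    have r1 : (∫ x in Ioc (0:ℝ) t,
          (f' x * f (t - x) + f 0 * m x * f (t - x) + conv x * f (t - x)))
        = ((∫ x in Ioc (0:ℝ) t, f' x * f (t - x))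
            + ∫ x in Ioc (0:ℝ) t, f 0 * m x * f (t - x))
          + ∫ x in Ioc (0:ℝ) t, conv x * f (t - x) := by
      have k12 : IntegrableOn
          (fun x => f' x * f (t - x) + f 0 * m x * f (t - x)) (Ioc (0:ℝ) t) volume := j1.add j2
      rw [integral_add k12 j3, integral_add j1 j2]
    have r2 : (∫ x in Ioc (0:ℝ) t, f 0 * m x * f (t - x)) = f 0 * (m t - f t) := by
      simp_rw [mul_assoc]
      rw [integral_const_mul]
      congr 1
      have h := hm_eq t ht.le
      rw [intervalIntegral.integral_of_le ht.le] at h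
      linarith
    have r3 : (∫ x in Ioc (0:ℝ) t, conv x * f (t - x))
        = (∫ y in Ioc (0:ℝ) t, f' y * m (t - y)) - ∫ y in Ioc (0:ℝ) t, f' y * f (t - y) := by
      have s1 : (∫ x in Ioc (0:ℝ) t, conv x * f (t - x))
          = ∫ x in Ioc (0:ℝ) t, ∫ y in Ioc (0:ℝ) x, f' y * m (x - y) * f (t - x) := by
        refine setIntegral_congr_fun measurableSet_Ioc (fun x hx => ?_)
        calc conv x * f (t - x)
            = (∫ y in Ioc (0:ℝ) x, f' y * m (x - y)) * f (t - x) := by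
              congr 1
              exact intervalIntegral.integral_of_le hx.1.le
          _ = ∫ y in Ioc (0:ℝ) x, f' y * m (x - y) * f (t - x) := (integral_mul_const _ _).symm
      have s2 : (∫ x in Ioc (0:ℝ) t, ∫ y in Ioc (0:ℝ) x, f' y * m (x - y) * f (t - x))
          = ∫ y in Ioc (0:ℝ) t, ∫ x in Ioc y t, f' y * m (x - y) * f (t - x) :=
        RenewalAux.swap_tri (F := fun q : ℝ × ℝ => f' q.2 * m (q.1 - q.2) * f (t - q.1)) hK3
      have s3 : ∀ y ∈ Ioc (0:ℝ) t, (∫ x in Ioc y t, f' y * m (x - y) * f (t - x))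
          = f' y * (m (t - y) - f (t - y)) := by
        intro y hy
        have hty : (0:ℝ) ≤ t - y := by linarith [hy.2]
        have htm := hm_eq (t - y) hty
        calc (∫ x in Ioc y t, f' y * m (x - y) * f (t - x))
            = ∫ x in Ioc y t, f' y * (m (x - y) * f (t - x)) := by
              refine setIntegral_congr_fun measurableSet_Ioc (fun x _ => ?_); ring
          _ = ∫ x in y..t, f' y * (m (x - y) * f (t - x)) :=
              (intervalIntegral.integral_of_le hy.2).symm
          _ = f' y * ∫ x in y..t, m (x - y) * f (t - x) :=
              intervalIntegral.integral_const_mul _ _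
          _ = f' y * ∫ u in (0:ℝ)..(t - y), m u * f ((t - y) - u) := by
              congr 1
              have h := intervalIntegral.integral_comp_sub_right
                  (a := y) (b := t) (fun u => m u * f ((t - y) - u)) y
              rw [sub_self] at h
              rw [← h]
              refine intervalIntegral.integral_congr (fun x _ => ?_)
              show m (x - y) * f (t - x) = m (x - y) * f ((t - y) - (x - y))
              rw [show (t - y) - (x - y) = t - x by ring]
          _ = f' y * (m (t - y) - f (t - y)) := by
              have hval : (∫ u in (0:ℝ)..(t - y), m u * f ((t - y) - u))
                  = m (t - y) - f (t - y) := by linarith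
              rw [hval]
      have s4 : (∫ y in Ioc (0:ℝ) t, ∫ x in Ioc y t, f' y * m (x - y) * f (t - x))
          = ∫ y in Ioc (0:ℝ) t, (f' y * m (t - y) - f' y * f (t - y)) := by
        refine setIntegral_congr_fun measurableSet_Ioc (fun y hy => ?_)
        rw [s3 y hy]; ring
      rw [s1, s2, s4, integral_sub j1' j1]
    rw [hgt, r0, r1, r2, r3, hm0]
    ring
end

section
/- Let f be a probability density function on [0,∞) that is positive, absolutely continuous, and such that f′ is bounded on every compact subinterval of [0,∞). Let F̄(t) = ∫ₜ^∞ f(x) dx and let m be the renewal density, i.e., the solution of m(t) = f(t) + ∫₀ᵗ m(x) f(t−x) dx for t ≥ 0. Then for all t > 0: ∫₀ᵗ m′(x) F̄(t−x) dx = f(t) − f(0) F̄(t). -/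
open MeasureTheory Set intervalIntegral

lemma integrableOn_Ioc_of_bounded {g : ℝ → ℝ} {a b C : ℝ}
    (hg : AEStronglyMeasurable g (volume.restrict (Ioc a b)))
    (h : ∀ x ∈ Ioc a b, |g x| ≤ C) : IntegrableOn g (Ioc a b) := by
  refine ⟨hg, HasFiniteIntegral.restrict_of_bounded (C := C) measure_Ioc_lt_top ?_⟩
  filter_upwards [ae_restrict_mem measurableSet_Ioc] with x hx using h x hx

lemma triangle_swap (φ ψ : ℝ → ℝ) (hφ : Measurable φ) (hψ : Measurable ψ)
    (t Cφ Cψ : ℝ) (ht : 0 ≤ t)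
    (hφb : ∀ x ∈ Icc (0:ℝ) t, |φ x| ≤ Cφ)
    (hψb : ∀ x ∈ Icc (0:ℝ) t, |ψ x| ≤ Cψ) :
    (∫ x in (0:ℝ)..t, ∫ u in (0:ℝ)..x, φ u * ψ (x - u)) =
      ∫ u in (0:ℝ)..t, φ u * ∫ v in (0:ℝ)..(t - u), ψ v := by
  have hCφ : 0 ≤ Cφ := le_trans (abs_nonneg _) (hφb 0 ⟨le_refl _, ht⟩)
  have hCψ : 0 ≤ Cψ := le_trans (abs_nonneg _) (hψb 0 ⟨le_refl _, ht⟩)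
  set G : ℝ → ℝ → ℝ := fun x u => if u ≤ x then φ u * ψ (x - u) else 0 with hG
  have hGmeas : Measurable (Function.uncurry G) := by
    apply Measurable.ite (measurableSet_le measurable_snd measurable_fst)
    · exact (hφ.comp measurable_snd).mul (hψ.comp (measurable_fst.sub measurable_snd))
    · exact measurable_const
  have hGint : Integrable (Function.uncurry G)
      ((volume.restrict (Ioc 0 t)).prod (volume.restrict (Ioc 0 t))) := by
    refine Integrable.mono' (integrable_const (Cφ * Cψ)) hGmeas.aestronglyMeasurable ?_
    rw [Measure.prod_restrict]
    filter_upwards [ae_restrict_mem (measurableSet_Ioc.prod measurableSet_Ioc)] with p hp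
    obtain ⟨hp1, hp2⟩ := hp
    simp only [Function.uncurry, hG]
    split_ifs with h
    · rw [Real.norm_eq_abs, abs_mul]
      exact mul_le_mul (hφb p.2 ⟨hp2.1.le, hp2.2⟩)
        (hψb (p.1 - p.2) ⟨by linarith, by linarith [hp2.1, hp1.2]⟩) (abs_nonneg _) hCφ
    · simpa using mul_nonneg hCφ hCψ
  have hswap := integral_integral_swap hGint
  -- LHS inner
  have hL : ∀ x ∈ Ioc (0:ℝ) t, (∫ u in Ioc (0:ℝ) t, G x u) = ∫ u in (0:ℝ)..x, φ u * ψ (x - u) := by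
    intro x hx
    have h1 : ∀ u ∈ Ioc (0:ℝ) t, G x u = (Ioc (0:ℝ) x).indicator (fun u => φ u * ψ (x - u)) u := by
      intro u hu
      simp only [hG, indicator, mem_Ioc]
      by_cases h : u ≤ x <;> simp [h, hu.1]
    rw [setIntegral_congr_fun measurableSet_Ioc h1,
      setIntegral_indicator measurableSet_Ioc]
    have : Ioc (0:ℝ) t ∩ Ioc 0 x = Ioc 0 x := by
      rw [Ioc_inter_Ioc]
      simp [hx.2, le_refl, max_self]
    rw [this, intervalIntegral.integral_of_le hx.1.le]
  -- RHS inner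
  have hR : ∀ u ∈ Ioc (0:ℝ) t, (∫ x in Ioc (0:ℝ) t, G x u)
      = φ u * ∫ v in (0:ℝ)..(t - u), ψ v := by
    intro u hu
    have h1 : ∀ x ∈ Ioc (0:ℝ) t, G x u = (Icc u t).indicator (fun x => φ u * ψ (x - u)) x := by
      intro x hx
      simp only [hG, indicator, mem_Icc]
      by_cases h : u ≤ x <;> simp [h, hx.2]
    rw [setIntegral_congr_fun measurableSet_Ioc h1, setIntegral_indicator measurableSet_Icc]
    have h2 : Ioc (0:ℝ) t ∩ Icc u t = Icc u t := by
      apply inter_eq_self_of_subset_right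
      intro x hx
      exact ⟨lt_of_lt_of_le hu.1 hx.1, hx.2⟩
    rw [h2, integral_Icc_eq_integral_Ioc, ← intervalIntegral.integral_of_le hu.2,
      intervalIntegral.integral_const_mul, intervalIntegral.integral_comp_sub_right (fun v => ψ v) u,
      sub_self]
  -- assemble
  rw [intervalIntegral.integral_of_le ht, intervalIntegral.integral_of_le ht]
  calc ∫ x in Ioc (0:ℝ) t, ∫ u in (0:ℝ)..x, φ u * ψ (x - u)
      = ∫ x in Ioc (0:ℝ) t, ∫ u in Ioc (0:ℝ) t, G x u :=
        (setIntegral_congr_fun measurableSet_Ioc (fun x hx => (hL x hx).symm))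
    _ = ∫ u in Ioc (0:ℝ) t, ∫ x in Ioc (0:ℝ) t, G x u := hswap
    _ = ∫ u in Ioc (0:ℝ) t, φ u * ∫ v in (0:ℝ)..(t - u), ψ v :=
        setIntegral_congr_fun measurableSet_Ioc (fun u hu => hR u hu)

lemma corner_swap (φ ψ : ℝ → ℝ) (hφ : Measurable φ) (hψ : Measurable ψ)
    (t Cφ Cψ : ℝ) (ht : 0 ≤ t)
    (hφb : ∀ x ∈ Icc (0:ℝ) t, |φ x| ≤ Cφ)
    (hψb : ∀ x ∈ Icc (0:ℝ) t, |ψ x| ≤ Cψ) :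
    (∫ x in (0:ℝ)..t, φ x * ∫ v in (0:ℝ)..(t - x), ψ v) =
      ∫ y in (0:ℝ)..t, ψ y * ∫ v in (0:ℝ)..(t - y), φ v := by
  rw [← triangle_swap φ ψ hφ hψ t Cφ Cψ ht hφb hψb,
    ← triangle_swap ψ φ hψ hφ t Cψ Cφ ht hψb hφb]
  apply intervalIntegral.integral_congr
  intro x _
  have : ∀ u : ℝ, φ u * ψ (x - u) = (fun v => ψ v * φ (x - v)) (x - u) := by
    intro u; simp [mul_comm]
  simp_rw [this]
  rw [intervalIntegral.integral_comp_sub_left (fun v => ψ v * φ (x - v)) x, sub_self, sub_zero]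


/-- **Equation (7) of the paper.**
Let `f` be a probability density on `[0, ∞)` that is positive, absolutely continuous (with
a.e. derivative `f'`, so that `f t = f 0 + ∫ x in 0..t, f' x`), and such that `f'` is bounded
on every compact subinterval of `[0, ∞)`.  Let `F̄` be the survival function and `m` the
renewal density, i.e. the solution of `m t = f t + ∫ x in 0..t, m x * f (t - x)` for `t ≥ 0`.
Then, with `m'` a version of the derivative of (the absolutely continuous) `m`, for all
`t > 0`: `∫ x in 0..t, m' x * F̄ (t - x) = f t - f 0 * F̄ t`. -/
theorem renewal_density_derivative_integral_identity
    (f f' m : ℝ → ℝ)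
    (hf_meas : Measurable f)
    (hf_pos : ∀ x ∈ Set.Ici (0 : ℝ), 0 < f x)
    (hf_int : IntegrableOn f (Set.Ici 0))
    (hf_one : (∫ x in Set.Ici (0 : ℝ), f x) = 1)
    (hf'_meas : Measurable f')
    (hf'_intloc : ∀ a b : ℝ, IntervalIntegrable f' volume a b)
    (hf_ac : ∀ t ∈ Set.Ici (0 : ℝ), f t = f 0 + ∫ x in (0 : ℝ)..t, f' x)
    (hf'_bdd : ∀ a b : ℝ, ∃ C : ℝ, ∀ x ∈ Set.Icc a b, |f' x| ≤ C)
    (hm_meas : Measurable m)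
    (hm_loc : LocallyIntegrableOn m (Set.Ici 0))
    (hm_eq : ∀ t ∈ Set.Ici (0 : ℝ), m t = f t + ∫ x in (0 : ℝ)..t, m x * f (t - x)) :
    ∃ m' : ℝ → ℝ,
      (∀ a b : ℝ, IntervalIntegrable m' volume a b) ∧
      (∀ t ∈ Set.Ici (0 : ℝ), m t = m 0 + ∫ x in (0 : ℝ)..t, m' x) ∧
      ∀ t : ℝ, 0 < t →
        (∫ x in (0 : ℝ)..t, m' x * survival f (t - x)) = f t - f 0 * survival f t := by
  -- m 0 = f 0
  have h00 : m 0 = f 0 := by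
    have := hm_eq 0 (by simp)
    simpa using this
  -- bound for f' on [0,b], with nonneg constant
  have hf'bd : ∀ b : ℝ, 0 ≤ b → ∃ C, 0 ≤ C ∧ ∀ x ∈ Icc (0:ℝ) b, |f' x| ≤ C := by
    intro b hb
    obtain ⟨C, hC⟩ := hf'_bdd 0 b
    exact ⟨C, le_trans (abs_nonneg _) (hC 0 ⟨le_refl _, hb⟩), hC⟩
  -- bound for f on [0,b]
  have hfbd : ∀ b : ℝ, 0 ≤ b → ∃ C, 0 ≤ C ∧ ∀ x ∈ Icc (0:ℝ) b, |f x| ≤ C := by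
    intro b hb
    obtain ⟨C, hC0, hC⟩ := hf'bd b hb
    refine ⟨|f 0| + C * b, by positivity, ?_⟩
    intro x hx
    rw [hf_ac x hx.1]
    refine le_trans (abs_add_le _ _) (add_le_add_right ?_ _)
    have := intervalIntegral.norm_integral_le_of_norm_le_const
      (C := C) (f := f') (a := 0) (b := x) ?_
    · refine le_trans this ?_
      rw [sub_zero, abs_of_nonneg hx.1]
      exact mul_le_mul_of_nonneg_left hx.2 hC0
    · intro y hy
      rw [uIoc_of_le hx.1] at hy
      exact hC y ⟨hy.1.le, le_trans hy.2 hx.2⟩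
  -- m is integrable on Ioc 0 b
  have hmInt : ∀ b : ℝ, IntegrableOn m (Ioc 0 b) := by
    intro b
    have : IntegrableOn m (Icc 0 (max b 0)) :=
      hm_loc.integrableOn_compact_subset (fun x hx => hx.1) isCompact_Icc
    exact this.mono_set (fun x hx => ⟨hx.1.le, le_trans hx.2 (le_max_left _ _)⟩)
  -- integrability of convolution-type integrands
  have hconv_int : ∀ (g : ℝ → ℝ), Measurable g → ∀ b : ℝ, 0 ≤ b →
      ∀ D : ℝ, (∀ y ∈ Icc (0:ℝ) b, |g y| ≤ D) →
      ∀ x ∈ Icc (0:ℝ) b, IntegrableOn (fun u => m u * g (x - u)) (Ioc 0 x) := by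
    intro g hg b hb D hD x hx
    refine Integrable.mono' (((hmInt x).norm).const_mul D)
      ((hm_meas.mul (hg.comp (measurable_const.sub measurable_id))).aestronglyMeasurable) ?_
    filter_upwards [ae_restrict_mem measurableSet_Ioc] with u hu
    rw [Real.norm_eq_abs, abs_mul, mul_comm]
    have : |g (x - u)| ≤ D := hD (x - u) ⟨by linarith [hu.2], by linarith [hu.1, hx.2]⟩
    exact mul_le_mul_of_nonneg_right this (abs_nonneg _)
  -- bound for convolution-type integrals
  have hconv_bd : ∀ (g : ℝ → ℝ), Measurable g → ∀ b : ℝ, 0 ≤ b →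
      ∀ D : ℝ, (∀ y ∈ Icc (0:ℝ) b, |g y| ≤ D) →
      ∀ x ∈ Icc (0:ℝ) b, |∫ u in (0:ℝ)..x, m u * g (x - u)| ≤ D * ∫ u in Ioc (0:ℝ) b, |m u| := by
    intro g hg b hb D hD x hx
    have hD0 : 0 ≤ D := le_trans (abs_nonneg _) (hD 0 ⟨le_refl _, hb⟩)
    rw [intervalIntegral.integral_of_le hx.1]
    have h1 : |∫ u in Ioc (0:ℝ) x, m u * g (x - u)| ≤ ∫ u in Ioc (0:ℝ) x, D * |m u| := by
      rw [← Real.norm_eq_abs]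
      refine norm_integral_le_of_norm_le (((hmInt x).norm).const_mul D) ?_
      filter_upwards [ae_restrict_mem measurableSet_Ioc] with u hu
      rw [Real.norm_eq_abs, abs_mul, mul_comm]
      have : |g (x - u)| ≤ D := hD (x - u) ⟨by linarith [hu.2], by linarith [hu.1, hx.2]⟩
      exact mul_le_mul_of_nonneg_right this (abs_nonneg _)
    refine le_trans h1 ?_
    rw [MeasureTheory.integral_const_mul]
    refine mul_le_mul_of_nonneg_left ?_ hD0
    refine setIntegral_mono_set ((hmInt b).norm) ?_ ?_
    · filter_upwards with u using abs_nonneg _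
    · exact HasSubset.Subset.eventuallyLE (Ioc_subset_Ioc_right hx.2)
  -- bound for m on [0,b]
  have hmbd : ∀ b : ℝ, 0 ≤ b → ∃ C, 0 ≤ C ∧ ∀ x ∈ Icc (0:ℝ) b, |m x| ≤ C := by
    intro b hb
    obtain ⟨Cf, hCf0, hCf⟩ := hfbd b hb
    refine ⟨Cf + Cf * ∫ u in Ioc (0:ℝ) b, |m u|, ?_, ?_⟩
    · have : 0 ≤ ∫ u in Ioc (0:ℝ) b, |m u| := integral_nonneg (fun u => abs_nonneg _)
      positivity
    · intro x hx
      rw [hm_eq x hx.1]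
      refine le_trans (abs_add_le _ _) (add_le_add (hCf x hx) ?_)
      exact hconv_bd f hf_meas b hb Cf hCf x hx
  -- definition of the derivative m'
  set K : ℝ → ℝ → ℝ := fun s u => if 0 < u ∧ u ≤ s then m u * f' (s - u) else 0 with hK
  have hKmeas : Measurable (Function.uncurry K) := by
    apply Measurable.ite
    · exact (measurableSet_lt measurable_const measurable_snd).inter
        (measurableSet_le measurable_snd measurable_fst)
    · exact (hm_meas.comp measurable_snd).mul (hf'_meas.comp (measurable_fst.sub measurable_snd))
    · exact measurable_const
  have hconv_eq : ∀ s : ℝ, 0 ≤ s → (∫ u, K s u) = ∫ u in (0:ℝ)..s, m u * f' (s - u) := by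
    intro s hs
    have h1 : (fun u => K s u) = (Ioc (0:ℝ) s).indicator (fun u => m u * f' (s - u)) := by
      funext u
      simp only [hK, indicator, mem_Ioc]
    rw [h1, MeasureTheory.integral_indicator measurableSet_Ioc,
      intervalIntegral.integral_of_le hs]
  set m' : ℝ → ℝ := fun s => if 0 ≤ s then f' s + m s * f 0 + ∫ u, K s u else 0 with hm'def
  have hm'meas : Measurable m' := by
    apply Measurable.ite measurableSet_Ici
    · refine (hf'_meas.add (hm_meas.mul measurable_const)).add ?_
      have h := MeasureTheory.StronglyMeasurable.integral_prod_right'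
        (ν := (volume : Measure ℝ)) hKmeas.stronglyMeasurable
      exact h.measurable
    · exact measurable_const
  -- bound for m' : for all x ≤ b (with b ≥ 0), |m' x| ≤ C
  have hm'bd : ∀ b : ℝ, 0 ≤ b → ∃ C, 0 ≤ C ∧ ∀ x : ℝ, x ≤ b → |m' x| ≤ C := by
    intro b hb
    obtain ⟨C1, hC10, hC1⟩ := hf'bd b hb
    obtain ⟨C2, hC20, hC2⟩ := hmbd b hb
    refine ⟨C1 + C2 * |f 0| + C1 * ∫ u in Ioc (0:ℝ) b, |m u|, ?_, ?_⟩
    · have : 0 ≤ ∫ u in Ioc (0:ℝ) b, |m u| := integral_nonneg (fun u => abs_nonneg _)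
      positivity
    · intro x hxb
      by_cases hx0 : 0 ≤ x
      · have hx : x ∈ Icc (0:ℝ) b := ⟨hx0, hxb⟩
        simp only [hm'def, if_pos hx0]
        refine le_trans (abs_add_le _ _) ?_
        refine add_le_add (le_trans (abs_add_le _ _) (add_le_add (hC1 x hx) ?_)) ?_
        · rw [abs_mul]
          exact mul_le_mul_of_nonneg_right (hC2 x hx) (abs_nonneg _)
        · rw [hconv_eq x hx0]
          exact hconv_bd f' hf'_meas b hb C1 hC1 x hx
      · simp only [hm'def, if_neg hx0]
        have : 0 ≤ ∫ u in Ioc (0:ℝ) b, |m u| := integral_nonneg (fun u => abs_nonneg _)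
        rw [abs_zero]
        positivity
  -- m' is interval integrable
  have hm'int : ∀ a b : ℝ, IntervalIntegrable m' volume a b := by
    intro a b
    rw [intervalIntegrable_iff]
    obtain ⟨C, hC0, hC⟩ := hm'bd (max (max a b) 0) (le_max_right _ _)
    refine integrableOn_Ioc_of_bounded (C := C) (hm'meas.aestronglyMeasurable.restrict) ?_
    intro x hx
    exact hC x (le_trans hx.2 (le_max_left _ _))
  have hconvMeas : Measurable (fun s : ℝ => ∫ u, K s u) := by
    have h := MeasureTheory.StronglyMeasurable.integral_prod_right'
      (ν := (volume : Measure ℝ)) hKmeas.stronglyMeasurable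
    exact h.measurable
  -- FTC property for m
  have key2 : ∀ t : ℝ, 0 ≤ t → m t = m 0 + ∫ x in (0:ℝ)..t, m' x := by
    intro t ht
    obtain ⟨C1, hC10, hC1⟩ := hf'bd t ht
    obtain ⟨C2, hC20, hC2⟩ := hmbd t ht
    obtain ⟨Cf, hCf0, hCf⟩ := hfbd t ht
    have hcongr : ∫ x in (0:ℝ)..t, m' x
        = ∫ x in (0:ℝ)..t, (f' x + m x * f 0 + ∫ u, K x u) := by
      apply intervalIntegral.integral_congr
      intro x hx
      rw [uIcc_of_le ht] at hx
      simp only [hm'def, if_pos hx.1]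
    have i1 : IntervalIntegrable f' volume 0 t := hf'_intloc 0 t
    have i2 : IntervalIntegrable (fun x => m x * f 0) volume 0 t := by
      rw [intervalIntegrable_iff_integrableOn_Ioc_of_le ht]
      exact (hmInt t).mul_const _
    have i3 : IntervalIntegrable (fun x => ∫ u, K x u) volume 0 t := by
      rw [intervalIntegrable_iff_integrableOn_Ioc_of_le ht]
      refine integrableOn_Ioc_of_bounded (C := C1 * ∫ u in Ioc (0:ℝ) t, |m u|)
        hconvMeas.aestronglyMeasurable.restrict ?_
      intro x hx
      rw [hconv_eq x hx.1.le]
      exact hconv_bd f' hf'_meas t ht C1 hC1 x ⟨hx.1.le, hx.2⟩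
    have e1 : ∫ x in (0:ℝ)..t, f' x = f t - f 0 := by
      have := hf_ac t ht; linarith
    have e2 : ∫ x in (0:ℝ)..t, m x * f 0 = (∫ x in (0:ℝ)..t, m x) * f 0 :=
      intervalIntegral.integral_mul_const _ _
    have j1 : IntervalIntegrable (fun u => m u * f (t - u)) volume 0 t := by
      rw [intervalIntegrable_iff_integrableOn_Ioc_of_le ht]
      exact hconv_int f hf_meas t ht Cf hCf t ⟨ht, le_refl t⟩
    have e3 : ∫ x in (0:ℝ)..t, (∫ u, K x u)
        = (m t - f t) - (∫ x in (0:ℝ)..t, m x) * f 0 := by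
      have h1 : ∫ x in (0:ℝ)..t, (∫ u, K x u)
          = ∫ x in (0:ℝ)..t, ∫ u in (0:ℝ)..x, m u * f' (x - u) := by
        apply intervalIntegral.integral_congr
        intro x hx
        rw [uIcc_of_le ht] at hx
        exact hconv_eq x hx.1
      rw [h1, triangle_swap m f' hm_meas hf'_meas t C2 C1 ht hC2 hC1]
      have h2 : ∫ u in (0:ℝ)..t, (m u * ∫ v in (0:ℝ)..(t-u), f' v)
          = ∫ u in (0:ℝ)..t, (m u * f (t - u) - m u * f 0) := by
        apply intervalIntegral.integral_congr
        intro u hu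
        rw [uIcc_of_le ht] at hu
        have hfa : f (t - u) = f 0 + ∫ v in (0:ℝ)..(t-u), f' v :=
          hf_ac (t - u) (by simp only [mem_Ici]; linarith [hu.2])
        have : (∫ v in (0:ℝ)..(t-u), f' v) = f (t - u) - f 0 := by linarith
        simp only [this, mul_sub]
      rw [h2, intervalIntegral.integral_sub j1 i2]
      have := hm_eq t ht
      rw [e2] at *
      linarith
    rw [hcongr, intervalIntegral.integral_add (i1.add i2) i3,
      intervalIntegral.integral_add i1 i2, e1, e2, e3]
    linarith [h00]
  -- survival function formula
  have hsurv : ∀ s : ℝ, 0 ≤ s → survival f s = 1 - ∫ x in (0:ℝ)..s, f x := by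
    intro s hs
    have hu : Ici (0:ℝ) = Icc 0 s ∪ Ioi s := by
      ext x
      simp only [mem_Ici, mem_union, mem_Icc, mem_Ioi]
      constructor
      · intro hx
        rcases le_or_gt x s with h | h
        · exact Or.inl ⟨hx, h⟩
        · exact Or.inr h
      · rintro (⟨h, _⟩ | h) <;> linarith
    have hdisj : Disjoint (Icc (0:ℝ) s) (Ioi s) := by
      rw [disjoint_left]
      intro x hx1 hx2
      exact absurd hx1.2 (not_le.2 hx2)
    have hint1 : IntegrableOn f (Icc 0 s) := hf_int.mono_set (fun x hx => hx.1)
    have hint2 : IntegrableOn f (Ioi s) :=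
      hf_int.mono_set (fun x hx => le_trans hs (le_of_lt hx))
    have hun := MeasureTheory.setIntegral_union hdisj measurableSet_Ioi hint1 hint2
    rw [← hu, hf_one] at hun
    have h2 : (∫ x in Icc (0:ℝ) s, f x) = ∫ x in (0:ℝ)..s, f x := by
      rw [integral_Icc_eq_integral_Ioc, ← intervalIntegral.integral_of_le hs]
    rw [h2] at hun
    simp only [survival]
    linarith
  -- the main identity
  have key3 : ∀ t : ℝ, 0 < t →
      (∫ x in (0:ℝ)..t, m' x * survival f (t - x)) = f t - f 0 * survival f t := by
    intro t ht0
    have ht : (0:ℝ) ≤ t := ht0.le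
    obtain ⟨Cm', hCm'0, hCm'⟩ := hm'bd t ht
    obtain ⟨Cf, hCf0, hCf⟩ := hfbd t ht
    obtain ⟨Cm, hCm0, hCm⟩ := hmbd t ht
    set K2 : ℝ → ℝ → ℝ := fun x y => if 0 < y ∧ y ≤ t - x then f y else 0 with hK2
    have hK2meas : Measurable (Function.uncurry K2) := by
      apply Measurable.ite
      · exact (measurableSet_lt measurable_const measurable_snd).inter
          (measurableSet_le measurable_snd (measurable_const.sub measurable_fst))
      · exact hf_meas.comp measurable_snd
      · exact measurable_const
    have hK2eq : ∀ x : ℝ, x ≤ t → (∫ y, K2 x y) = ∫ y in (0:ℝ)..(t - x), f y := by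
      intro x hx
      have h1 : (fun y => K2 x y) = (Ioc (0:ℝ) (t - x)).indicator f := by
        funext y
        simp only [hK2, indicator, mem_Ioc]
      rw [h1, MeasureTheory.integral_indicator measurableSet_Ioc,
        intervalIntegral.integral_of_le (by linarith : (0:ℝ) ≤ t - x)]
    have hg_meas : Measurable (fun x : ℝ => ∫ y, K2 x y) := by
      have h := MeasureTheory.StronglyMeasurable.integral_prod_right'
        (ν := (volume : Measure ℝ)) hK2meas.stronglyMeasurable
      exact h.measurable
    have hgbd : ∀ x : ℝ, 0 ≤ x → |∫ y, K2 x y| ≤ ∫ y in Ioc (0:ℝ) t, |f y| := by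
      intro x hx0
      have h1 : (fun y => K2 x y) = (Ioc (0:ℝ) (t - x)).indicator f := by
        funext y
        simp only [hK2, indicator, mem_Ioc]
      rw [h1, MeasureTheory.integral_indicator measurableSet_Ioc, ← Real.norm_eq_abs]
      refine le_trans (norm_integral_le_integral_norm f) ?_
      refine setIntegral_mono_set ((hf_int.mono_set ?_).norm) ?_ ?_
      · intro y hy
        exact hy.1.le
      · filter_upwards with y using norm_nonneg _
      · exact HasSubset.Subset.eventuallyLE (Ioc_subset_Ioc_right (by linarith))
    have hIf : (0:ℝ) ≤ ∫ y in Ioc (0:ℝ) t, |f y| :=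
      integral_nonneg (fun y => abs_nonneg _)
    -- integrability of the product piece
    have p1 : IntervalIntegrable (fun x => m' x * ∫ y, K2 x y) volume 0 t := by
      rw [intervalIntegrable_iff_integrableOn_Ioc_of_le ht]
      refine integrableOn_Ioc_of_bounded (C := Cm' * ∫ y in Ioc (0:ℝ) t, |f y|)
        ((hm'meas.mul hg_meas).aestronglyMeasurable.restrict) ?_
      intro x hx
      rw [abs_mul]
      exact mul_le_mul (hCm' x hx.2) (hgbd x hx.1.le) (abs_nonneg _) hCm'0
    have em' : ∫ x in (0:ℝ)..t, m' x = m t - m 0 := by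
      have := key2 t ht
      linarith
    have step1 : (∫ x in (0:ℝ)..t, m' x * survival f (t - x))
        = (∫ x in (0:ℝ)..t, m' x) - ∫ x in (0:ℝ)..t, m' x * ∫ y, K2 x y := by
      rw [← intervalIntegral.integral_sub (hm'int 0 t) p1]
      apply intervalIntegral.integral_congr
      intro x hx
      rw [uIcc_of_le ht] at hx
      have h1 : survival f (t - x) = 1 - ∫ v in (0:ℝ)..(t - x), f v :=
        hsurv (t - x) (by linarith [hx.2])
      simp only [h1, ← hK2eq x hx.2]
      ring
    -- the double integral, via corner swap
    have step2 : (∫ x in (0:ℝ)..t, m' x * ∫ y, K2 x y)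
        = ∫ y in (0:ℝ)..t, f y * ∫ v in (0:ℝ)..(t - y), m' v := by
      have h1 : (∫ x in (0:ℝ)..t, m' x * ∫ y, K2 x y)
          = ∫ x in (0:ℝ)..t, m' x * ∫ v in (0:ℝ)..(t - x), f v := by
        apply intervalIntegral.integral_congr
        intro x hx
        rw [uIcc_of_le ht] at hx
        simp only [hK2eq x hx.2]
      rw [h1]
      exact corner_swap m' f hm'meas hf_meas t Cm' Cf ht (fun x hx => hCm' x hx.2) hCf
    -- inner primitive of m'
    have r1 : IntervalIntegrable (fun y => f y * m (t - y)) volume 0 t := by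
      rw [intervalIntegrable_iff_integrableOn_Ioc_of_le ht]
      refine integrableOn_Ioc_of_bounded (C := Cf * Cm)
        ((hf_meas.mul (hm_meas.comp (measurable_const.sub measurable_id))).aestronglyMeasurable.restrict) ?_
      intro y hy
      rw [abs_mul]
      exact mul_le_mul (hCf y ⟨hy.1.le, hy.2⟩)
        (hCm (t - y) ⟨by linarith [hy.2], by linarith [hy.1]⟩) (abs_nonneg _) hCf0
    have r2 : IntervalIntegrable (fun y => f y * m 0) volume 0 t := by
      rw [intervalIntegrable_iff_integrableOn_Ioc_of_le ht]
      exact (hf_int.mono_set (fun y hy => hy.1.le)).mul_const _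
    have step3 : (∫ y in (0:ℝ)..t, f y * ∫ v in (0:ℝ)..(t - y), m' v)
        = (∫ y in (0:ℝ)..t, f y * m (t - y)) - (∫ y in (0:ℝ)..t, f y) * m 0 := by
      have h1 : (∫ y in (0:ℝ)..t, f y * ∫ v in (0:ℝ)..(t - y), m' v)
          = ∫ y in (0:ℝ)..t, (f y * m (t - y) - f y * m 0) := by
        apply intervalIntegral.integral_congr
        intro y hy
        rw [uIcc_of_le ht] at hy
        have h2 : m (t - y) = m 0 + ∫ v in (0:ℝ)..(t - y), m' v :=
          key2 (t - y) (by linarith [hy.2])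
        have h3 : (∫ v in (0:ℝ)..(t - y), m' v) = m (t - y) - m 0 := by linarith
        simp only [h3]
        ring
      rw [h1, intervalIntegral.integral_sub r1 r2, intervalIntegral.integral_mul_const]
    -- reflection
    have step4 : (∫ y in (0:ℝ)..t, f y * m (t - y)) = m t - f t := by
      have h1 : (∫ y in (0:ℝ)..t, f y * m (t - y))
          = ∫ y in (0:ℝ)..t, (fun x => m x * f (t - x)) (t - y) := by
        apply intervalIntegral.integral_congr
        intro y _
        simp only [sub_sub_cancel]
        ring
      rw [h1, intervalIntegral.integral_comp_sub_left (fun x => m x * f (t - x)) t,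
        sub_self, sub_zero]
      have := hm_eq t ht
      linarith
    have step5 : (∫ y in (0:ℝ)..t, f y) = 1 - survival f t := by
      have := hsurv t ht
      linarith
    rw [step1, em', step2, step3, step4, step5, h00]
    ring
  exact ⟨m', hm'int, fun t ht => key2 t ht, key3⟩
end

section
/- There exists an absolutely continuous probability distribution on [0,∞) with positive density f whose hazard rate r(t) = f(t)/F̄(t) is strictly increasing on some nondegenerate interval (so the distribution is not DFR), and yet whose renewal density m, i.e., the solution of m(t) = f(t) + ∫₀ᵗ m(x) f(t−x) dx for t ≥ 0, is decreasing on [0,∞), so that the renewal function M(t) = ∫₀ᵗ m(x) dx is concave. In particular, concavity of the renewal function does not imply that the inter-renewal distribution is DFR. -/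
open MeasureTheory Set

/- Auxiliary development: the explicit counterexample
`f t = e^{-6t} - 2 e^{-12t} + 18 e^{-18t}`, whose renewal density is
`m t = 72/5 + 9 e^{-9t} - (32/5) e^{-10t}`. -/

noncomputable def fEx (x : ℝ) : ℝ :=
  Real.exp (-6*x) - 2*Real.exp (-12*x) + 18*Real.exp (-18*x)

noncomputable def mEx (t : ℝ) : ℝ :=
  72/5 + 9*Real.exp (-9*t) - 32/5*Real.exp (-10*t)

lemma contf : Continuous fEx := by unfold fEx; fun_prop

lemma contm : Continuous mEx := by unfold mEx; fun_prop

lemma intExp {b : ℝ} (hb : 0 < b) (t : ℝ) :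
    ∫ x in Ioi t, Real.exp (-b*x) = Real.exp (-b*t) / b := by
  have hderiv : ∀ x ∈ Ici t, HasDerivAt (fun x => -Real.exp (-b*x)/b) (Real.exp (-b*x)) x := by
    intro x _
    have h := (((hasDerivAt_id x).const_mul (-b)).exp).neg.div_const b
    refine h.congr_deriv ?_
    simp only [id]
    field_simp
  have htend : Filter.Tendsto (fun x => -Real.exp (-b*x)/b) Filter.atTop (nhds 0) := by
    have h1 : Filter.Tendsto (fun x : ℝ => -b*x) Filter.atTop Filter.atBot :=
      Filter.tendsto_id.const_mul_atTop_of_neg (by linarith)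
    have := ((Real.tendsto_exp_atBot.comp h1).neg).div_const b
    simpa using this
  have := integral_Ioi_of_hasDerivAt_of_tendsto' hderiv (exp_neg_integrableOn_Ioi t hb) htend
  rw [this]; ring

lemma survival_fEx (t : ℝ) :
    survival fEx t = Real.exp (-6*t)/6 - Real.exp (-12*t)/6 + Real.exp (-18*t) := by
  have i6 : IntegrableOn (fun x => Real.exp (-6*x)) (Ioi t) :=
    exp_neg_integrableOn_Ioi t (by norm_num)
  have i12 : IntegrableOn (fun x => Real.exp (-12*x)) (Ioi t) :=
    exp_neg_integrableOn_Ioi t (by norm_num)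
  have i18 : IntegrableOn (fun x => Real.exp (-18*x)) (Ioi t) :=
    exp_neg_integrableOn_Ioi t (by norm_num)
  have hA : IntegrableOn (fun x => Real.exp (-6*x) - 2*Real.exp (-12*x)) (Ioi t) :=
    i6.sub (i12.const_mul 2)
  have hB : IntegrableOn (fun x => 18*Real.exp (-18*x)) (Ioi t) := i18.const_mul 18
  have h2 : IntegrableOn (fun x => 2*Real.exp (-12*x)) (Ioi t) := i12.const_mul 2
  unfold survival fEx
  rw [integral_add hA hB, integral_sub i6 h2, integral_const_mul, integral_const_mul,
    intExp (by norm_num : (0:ℝ) < 6), intExp (by norm_num : (0:ℝ) < 12),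
    intExp (by norm_num : (0:ℝ) < 18)]
  ring

lemma e12 (x : ℝ) : Real.exp (-12*x) = Real.exp (-6*x)^2 := by
  rw [show (-12)*x = ((2:ℕ):ℝ)*(-6*x) by push_cast; ring, Real.exp_nat_mul]

lemma e18 (x : ℝ) : Real.exp (-18*x) = Real.exp (-6*x)^3 := by
  rw [show (-18)*x = ((3:ℕ):ℝ)*(-6*x) by push_cast; ring, Real.exp_nat_mul]

lemma fEx_pos (x : ℝ) : 0 < fEx x := by
  unfold fEx
  rw [e12, e18]
  set u := Real.exp (-6*x) with hu
  have hu0 : 0 < u := Real.exp_pos _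
  nlinarith [mul_pos hu0 (show (0:ℝ) < 18*(u-1/18)^2 + 17/18 by positivity)]

lemma surv_pos (t : ℝ) : 0 < survival fEx t := by
  rw [survival_fEx, e12, e18]
  set u := Real.exp (-6*t) with hu
  have hu0 : 0 < u := Real.exp_pos _
  nlinarith [mul_pos hu0 (show (0:ℝ) < 6*(u-1/12)^2 + 23/24 by positivity)]

lemma exp_neg12_small : Real.exp (-12:ℝ) < 1/1000 := by
  have h1 : (2:ℝ) < Real.exp 1 := by
    have := Real.exp_one_gt_d9; linarith
  have h2 : (2:ℝ)^12 < Real.exp 1 ^ 12 := by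
    apply pow_lt_pow_left₀ h1 (by norm_num)
    norm_num
  have h3 : Real.exp 1 ^ 12 = Real.exp 12 := by
    rw [← Real.exp_nat_mul]; norm_num
  rw [show (-12:ℝ) = -(12:ℝ) by norm_num, Real.exp_neg]
  rw [inv_lt_comm₀ (by positivity) (by norm_num)]
  norm_num
  nlinarith

lemma haz_mono : StrictMonoOn (hazardRate fEx) (Icc (2:ℝ) 3) := by
  intro x hx y hy hxy
  have hSx := surv_pos x
  have hSy := surv_pos y
  unfold hazardRate
  rw [div_lt_div_iff₀ hSx hSy, survival_fEx, survival_fEx]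
  unfold fEx
  rw [e12 x, e18 x, e12 y, e18 y]
  set u := Real.exp (-6*x) with hu
  set v := Real.exp (-6*y) with hv
  have hu0 : 0 < u := Real.exp_pos _
  have hv0 : 0 < v := Real.exp_pos _
  have hvu : v < u := Real.exp_lt_exp.2 (by linarith)
  have hub : u ≤ Real.exp (-12:ℝ) := Real.exp_le_exp.2 (by nlinarith [hx.1])
  have hsmall : u < 1/1000 := lt_of_le_of_lt hub exp_neg12_small
  have key : (v - 2*v^2 + 18*v^3) * (u/6 - u^2/6 + u^3) -
      (u - 2*u^2 + 18*u^3) * (v/6 - v^2/6 + v^3)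
      = u*v*(u-v)*(1 - 12*(u+v) + 6*(u*v))/6 := by ring
  nlinarith [mul_pos (mul_pos (mul_pos hu0 hv0) (sub_pos.2 hvu))
    (show (0:ℝ) < 1 - 12*(u+v) + 6*(u*v) by nlinarith [mul_pos hu0 hv0])]

lemma fEx_integrableOn : IntegrableOn fEx (Ici (0:ℝ)) := by
  rw [integrableOn_Ici_iff_integrableOn_Ioi]
  have i6 : IntegrableOn (fun x => Real.exp (-6*x)) (Ioi (0:ℝ)) :=
    exp_neg_integrableOn_Ioi 0 (by norm_num)
  have i12 : IntegrableOn (fun x => 2*Real.exp (-12*x)) (Ioi (0:ℝ)) :=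
    (exp_neg_integrableOn_Ioi 0 (by norm_num)).const_mul 2
  have i18 : IntegrableOn (fun x => 18*Real.exp (-18*x)) (Ioi (0:ℝ)) :=
    (exp_neg_integrableOn_Ioi 0 (by norm_num)).const_mul 18
  exact (i6.sub i12).add i18

lemma fEx_total : (∫ x in Set.Ici (0:ℝ), fEx x) = 1 := by
  rw [integral_Ici_eq_integral_Ioi]
  have i6 : IntegrableOn (fun x => Real.exp (-6*x)) (Ioi (0:ℝ)) :=
    exp_neg_integrableOn_Ioi 0 (by norm_num)
  have i12 : IntegrableOn (fun x => Real.exp (-12*x)) (Ioi (0:ℝ)) :=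
    exp_neg_integrableOn_Ioi 0 (by norm_num)
  have i18 : IntegrableOn (fun x => Real.exp (-18*x)) (Ioi (0:ℝ)) :=
    exp_neg_integrableOn_Ioi 0 (by norm_num)
  have hA : IntegrableOn (fun x => Real.exp (-6*x) - 2*Real.exp (-12*x)) (Ioi (0:ℝ)) :=
    i6.sub (i12.const_mul 2)
  have hB : IntegrableOn (fun x => 18*Real.exp (-18*x)) (Ioi (0:ℝ)) := i18.const_mul 18
  have h2 : IntegrableOn (fun x => 2*Real.exp (-12*x)) (Ioi (0:ℝ)) := i12.const_mul 2
  unfold fEx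
  rw [integral_add hA hB, integral_sub i6 h2, integral_const_mul, integral_const_mul,
    intExp (by norm_num : (0:ℝ) < 6), intExp (by norm_num : (0:ℝ) < 12),
    intExp (by norm_num : (0:ℝ) < 18)]
  norm_num

lemma epow (n : ℕ) : Real.exp ((-6:ℝ)*n) = Real.exp (-6:ℝ)^n := by
  rw [show (-6:ℝ)*n = (n:ℝ)*(-6:ℝ) by ring, Real.exp_nat_mul]

lemma exp_neg6_small : Real.exp (-6:ℝ) < 1/100 := by
  have h1 : (2.7182818283:ℝ) < Real.exp 1 := Real.exp_one_gt_d9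
  have h2 : (2.7182818283:ℝ)^6 ≤ Real.exp 1 ^ 6 := by
    apply pow_le_pow_left₀ (by norm_num) h1.le
  have h3 : Real.exp 1 ^ 6 = Real.exp 6 := by
    rw [← Real.exp_nat_mul]; norm_num
  rw [show (-6:ℝ) = -(6:ℝ) by norm_num, Real.exp_neg,
    inv_lt_comm₀ (by positivity) (by norm_num)]
  nlinarith

lemma sq_gt : survival fEx 2 * survival fEx 4 < (survival fEx 3)^2 := by
  rw [survival_fEx, survival_fEx, survival_fEx]
  have h12 : Real.exp (-6*(2:ℝ)) = Real.exp (-6:ℝ)^2 := by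
    rw [show (-6*(2:ℝ)) = (-6:ℝ)*((2:ℕ):ℝ) by norm_num, epow]
  have h24 : Real.exp (-12*(2:ℝ)) = Real.exp (-6:ℝ)^4 := by
    rw [show (-12*(2:ℝ)) = (-6:ℝ)*((4:ℕ):ℝ) by norm_num, epow]
  have h36 : Real.exp (-18*(2:ℝ)) = Real.exp (-6:ℝ)^6 := by
    rw [show (-18*(2:ℝ)) = (-6:ℝ)*((6:ℕ):ℝ) by norm_num, epow]
  have h18 : Real.exp (-6*(3:ℝ)) = Real.exp (-6:ℝ)^3 := by
    rw [show (-6*(3:ℝ)) = (-6:ℝ)*((3:ℕ):ℝ) by norm_num, epow]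
  have h36' : Real.exp (-12*(3:ℝ)) = Real.exp (-6:ℝ)^6 := by
    rw [show (-12*(3:ℝ)) = (-6:ℝ)*((6:ℕ):ℝ) by norm_num, epow]
  have h54 : Real.exp (-18*(3:ℝ)) = Real.exp (-6:ℝ)^9 := by
    rw [show (-18*(3:ℝ)) = (-6:ℝ)*((9:ℕ):ℝ) by norm_num, epow]
  have h24' : Real.exp (-6*(4:ℝ)) = Real.exp (-6:ℝ)^4 := by
    rw [show (-6*(4:ℝ)) = (-6:ℝ)*((4:ℕ):ℝ) by norm_num, epow]
  have h48 : Real.exp (-12*(4:ℝ)) = Real.exp (-6:ℝ)^8 := by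
    rw [show (-12*(4:ℝ)) = (-6:ℝ)*((8:ℕ):ℝ) by norm_num, epow]
  have h72 : Real.exp (-18*(4:ℝ)) = Real.exp (-6:ℝ)^12 := by
    rw [show (-18*(4:ℝ)) = (-6:ℝ)*((12:ℕ):ℝ) by norm_num, epow]
  rw [h12, h24, h36, h18, h36', h54, h24', h48, h72]
  set q := Real.exp (-6:ℝ) with hqdef
  have hq0 : 0 < q := Real.exp_pos _
  have hq : q < 1/100 := exp_neg6_small
  have key : (q^3/6 - q^6/6 + q^9)^2 - (q^2/6 - q^4/6 + q^6)*(q^4/6 - q^8/6 + q^12)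
      = q^6*((q^2 - 2*q^3 - 5*q^4) + 12*(q^6 - q^9) + 6*q^10)/36 := by ring
  have t1 : 0 < q^2 - 2*q^3 - 5*q^4 := by nlinarith [pow_pos hq0 2, pow_pos hq0 3]
  have t2 : q^9 ≤ q^6 := pow_le_pow_of_le_one hq0.le (by linarith) (by norm_num)
  nlinarith [pow_pos hq0 6, pow_pos hq0 10, mul_pos (pow_pos hq0 6) t1]

lemma not_convex : ¬ ConvexOn ℝ (Set.Ici 0) (fun t => Real.log (survival fEx t)) := by
  intro h
  have h2 := h.2 (show (2:ℝ) ∈ Ici (0:ℝ) by norm_num) (show (4:ℝ) ∈ Ici (0:ℝ) by norm_num)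
    (by norm_num : (0:ℝ) ≤ 1/2) (by norm_num : (0:ℝ) ≤ 1/2) (by norm_num)
  simp only [smul_eq_mul] at h2
  rw [show (1/2:ℝ)*2 + (1/2:ℝ)*4 = 3 by norm_num] at h2
  have hlt : Real.log (survival fEx 2) + Real.log (survival fEx 4)
      < 2 * Real.log (survival fEx 3) := by
    have := Real.log_lt_log (mul_pos (surv_pos 2) (surv_pos 4)) sq_gt
    rw [Real.log_mul (surv_pos 2).ne' (surv_pos 4).ne'] at this
    rw [show (survival fEx 3)^2 = survival fEx 3 * survival fEx 3 by ring,
      Real.log_mul (surv_pos 3).ne' (surv_pos 3).ne'] at this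
    linarith
  linarith

lemma renewal_int (t : ℝ) :
    ∫ x in (0:ℝ)..t, mEx x * fEx (t-x) = mEx t - fEx t := by
  have hH : ∀ x : ℝ, HasDerivAt (fun y : ℝ =>
      (12/5) * Real.exp (-6*(t-y)) - (12/5) * Real.exp (-12*(t-y)) +
      (72/5) * Real.exp (-18*(t-y)) +
      (Real.exp (-9*y) * ((-3) * Real.exp (-6*(t-y)) - 6 * Real.exp (-12*(t-y)) +
        18 * Real.exp (-18*(t-y))) +
       Real.exp (-10*y) * ((8/5) * Real.exp (-6*(t-y)) + (32/5) * Real.exp (-12*(t-y)) -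
        (72/5) * Real.exp (-18*(t-y)))))
      (mEx x * fEx (t-x)) x := by
    intro x
    have b6 : HasDerivAt (fun y : ℝ => Real.exp (-6*(t-y))) (6*Real.exp (-6*(t-x))) x := by
      have h : HasDerivAt (fun y : ℝ => -6*(t-y)) (6:ℝ) x := by
        simpa using ((hasDerivAt_const x t).sub (hasDerivAt_id x)).const_mul (-6:ℝ)
      simpa [mul_comm] using h.exp
    have b12 : HasDerivAt (fun y : ℝ => Real.exp (-12*(t-y))) (12*Real.exp (-12*(t-x))) x := by
      have h : HasDerivAt (fun y : ℝ => -12*(t-y)) (12:ℝ) x := by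
        simpa using ((hasDerivAt_const x t).sub (hasDerivAt_id x)).const_mul (-12:ℝ)
      simpa [mul_comm] using h.exp
    have b18 : HasDerivAt (fun y : ℝ => Real.exp (-18*(t-y))) (18*Real.exp (-18*(t-x))) x := by
      have h : HasDerivAt (fun y : ℝ => -18*(t-y)) (18:ℝ) x := by
        simpa using ((hasDerivAt_const x t).sub (hasDerivAt_id x)).const_mul (-18:ℝ)
      simpa [mul_comm] using h.exp
    have a9 : HasDerivAt (fun y : ℝ => Real.exp (-9*y)) (-9*Real.exp (-9*x)) x := by
      have h : HasDerivAt (fun y : ℝ => -9*y) (-9:ℝ) x := by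
        simpa using (hasDerivAt_id x).const_mul (-9:ℝ)
      simpa [mul_comm] using h.exp
    have a10 : HasDerivAt (fun y : ℝ => Real.exp (-10*y)) (-10*Real.exp (-10*x)) x := by
      have h : HasDerivAt (fun y : ℝ => -10*y) (-10:ℝ) x := by
        simpa using (hasDerivAt_id x).const_mul (-10:ℝ)
      simpa [mul_comm] using h.exp
    have h := ((((b6.const_mul ((12:ℝ)/5)).sub (b12.const_mul ((12:ℝ)/5))).add
        (b18.const_mul ((72:ℝ)/5))).add
      ((a9.mul (((b6.const_mul ((-3):ℝ)).sub (b12.const_mul (6:ℝ))).add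
          (b18.const_mul (18:ℝ)))).add
       (a10.mul (((b6.const_mul ((8:ℝ)/5)).add (b12.const_mul ((32:ℝ)/5))).sub
          (b18.const_mul ((72:ℝ)/5))))))
    exact h.congr_deriv (by unfold mEx fEx; simp only [Pi.add_apply, Pi.sub_apply]; ring)
  have hint : IntervalIntegrable (fun x => mEx x * fEx (t - x)) volume 0 t :=
    (contm.mul (contf.comp (by fun_prop))).intervalIntegrable 0 t
  have key := intervalIntegral.integral_eq_sub_of_hasDerivAt (fun x _ => hH x) hint
  rw [key]
  simp only [sub_self, mul_zero, Real.exp_zero, sub_zero, mul_one, one_mul]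
  unfold mEx fEx
  ring

lemma mEx_hasDeriv (x : ℝ) :
    HasDerivAt mEx (-81*Real.exp (-9*x) + 64*Real.exp (-10*x)) x := by
  have a9 : HasDerivAt (fun y : ℝ => Real.exp (-9*y)) (-9*Real.exp (-9*x)) x := by
    have h : HasDerivAt (fun y : ℝ => -9*y) (-9:ℝ) x := by
      simpa using (hasDerivAt_id x).const_mul (-9:ℝ)
    simpa [mul_comm] using h.exp
  have a10 : HasDerivAt (fun y : ℝ => Real.exp (-10*y)) (-10*Real.exp (-10*x)) x := by
    have h : HasDerivAt (fun y : ℝ => -10*y) (-10:ℝ) x := by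
      simpa using (hasDerivAt_id x).const_mul (-10:ℝ)
    simpa [mul_comm] using h.exp
  have h := ((hasDerivAt_const x ((72:ℝ)/5)).add (a9.const_mul (9:ℝ))).sub
    (a10.const_mul ((32:ℝ)/5))
  exact h.congr_deriv (by ring)

lemma mEx_anti : AntitoneOn mEx (Ici (0:ℝ)) := by
  apply antitoneOn_of_deriv_nonpos (convex_Ici 0) contm.continuousOn
  · exact fun x _ => (mEx_hasDeriv x).differentiableAt.differentiableWithinAt
  · intro x hx
    rw [interior_Ici] at hx
    rw [(mEx_hasDeriv x).deriv]
    have h : Real.exp (-10*x) ≤ Real.exp (-9*x) :=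
      Real.exp_le_exp.2 (by nlinarith [le_of_lt (mem_Ioi.mp hx)])
    nlinarith [Real.exp_pos (-9*x)]

lemma M_hasDeriv (b : ℝ) :
    HasDerivAt (fun t => ∫ x in (0:ℝ)..t, mEx x) (mEx b) b :=
  intervalIntegral.integral_hasDerivAt_right (contm.intervalIntegrable 0 b)
    contm.aestronglyMeasurable.stronglyMeasurableAtFilter contm.continuousAt

lemma M_concave : ConcaveOn ℝ (Set.Ici 0) (fun t => ∫ x in (0:ℝ)..t, mEx x) := by
  apply AntitoneOn.concaveOn_of_deriv (convex_Ici 0)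
  · exact (Continuous.continuousOn (by
      have : Differentiable ℝ (fun t => ∫ x in (0:ℝ)..t, mEx x) :=
        fun b => (M_hasDeriv b).differentiableAt
      exact this.continuous))
  · exact fun x _ => (M_hasDeriv x).differentiableAt.differentiableWithinAt
  · intro a ha b hb hab
    rw [interior_Ici] at ha hb
    rw [(M_hasDeriv a).deriv, (M_hasDeriv b).deriv]
    exact mEx_anti (mem_Ici.2 (le_of_lt (mem_Ioi.1 ha))) (mem_Ici.2 (le_of_lt (mem_Ioi.1 hb))) hab

/-- **Main conclusion of the paper: Brown's conjecture is false.**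
There is an absolutely continuous probability distribution on `[0, ∞)` with positive
density `f` whose hazard rate `r = f / F̄` is strictly increasing on some nondegenerate
interval — in particular the distribution is not DFR, i.e. its survival function is not
log-convex on `[0, ∞)` — and yet whose renewal density `m` (the solution of
`m t = f t + ∫ x in 0..t, m x * f (t - x)` for `t ≥ 0`) is decreasing on `[0, ∞)`, so
that the renewal function `M t = ∫ x in 0..t, m x` is concave on `[0, ∞)`. -/
theorem concave_renewal_function_not_DFR :
    ∃ (f m : ℝ → ℝ) (a b : ℝ),
      (∀ x ∈ Set.Ici (0 : ℝ), 0 < f x) ∧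
      ContinuousOn f (Set.Ici 0) ∧
      IntegrableOn f (Set.Ici 0) ∧
      (∫ x in Set.Ici (0 : ℝ), f x) = 1 ∧
      0 ≤ a ∧ a < b ∧
      StrictMonoOn (hazardRate f) (Set.Icc a b) ∧
      ¬ ConvexOn ℝ (Set.Ici 0) (fun t => Real.log (survival f t)) ∧
      LocallyIntegrableOn m (Set.Ici 0) ∧
      (∀ t ∈ Set.Ici (0 : ℝ), m t = f t + ∫ x in (0 : ℝ)..t, m x * f (t - x)) ∧
      AntitoneOn m (Set.Ici 0) ∧
      ConcaveOn ℝ (Set.Ici 0) (fun t => ∫ x in (0 : ℝ)..t, m x) := by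
  refine ⟨fEx, mEx, 2, 3, fun x _ => fEx_pos x, contf.continuousOn, fEx_integrableOn,
    fEx_total, by norm_num, by norm_num, haz_mono, not_convex,
    (contm.locallyIntegrable).locallyIntegrableOn _, fun t _ => ?_, mEx_anti, M_concave⟩
  rw [renewal_int t]
  ring
end

section
/- Let f be a positive probability density function on [0,∞), continuous on [0,∞) and continuously differentiable on [t₂, t₃] for some 0 < t₂ < t₃ (one-sided derivatives at the endpoints), with hazard rate r(t) = f(t)/F̄(t). Let m be the renewal density, i.e., the solution of m(t) = f(t) + ∫₀ᵗ m(x) f(t−x) dx for t ≥ 0, and assume m is differentiable with m′(x) < 0 for all x ∈ (0, t₂). If r′(t) ≤ r(t)² − f(0) r(t) for all t ∈ (t₂, t₃), then m′(t) < 0 for all t ∈ (t₂, t₃); in particular, m is strictly decreasing on [t₂, t₃]. -/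
open MeasureTheory Set

lemma aux_surv_eq (f : ℝ → ℝ) (hf_int : IntegrableOn f (Set.Ici 0))
    (hf_one : (∫ x in Set.Ici (0 : ℝ), f x) = 1) {s : ℝ} (hs : 0 ≤ s) :
    survival f s = 1 - ∫ x in (0:ℝ)..s, f x := by
  have hdisj : Disjoint (Ico (0:ℝ) s) (Ici s) := by
    rw [Set.disjoint_left]; intro x hx hx'; exact absurd hx.2 (not_lt.mpr hx')
  have hsplit : (∫ x in Set.Ici (0:ℝ), f x)
      = (∫ x in Ico (0:ℝ) s, f x) + ∫ x in Ici s, f x := by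
    rw [← setIntegral_union hdisj measurableSet_Ici
      (hf_int.mono_set (fun x hx => hx.1)) (hf_int.mono_set (fun x hx => hs.trans hx)),
      Ico_union_Ici_eq_Ici hs]
  have h1 : (∫ x in Ici s, f x) = ∫ x in Ioi s, f x := integral_Ici_eq_integral_Ioi
  have h2 : (∫ x in Ico (0:ℝ) s, f x) = ∫ x in (0:ℝ)..s, f x := by
    rw [intervalIntegral.integral_of_le hs, integral_Ico_eq_integral_Ioo,
      integral_Ioc_eq_integral_Ioo]
  rw [survival, ← h1]
  rw [hf_one, h2] at hsplit
  linarith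

lemma aux_surv_deriv (f : ℝ → ℝ) (hf_meas : Measurable f)
    (hf_cont : ContinuousOn f (Set.Ici 0)) (hf_int : IntegrableOn f (Set.Ici 0))
    (hf_one : (∫ x in Set.Ici (0 : ℝ), f x) = 1) {t : ℝ} (ht : 0 < t) :
    HasDerivAt (survival f) (-(f t)) t := by
  have hii : IntervalIntegrable f volume 0 t := by
    rw [intervalIntegrable_iff_integrableOn_Ioc_of_le ht.le]
    exact hf_int.mono_set (fun x hx => hx.1.le)
  have hca : ContinuousAt f t :=
    hf_cont.continuousAt (Filter.mem_of_superset (Ioi_mem_nhds ht) Ioi_subset_Ici_self)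
  have hF : HasDerivAt (fun u => ∫ x in (0:ℝ)..u, f x) (f t) t :=
    intervalIntegral.integral_hasDerivAt_right hii
      (hf_meas.stronglyMeasurable.stronglyMeasurableAtFilter) hca
  have hG : HasDerivAt (fun u => 1 - ∫ x in (0:ℝ)..u, f x) (-(f t)) t := by
    have h := (hasDerivAt_const t (1:ℝ)).sub hF
    rw [zero_sub] at h
    exact h
  refine hG.congr_of_eventuallyEq ?_
  filter_upwards [Ioi_mem_nhds ht] with s hs
  exact aux_surv_eq f hf_int hf_one (le_of_lt hs)

lemma aux_surv_pos (f : ℝ → ℝ) (hf_meas : Measurable f)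
    (hf_pos : ∀ x ∈ Set.Ici (0 : ℝ), 0 < f x)
    (hf_cont : ContinuousOn f (Set.Ici 0)) (hf_int : IntegrableOn f (Set.Ici 0))
    {t : ℝ} (ht : 0 ≤ t) : 0 < survival f t := by
  have hsub : Ioi t ⊆ Ici (0:ℝ) := fun x hx => le_of_lt (lt_of_le_of_lt ht hx)
  have hdisj : Disjoint (Ioc t (t+1)) (Ioi (t+1)) := by
    rw [Set.disjoint_left]; intro x hx hx'; exact absurd hx.2 (not_le.mpr hx')
  have hsplit : survival f t
      = (∫ x in Ioc t (t+1), f x) + ∫ x in Ioi (t+1), f x := by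
    rw [survival, ← setIntegral_union hdisj measurableSet_Ioi
      (hf_int.mono_set (fun x hx => hsub (hx.1 : t < x)))
      (hf_int.mono_set (fun x hx => hsub ((lt_add_of_pos_right t one_pos).trans hx))),
      Ioc_union_Ioi_eq_Ioi (le_of_lt (lt_add_of_pos_right t one_pos))]
  have h1 : (0:ℝ) < ∫ x in Ioc t (t+1), f x := by
    rw [← intervalIntegral.integral_of_le (le_of_lt (lt_add_of_pos_right t one_pos))]
    refine intervalIntegral.intervalIntegral_pos_of_pos_on ?_ ?_ (lt_add_of_pos_right t one_pos)
    · rw [intervalIntegrable_iff_integrableOn_Ioc_of_le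
        (le_of_lt (lt_add_of_pos_right t one_pos))]
      exact hf_int.mono_set (fun x hx => hsub hx.1)
    · exact fun x hx => hf_pos x (le_of_lt (lt_of_le_of_lt ht hx.1))
  have h2 : (0:ℝ) ≤ ∫ x in Ioi (t+1), f x :=
    setIntegral_nonneg measurableSet_Ioi
      (fun x hx => le_of_lt (hf_pos x (hsub ((lt_add_of_pos_right t one_pos).trans hx))))
  linarith

lemma aux_A (t₂ t₃ : ℝ) (ht₂ : 0 < t₂) (f : ℝ → ℝ) (g : ℝ → ℝ)
    (hf_meas : Measurable f)
    (hf_pos : ∀ x ∈ Set.Ici (0 : ℝ), 0 < f x)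
    (hf_cont : ContinuousOn f (Set.Ici 0))
    (hf_int : IntegrableOn f (Set.Ici 0))
    (hf_one : (∫ x in Set.Ici (0 : ℝ), f x) = 1)
    (hg_deriv : ∀ t ∈ Set.Icc t₂ t₃, HasDerivWithinAt f (g t) (Set.Icc t₂ t₃) t)
    (hr : ∀ t ∈ Set.Ioo t₂ t₃,
      deriv (hazardRate f) t ≤ (hazardRate f t) ^ 2 - f 0 * hazardRate f t)
    {t : ℝ} (htm : t ∈ Set.Ioo t₂ t₃) : g t + f 0 * f t ≤ 0 := by
  have ht0 : 0 < t := ht₂.trans htm.1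
  have hS : HasDerivAt (survival f) (-(f t)) t :=
    aux_surv_deriv f hf_meas hf_cont hf_int hf_one ht0
  have hSpos : 0 < survival f t :=
    aux_surv_pos f hf_meas hf_pos hf_cont hf_int ht0.le
  have hft : HasDerivAt f (g t) t :=
    (hg_deriv t (Ioo_subset_Icc_self htm)).hasDerivAt (Icc_mem_nhds htm.1 htm.2)
  have hrd : HasDerivAt (hazardRate f)
      ((g t * survival f t - f t * (-(f t))) / (survival f t) ^ 2) t := by
    exact hft.div hS (ne_of_gt hSpos)
  have hd : deriv (hazardRate f) t
      = (g t * survival f t - f t * (-(f t))) / (survival f t) ^ 2 := hrd.deriv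
  have hrt := hr t htm
  rw [hd] at hrt
  have hhz : hazardRate f t = f t / survival f t := rfl
  rw [hhz] at hrt
  set S := survival f t with hSdef
  have hS2 : (0:ℝ) < S ^ 2 := pow_pos hSpos 2
  rw [div_pow, div_le_iff₀ hS2] at hrt
  have hexp : (f t ^ 2 / S ^ 2 - f 0 * (f t / S)) * S ^ 2
      = f t ^ 2 - f 0 * f t * S := by
    field_simp
  rw [hexp] at hrt
  nlinarith [hSpos]

set_option maxHeartbeats 2000000 in
/-- **Second step in the proof of Proposition 1 (decrease on `[t₂, t₃]`).**
Let `f` be a positive probability density on `[0, ∞)`, continuous on `[0, ∞)` and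
continuously differentiable on `[t₂, t₃]` (`0 < t₂ < t₃`, one-sided derivatives at the
endpoints), with hazard rate `r = f / F̄`.  Let `m` be the renewal density, i.e. the
solution of `m t = f t + ∫ x in 0..t, m x * f (t - x)` for `t ≥ 0`; assume `m` is
differentiable with `m' x < 0` for all `x ∈ (0, t₂)`.  If
`r' t ≤ r t ^ 2 - f 0 * r t` for all `t ∈ (t₂, t₃)`, then `m' t < 0` for all
`t ∈ (t₂, t₃)`; in particular `m` is strictly decreasing on `[t₂, t₃]`. -/
theorem renewal_density_strict_decrease_on_middle_interval
    (t₂ t₃ : ℝ) (ht₂ : 0 < t₂) (ht₂₃ : t₂ < t₃)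
    (f m : ℝ → ℝ)
    (hf_meas : Measurable f)
    (hf_pos : ∀ x ∈ Set.Ici (0 : ℝ), 0 < f x)
    (hf_cont : ContinuousOn f (Set.Ici 0))
    (hf_int : IntegrableOn f (Set.Ici 0))
    (hf_one : (∫ x in Set.Ici (0 : ℝ), f x) = 1)
    (hf_c1 : ∃ g : ℝ → ℝ, ContinuousOn g (Set.Icc t₂ t₃) ∧
      ∀ t ∈ Set.Icc t₂ t₃, HasDerivWithinAt f (g t) (Set.Icc t₂ t₃) t)
    (hm_loc : LocallyIntegrableOn m (Set.Ici 0))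
    (hm_eq : ∀ t ∈ Set.Ici (0 : ℝ), m t = f t + ∫ x in (0 : ℝ)..t, m x * f (t - x))
    (hm_diff : ∀ x : ℝ, 0 < x → DifferentiableAt ℝ m x)
    (hm'_neg : ∀ x ∈ Set.Ioo 0 t₂, deriv m x < 0)
    (hr : ∀ t ∈ Set.Ioo t₂ t₃,
      deriv (hazardRate f) t ≤ (hazardRate f t) ^ 2 - f 0 * hazardRate f t) :
    (∀ t ∈ Set.Ioo t₂ t₃, deriv m t < 0) ∧ StrictAntiOn m (Set.Icc t₂ t₃) := by
  obtain ⟨g, hg_cont, hg_deriv⟩ := hf_c1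
  -- the key consequence of the hazard rate condition, extended to the closed interval
  have hA : ∀ s ∈ Set.Icc t₂ t₃, g s + f 0 * f s ≤ 0 := by
    intro s hs
    have hφc : ContinuousWithinAt (fun u => g u + f 0 * f u) (Set.Ioo t₂ t₃) s := by
      refine ContinuousWithinAt.mono ?_ Ioo_subset_Icc_self
      exact ((hg_cont s hs).add (continuousWithinAt_const.mul
        ((hf_cont.mono (fun y hy => le_trans ht₂.le hy.1)) s hs)))
    have hcl : s ∈ closure (Set.Ioo t₂ t₃) := by
      rw [closure_Ioo (ne_of_lt ht₂₃)]; exact hs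
    have hnb : (nhdsWithin s (Set.Ioo t₂ t₃)).NeBot := mem_closure_iff_nhdsWithin_neBot.mp hcl
    refine le_of_tendsto hφc ?_
    filter_upwards [self_mem_nhdsWithin] with t htm
    exact aux_A t₂ t₃ ht₂ f g hf_meas hf_pos hf_cont hf_int hf_one hg_deriv hr htm
  -- value at `0`
  have hm0 : m 0 = f 0 := by simpa using hm_eq 0 (by simp)
  -- `m` is continuous on `[0, ∞)`
  have hmc : ContinuousOn m (Set.Ici 0) := by
    intro x hx
    rcases lt_or_eq_of_le (Set.mem_Ici.mp hx) with h | h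
    · exact (hm_diff x h).continuousAt.continuousWithinAt
    · subst h
      obtain ⟨Mf, hMf⟩ := IsCompact.exists_bound_of_continuousOn isCompact_Icc
        (hf_cont.mono (fun y (hy : y ∈ Set.Icc (0:ℝ) 1) => hy.1))
      have hmint : IntegrableOn m (Set.Icc (0:ℝ) 1) :=
        hm_loc.integrableOn_compact_subset (fun y hy => hy.1) isCompact_Icc
      have hGc : ContinuousOn (fun s => ∫ x in (0:ℝ)..s, |m x|) (Set.Icc (0:ℝ) 1) := by
        have h1 : IntegrableOn (fun x => |m x|) (Set.uIcc (0:ℝ) 1) := by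
          rw [uIcc_of_le (zero_le_one : (0:ℝ) ≤ 1)]; exact hmint.abs
        have := intervalIntegral.continuousOn_primitive_interval (μ := volume) h1
        rwa [uIcc_of_le (zero_le_one : (0:ℝ) ≤ 1)] at this
      have hGt : Filter.Tendsto (fun s => ∫ x in (0:ℝ)..s, |m x|)
          (nhdsWithin 0 (Set.Ici 0)) (nhds 0) := by
        have h0 : (∫ x in (0:ℝ)..(0:ℝ), |m x|) = 0 := intervalIntegral.integral_same
        have h1 := hGc 0 ⟨le_rfl, zero_le_one⟩
        rw [ContinuousWithinAt, h0] at h1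
        rwa [← nhdsWithin_Icc_eq_nhdsGE (zero_lt_one : (0:ℝ) < 1)]
      have hbound : ∀ s ∈ Set.Icc (0:ℝ) 1,
          ‖∫ x in (0:ℝ)..s, m x * f (s - x)‖ ≤ Mf * ∫ x in (0:ℝ)..s, |m x| := by
        intro s hs
        have hci : ContinuousOn (fun x => f (s - x)) (Set.Icc 0 s) := by
          refine hf_cont.comp (Continuous.continuousOn (by fun_prop)) ?_
          intro y hy; simp only [Set.mem_Ici, sub_nonneg]; exact hy.2
        have hprod : IntegrableOn (fun x => m x * f (s - x)) (Set.Icc 0 s) :=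
          (hmint.mono_set (Set.Icc_subset_Icc le_rfl hs.2)).mul_continuousOn hci isCompact_Icc
        have hii1 : IntervalIntegrable (fun x => m x * f (s - x)) volume 0 s := by
          rw [intervalIntegrable_iff_integrableOn_Ioc_of_le hs.1]
          exact hprod.mono_set Ioc_subset_Icc_self
        have hii2 : IntervalIntegrable (fun x => |m x| * Mf) volume 0 s := by
          rw [intervalIntegrable_iff_integrableOn_Ioc_of_le hs.1]
          have h4 : IntegrableOn (fun x => |m x| * Mf) (Set.Icc 0 s) :=
            (hmint.mono_set (Set.Icc_subset_Icc le_rfl hs.2)).abs.mul_const Mf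
          exact h4.mono_set Ioc_subset_Icc_self
        calc ‖∫ x in (0:ℝ)..s, m x * f (s - x)‖
            ≤ ∫ x in (0:ℝ)..s, ‖m x * f (s - x)‖ :=
              intervalIntegral.norm_integral_le_integral_norm hs.1
          _ ≤ ∫ x in (0:ℝ)..s, |m x| * Mf := by
              refine intervalIntegral.integral_mono_on hs.1 hii1.norm hii2 ?_
              intro x hxm
              have h1 : ‖m x * f (s - x)‖ = |m x| * |f (s - x)| := abs_mul _ _
              rw [h1]
              refine mul_le_mul_of_nonneg_left ?_ (abs_nonneg _)
              calc |f (s - x)| = ‖f (s - x)‖ := rfl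
                _ ≤ Mf := by
                    refine hMf _ ⟨by simp only [sub_nonneg]; exact hxm.2, ?_⟩
                    have h2 := hxm.1; have h3 := hs.2; linarith
          _ = Mf * ∫ x in (0:ℝ)..s, |m x| := by
              rw [intervalIntegral.integral_mul_const, mul_comm]
      have hsq : Filter.Tendsto (fun s => ∫ x in (0:ℝ)..s, m x * f (s - x))
          (nhdsWithin 0 (Set.Ici 0)) (nhds 0) := by
        refine squeeze_zero_norm' (a := fun s => Mf * ∫ x in (0:ℝ)..s, |m x|) ?_ ?_
        · have hmem : Set.Icc (0:ℝ) 1 ∈ nhdsWithin 0 (Set.Ici 0) := by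
            rw [← nhdsWithin_Icc_eq_nhdsGE (zero_lt_one : (0:ℝ) < 1)]
            exact self_mem_nhdsWithin
          filter_upwards [hmem] with s hs using hbound s hs
        · have := hGt.const_mul Mf
          rwa [mul_zero] at this
      have htot : Filter.Tendsto (fun s => f s + ∫ x in (0:ℝ)..s, m x * f (s - x))
          (nhdsWithin 0 (Set.Ici 0)) (nhds (f 0 + 0)) :=
        Filter.Tendsto.add (hf_cont 0 (by simp)) hsq
      have heq : Filter.Tendsto m (nhdsWithin 0 (Set.Ici 0)) (nhds (f 0 + 0)) := by
        refine htot.congr' ?_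
        filter_upwards [self_mem_nhdsWithin] with s hs
        exact (hm_eq s hs).symm
      rw [ContinuousWithinAt, hm0]
      simpa using heq
  -- renewal equation in convolution-flipped form
  have hconv : ∀ t : ℝ, 0 ≤ t → m t = f t + ∫ x in (0:ℝ)..t, m (t - x) * f x := by
    intro t ht
    have h1 := intervalIntegral.integral_comp_sub_left (a := 0) (b := t)
      (fun u => m u * f (t - u)) t
    simp only [sub_sub_cancel, sub_zero, sub_self] at h1
    rw [hm_eq t (mem_Ici.mpr ht), h1]
  -- interval integrability helpers
  have hmf_ii : ∀ d a b : ℝ, 0 ≤ a → a ≤ b → b ≤ d →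
      IntervalIntegrable (fun x => m (d - x) * f x) volume a b := by
    intro d a b ha hab hbd
    refine ContinuousOn.intervalIntegrable ?_
    rw [uIcc_of_le hab]
    refine ContinuousOn.mul ?_ (hf_cont.mono (fun x hx => ha.trans hx.1))
    refine hmc.comp ((continuous_const.sub continuous_id).continuousOn) ?_
    intro x hx
    simp only [Set.mem_Ici, sub_nonneg, id]
    exact hx.2.trans hbd
  have hm_ii : ∀ a b : ℝ, 0 ≤ a → a ≤ b → IntervalIntegrable m volume a b := by
    intro a b ha hab
    refine ContinuousOn.intervalIntegrable ?_
    rw [uIcc_of_le hab]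
    exact hmc.mono (fun x hx => ha.trans hx.1)
  -- the core inequality
  have hAnti2 : AntitoneOn m (Set.Icc 0 t₂) := by
    refine antitoneOn_of_deriv_nonpos (convex_Icc _ _) (hmc.mono (fun x hx => hx.1)) ?_ ?_
    · intro x hx; rw [interior_Icc] at hx; exact (hm_diff x hx.1).differentiableWithinAt
    · intro x hx; rw [interior_Icc] at hx; exact (hm'_neg x hx).le
  have hfm_ii : ∀ d a b : ℝ, 0 ≤ a → a ≤ b → b ≤ d →
      IntervalIntegrable (fun x => m x * f (d - x)) volume a b := by
    intro d a b ha hab hbd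
    refine ContinuousOn.intervalIntegrable ?_
    rw [uIcc_of_le hab]
    refine ContinuousOn.mul (hmc.mono (fun x hx => ha.trans hx.1)) ?_
    refine hf_cont.comp ((continuous_const.sub continuous_id).continuousOn) ?_
    intro x hx
    simp only [Set.mem_Ici, sub_nonneg, id]
    exact hx.2.trans hbd
  have hCORE : ∀ p q : ℝ, t₂ ≤ p → p < q → q ≤ t₃ → q - p ≤ t₂ →
      m q - m p ≤ ∫ x in (0:ℝ)..p, (m (q - x) - m (p - x)) * f x := by
    intro p q hp hpq hq hqp
    have hp0 : 0 < p := lt_of_lt_of_le ht₂ hp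
    have hq0 : 0 < q := hp0.trans hpq
    have hmq := hconv q hq0.le
    have hmp := hconv p hp0.le
    have hsplit : (∫ x in (0:ℝ)..q, m (q - x) * f x)
        = (∫ x in (0:ℝ)..p, m (q - x) * f x) + ∫ x in p..q, m (q - x) * f x :=
      (intervalIntegral.integral_add_adjacent_intervals
        (hmf_ii q 0 p le_rfl hp0.le (by linarith))
        (hmf_ii q p q hp0.le hpq.le le_rfl)).symm
    -- the boundary term
    have hflip : (∫ x in p..q, m (q - x) * f x)
        = ∫ u in (0:ℝ)..(q - p), m u * f (q - u) := by
      have h2 := intervalIntegral.integral_comp_sub_left (a := p) (b := q)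
        (fun u => m u * f (q - u)) q
      simp only [sub_sub_cancel, sub_self] at h2
      exact h2
    have hflip2 : (∫ u in (0:ℝ)..(q - p), f (q - u)) = ∫ x in p..q, f x := by
      have h2 := intervalIntegral.integral_comp_sub_left (a := (0:ℝ)) (b := q - p) f q
      simp only [sub_sub_cancel, sub_zero] at h2
      exact h2
    have hmu_le : ∀ u ∈ Set.Icc (0:ℝ) (q - p), m u ≤ f 0 := by
      intro u hu
      have h1 : m u ≤ m 0 := hAnti2 ⟨le_rfl, ht₂.le⟩ ⟨hu.1, hu.2.trans hqp⟩ hu.1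
      rwa [hm0] at h1
    have hEnd : (∫ x in p..q, m (q - x) * f x) ≤ f 0 * ∫ x in p..q, f x := by
      rw [hflip, ← hflip2]
      have h3 : (∫ u in (0:ℝ)..(q - p), m u * f (q - u))
          ≤ ∫ u in (0:ℝ)..(q - p), f 0 * f (q - u) := by
        refine intervalIntegral.integral_mono_on (by linarith) ?_ ?_ ?_
        · exact hfm_ii q 0 (q - p) le_rfl (by linarith) (by linarith)
        · refine ContinuousOn.intervalIntegrable ?_
          rw [uIcc_of_le (by linarith : (0:ℝ) ≤ q - p)]
          refine continuousOn_const.mul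
            (hf_cont.comp ((continuous_const.sub continuous_id).continuousOn) ?_)
          intro u hu
          simp only [Set.mem_Ici, sub_nonneg, id]
          linarith [hu.2]
        · intro u hu
          refine mul_le_mul_of_nonneg_right (hmu_le u hu) ?_
          exact (hf_pos (q - u) (by simp only [Set.mem_Ici, sub_nonneg]; nlinarith [hu.2])).le
      rw [intervalIntegral.integral_const_mul] at h3
      exact h3
    -- the `f` term
    have hicc_sub : Set.Icc p q ⊆ Set.Icc t₂ t₃ := Set.Icc_subset_Icc hp hq
    have hg_ii : IntervalIntegrable g volume p q := by
      refine ContinuousOn.intervalIntegrable ?_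
      rw [uIcc_of_le hpq.le]
      exact hg_cont.mono hicc_sub
    have hftc : f q - f p = ∫ x in p..q, g x := by
      refine (intervalIntegral.integral_eq_sub_of_hasDeriv_right_of_le hpq.le ?_ ?_ hg_ii).symm
      · exact hf_cont.mono (fun x hx => le_trans ht₂.le (le_trans hp hx.1))
      · intro x hx
        have hxm : x ∈ Set.Icc t₂ t₃ := ⟨le_trans hp hx.1.le, le_trans hx.2.le hq⟩
        exact ((hg_deriv x hxm).hasDerivAt (Icc_mem_nhds (lt_of_le_of_lt hp hx.1)
          (lt_of_lt_of_le hx.2 hq))).hasDerivWithinAt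
    have hf_term : f q - f p ≤ -(f 0 * ∫ x in p..q, f x) := by
      have hffii : IntervalIntegrable (fun x => -(f 0 * f x)) volume p q := by
        refine ContinuousOn.intervalIntegrable ?_
        rw [uIcc_of_le hpq.le]
        exact ((hf_cont.mono (fun x hx => le_trans ht₂.le (le_trans hp hx.1))).const_smul
          (f 0)).neg
      have hg_le : (∫ x in p..q, g x) ≤ ∫ x in p..q, -(f 0 * f x) := by
        refine intervalIntegral.integral_mono_on hpq.le hg_ii hffii ?_
        intro x hx
        have := hA x (hicc_sub hx)
        linarith
      have heq2 : (∫ x in p..q, -(f 0 * f x)) = -(f 0 * ∫ x in p..q, f x) := by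
        rw [intervalIntegral.integral_neg, intervalIntegral.integral_const_mul]
      rw [hftc]
      linarith [hg_le, heq2.ge]
    -- assemble
    have hsub : (∫ x in (0:ℝ)..p, (m (q - x) - m (p - x)) * f x)
        = (∫ x in (0:ℝ)..p, m (q - x) * f x) - ∫ x in (0:ℝ)..p, m (p - x) * f x := by
      rw [← intervalIntegral.integral_sub (hmf_ii q 0 p le_rfl hp0.le (by linarith))
        (hmf_ii p 0 p le_rfl hp0.le le_rfl)]
      congr 1
      ext x
      ring
    have hmain : m q - m p = (f q - f p)
        + ((∫ x in (0:ℝ)..p, (m (q - x) - m (p - x)) * f x)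
          + ∫ x in p..q, m (q - x) * f x) := by
      rw [hmq, hmp, hsplit, hsub]
      ring
    linarith [hEnd, hf_term, hmain.le, hmain.ge]
  -- antitone on the initial interval
  -- bounds
  obtain ⟨M, hMpos, hM⟩ : ∃ M : ℝ, 0 < M ∧ ∀ x ∈ Set.Icc (0:ℝ) t₃, f x ≤ M := by
    obtain ⟨x₀, hx₀, hmax⟩ := IsCompact.exists_isMaxOn (s := Set.Icc (0:ℝ) t₃) isCompact_Icc
      (Set.nonempty_Icc.mpr (by linarith)) (hf_cont.mono (fun y hy => hy.1))
    exact ⟨f x₀, hf_pos x₀ hx₀.1, fun x hx => (isMaxOn_iff.mp hmax) x hx⟩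
  obtain ⟨B, hBpos, hB⟩ : ∃ B : ℝ, 0 ≤ B ∧
      ∀ a ∈ Set.Icc (0:ℝ) t₃, ∀ b ∈ Set.Icc (0:ℝ) t₃, m a - m b ≤ B := by
    obtain ⟨x₀, hx₀, hmax⟩ := IsCompact.exists_isMaxOn (s := Set.Icc (0:ℝ) t₃) isCompact_Icc
      (Set.nonempty_Icc.mpr (by linarith)) (hmc.mono (fun y hy => hy.1))
    obtain ⟨x₁, hx₁, hmin⟩ := IsCompact.exists_isMinOn (s := Set.Icc (0:ℝ) t₃) isCompact_Icc
      (Set.nonempty_Icc.mpr (by linarith)) (hmc.mono (fun y hy => hy.1))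
    refine ⟨m x₀ - m x₁, ?_, ?_⟩
    · have h1 := (isMinOn_iff.mp hmin) x₀ hx₀
      linarith
    · intro a ha b hb
      have h1 := (isMaxOn_iff.mp hmax) a ha
      have h2 := (isMinOn_iff.mp hmin) b hb
      linarith
  -- Phase 1 : `m` is antitone on `[0, t₃]`
  have hdiff_ii : ∀ p q a b : ℝ, 0 ≤ a → a ≤ b → b ≤ p → p < q → q ≤ t₃ →
      IntervalIntegrable (fun x => (m (q - x) - m (p - x)) * f x) volume a b := by
    intro p q a b ha hab hbp hpq hq
    have h1 := (hmf_ii q a b ha hab (by linarith)).sub (hmf_ii p a b ha hab hbp)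
    have h2 : (fun x => (m (q - x) - m (p - x)) * f x)
        = fun x => m (q - x) * f x - m (p - x) * f x := by ext x; ring
    rw [h2]; exact h1
  have hstep : ∀ u : ℝ, t₂ ≤ u → u < t₃ → AntitoneOn m (Set.Icc 0 u) →
      ∃ v, u < v ∧ v ≤ t₃ ∧ AntitoneOn m (Set.Icc 0 v) := by
    intro u hut2 hu3 hmu
    set ε := min t₂ ((t₃ - u)/2) with hεdef
    have hε0 : 0 < ε := lt_min ht₂ (by linarith)
    have hεt2 : ε ≤ t₂ := min_le_left _ _
    have hεt3 : u + ε < t₃ := by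
      have h1 : ε ≤ (t₃ - u)/2 := min_le_right _ _
      linarith
    have claimN : ∀ n : ℕ, ∀ p q : ℝ, u ≤ p → p < q → q ≤ u + ε →
        m q - m p ≤ B * (M * (q - u))^n / n.factorial := by
      intro n
      induction n with
      | zero =>
        intro p q hup hpq hqu
        have h1 := hB q ⟨by linarith, by linarith⟩ p ⟨by linarith, by linarith⟩
        simpa using h1
      | succ n ih =>
        intro p q hup hpq hqu
        set w := q - u with hwdef
        have hw0 : 0 < w := by rw [hwdef]; linarith
        have hwε : w ≤ ε := by rw [hwdef]; linarith
        have hwp : w ≤ p := by linarith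
        have hqt3 : q ≤ t₃ := by linarith
        have hcore := hCORE p q (by linarith) hpq hqt3 (by linarith)
        have hsplit2 : (∫ x in (0:ℝ)..p, (m (q - x) - m (p - x)) * f x)
            = (∫ x in (0:ℝ)..w, (m (q - x) - m (p - x)) * f x)
              + ∫ x in w..p, (m (q - x) - m (p - x)) * f x :=
          (intervalIntegral.integral_add_adjacent_intervals
            (hdiff_ii p q 0 w le_rfl hw0.le hwp hpq hqt3)
            (hdiff_ii p q w p hw0.le hwp le_rfl hpq hqt3)).symm
        have htail : (∫ x in w..p, (m (q - x) - m (p - x)) * f x) ≤ 0 := by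
          have h9 := intervalIntegral.integral_mono_on hwp
            (hdiff_ii p q w p hw0.le hwp le_rfl hpq hqt3)
            (intervalIntegrable_const (c := (0:ℝ))) ?_
          · simpa using h9
          · intro x hx
            have hx0 : 0 ≤ x := le_trans hw0.le hx.1
            have hxw' : q - u ≤ x := by rw [← hwdef]; exact hx.1
            have hmem1 : p - x ∈ Set.Icc (0:ℝ) u := ⟨by linarith [hx.2], by linarith⟩
            have hmem2 : q - x ∈ Set.Icc (0:ℝ) u := ⟨by linarith [hx.2, hpq.le], by linarith⟩
            have h5 : m (q - x) ≤ m (p - x) := hmu hmem1 hmem2 (by linarith [hpq.le])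
            have h6 : 0 ≤ f x := (hf_pos x hx0).le
            nlinarith
        have hhead : (∫ x in (0:ℝ)..w, (m (q - x) - m (p - x)) * f x)
            ≤ B * (M * w)^(n+1) / (n+1).factorial := by
          have hpt : ∀ x ∈ Set.Icc (0:ℝ) w, (m (q - x) - m (p - x)) * f x
              ≤ M * (B * (M * (w - x))^n / n.factorial) := by
            intro x hx
            have hwx : 0 ≤ M * (w - x) := by nlinarith [hx.2, hMpos.le]
            have hDnn : 0 ≤ B * (M * (w - x))^n / n.factorial :=
              div_nonneg (mul_nonneg hBpos (pow_nonneg hwx n)) (Nat.cast_nonneg _)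
            have hdle : m (q - x) - m (p - x) ≤ B * (M * (w - x))^n / n.factorial := by
              rcases lt_or_ge (p - x) u with hcase | hcase
              · rcases eq_or_lt_of_le (hx.2 : x ≤ w) with hxw | hxw
                · have hqx : q - x = u := by rw [hxw, hwdef]; ring
                  have h8 : m (q - x) ≤ m (p - x) := by
                    rw [hqx]
                    exact hmu ⟨by linarith, hcase.le⟩ ⟨by linarith, le_rfl⟩ hcase.le
                  linarith
                · have hxw2 : x < q - u := by rw [← hwdef]; exact hxw
                  have h7 := ih u (q - x) le_rfl (by linarith) (by linarith [hx.1])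
                  have h8 : m u ≤ m (p - x) :=
                    hmu ⟨by linarith, hcase.le⟩ ⟨by linarith, le_rfl⟩ hcase.le
                  have h10 : q - x - u = w - x := by rw [hwdef]; ring
                  rw [h10] at h7
                  linarith
              · have h7 := ih (p - x) (q - x) hcase (by linarith) (by linarith [hx.1])
                have h10 : q - x - u = w - x := by rw [hwdef]; ring
                rwa [h10] at h7
            have hf1 : 0 ≤ f x := (hf_pos x hx.1).le
            have hf2 : f x ≤ M := hM x ⟨hx.1, by linarith [hx.2]⟩
            rcases le_or_gt (m (q - x) - m (p - x)) 0 with hd0 | hd0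
            · nlinarith
            · nlinarith
          have hir : IntervalIntegrable
              (fun x => M * (B * (M * (w - x))^n / n.factorial)) volume 0 w := by
            apply Continuous.intervalIntegrable
            fun_prop
          have h9 := intervalIntegral.integral_mono_on hw0.le
            (hdiff_ii p q 0 w le_rfl hw0.le hwp hpq hqt3) hir hpt
          have h11 : (∫ x in (0:ℝ)..w, (w - x)^n) = w^(n+1) / (n+1) := by
            have h12 := intervalIntegral.integral_comp_sub_left (a := (0:ℝ)) (b := w)
              (fun y => y^n) w
            simp only [sub_self, sub_zero] at h12
            rw [h12, integral_pow]
            norm_num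
          have h13 : (∫ x in (0:ℝ)..w, M * (B * (M * (w - x))^n / n.factorial))
              = (M * B * M^n / n.factorial) * ∫ x in (0:ℝ)..w, (w - x)^n := by
            rw [← intervalIntegral.integral_const_mul]
            congr 1
            ext x
            rw [mul_pow]
            ring
          rw [h13, h11] at h9
          refine le_trans h9 (le_of_eq ?_)
          have hfacpos : (0:ℝ) < n.factorial := by exact_mod_cast n.factorial_pos
          have hfacsucc : ((n+1).factorial : ℝ) = (n+1) * n.factorial := by
            rw [Nat.factorial_succ]; push_cast; ring
          rw [hfacsucc, mul_pow]
          field_simp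
          ring
        calc m q - m p ≤ ∫ x in (0:ℝ)..p, (m (q - x) - m (p - x)) * f x := hcore
          _ = (∫ x in (0:ℝ)..w, (m (q - x) - m (p - x)) * f x)
              + ∫ x in w..p, (m (q - x) - m (p - x)) * f x := hsplit2
          _ ≤ B * (M * w)^(n+1) / (n+1).factorial + 0 := add_le_add hhead htail
          _ = B * (M * (q - u))^(n+1) / (n+1).factorial := by rw [add_zero]
    have claim0 : ∀ p q : ℝ, u ≤ p → p < q → q ≤ u + ε → m q ≤ m p := by
      intro p q hup hpq hqu
      have hlim : Filter.Tendsto (fun n : ℕ => B * (M * (q - u))^n / n.factorial)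
          Filter.atTop (nhds 0) := by
        have h1 := FloorSemiring.tendsto_pow_div_factorial_atTop (K := ℝ) (M * (q - u))
        have h2 := h1.const_mul B
        rw [mul_zero] at h2
        refine h2.congr (fun n => ?_)
        rw [mul_div_assoc]
      have h3 : m q - m p ≤ 0 :=
        ge_of_tendsto hlim (Filter.Eventually.of_forall (fun n => claimN n p q hup hpq hqu))
      linarith
    refine ⟨u + ε, by linarith, by linarith, ?_⟩
    intro a ha b hb hab
    rcases le_total b u with hbu | hbu
    · exact hmu ⟨ha.1, hab.trans hbu⟩ ⟨hb.1, hbu⟩ hab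
    · rcases eq_or_lt_of_le hab with heq | hlt
      · rw [heq]
      · rcases le_total a u with hau | hau
        · have hmbu : m b ≤ m u := by
            rcases eq_or_lt_of_le hbu with h | h
            · rw [← h]
            · exact claim0 u b le_rfl h hb.2
          exact le_trans hmbu (hmu ⟨ha.1, hau⟩ ⟨by linarith, le_rfl⟩ hau)
        · exact claim0 a b hau hlt hb.2
  have hAnti3 : AntitoneOn m (Set.Icc 0 t₃) := by
    set S : Set ℝ := {u | u ∈ Set.Icc t₂ t₃ ∧ AntitoneOn m (Set.Icc 0 u)} with hSdef
    have hSne : t₂ ∈ S := ⟨⟨le_rfl, ht₂₃.le⟩, hAnti2⟩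
    have hSbdd : BddAbove S := ⟨t₃, fun u hu => hu.1.2⟩
    set u₀ := sSup S with hu₀def
    have hu₀1 : t₂ ≤ u₀ := le_csSup hSbdd hSne
    have hu₀2 : u₀ ≤ t₃ := csSup_le ⟨t₂, hSne⟩ (fun u hu => hu.1.2)
    have hu₀S : AntitoneOn m (Set.Icc 0 u₀) := by
      intro a ha b hb hab
      rcases eq_or_lt_of_le (hb.2 : b ≤ u₀) with hbu | hbu
      · rcases eq_or_lt_of_le hab with haeq | halt
        · rw [haeq]
        · have hb0 : 0 < b := by rw [hbu]; linarith
          have hcont : Filter.Tendsto m (nhdsWithin b (Set.Iio b)) (nhds (m b)) :=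
            ((hm_diff b hb0).continuousAt.tendsto).mono_left nhdsWithin_le_nhds
          refine le_of_tendsto hcont ?_
          filter_upwards [Ioo_mem_nhdsLT_of_mem (Set.mem_Ioc.mpr ⟨halt, le_rfl⟩)] with c hc
          obtain ⟨u', hu'S, hcu⟩ := exists_lt_of_lt_csSup ⟨t₂, hSne⟩
            (show c < u₀ by rw [← hbu]; exact hc.2)
          exact hu'S.2 ⟨ha.1, by linarith [hc.1]⟩ ⟨by linarith [ha.1, hc.1], hcu.le⟩ hc.1.le
      · obtain ⟨u', hu'S, hbu'⟩ := exists_lt_of_lt_csSup ⟨t₂, hSne⟩ hbu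
        exact hu'S.2 ⟨ha.1, by linarith [hbu'.le, hu'S.1.2]⟩ ⟨hb.1, hbu'.le⟩ hab
    rcases eq_or_lt_of_le hu₀2 with heq | hlt
    · rw [← heq]; exact hu₀S
    · exfalso
      obtain ⟨v, hv1, hv2, hv3⟩ := hstep u₀ hu₀1 hlt hu₀S
      have hvS : v ≤ u₀ := le_csSup hSbdd ⟨⟨by linarith, hv2⟩, hv3⟩
      linarith
  -- Phase 2 : strict negativity of the derivative
  have hd : ∀ t ∈ Set.Ioo t₂ t₃, deriv m t < 0 := by
    have hSA : StrictAntiOn m (Set.Icc (t₂/4) (t₂/2)) := by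
      refine strictAntiOn_of_deriv_neg (convex_Icc _ _) (hmc.mono ?_) ?_
      · intro x hx; exact le_trans (by linarith) hx.1
      · intro x hx
        rw [interior_Icc] at hx
        exact hm'_neg x ⟨by linarith [hx.1], by linarith [hx.2]⟩
    obtain ⟨c, hcpos, hc⟩ : ∃ c : ℝ, 0 < c ∧ ∀ x ∈ Set.Icc (t₂/2) t₃, c ≤ f x := by
      obtain ⟨x₁, hx₁, hmin⟩ := IsCompact.exists_isMinOn (s := Set.Icc (t₂/2) t₃)
        isCompact_Icc (Set.nonempty_Icc.mpr (by linarith))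
        (hf_cont.mono (fun y hy => le_trans (by linarith) hy.1))
      exact ⟨f x₁, hf_pos x₁ (le_trans (by linarith) hx₁.1),
        fun x hx => (isMinOn_iff.mp hmin) x hx⟩
    have hΔpos : 0 < m (3*t₂/8) - m (t₂/2) := by
      have h := hSA (show (3*t₂/8) ∈ Set.Icc (t₂/4) (t₂/2) from ⟨by linarith, by linarith⟩)
        (show (t₂/2) ∈ Set.Icc (t₂/4) (t₂/2) from ⟨by linarith, by linarith⟩) (by linarith)
      linarith
    set Δ : ℝ := m (3*t₂/8) - m (t₂/2) with hΔdef
    intro t htm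
    obtain ⟨ht2t, htt3⟩ := htm
    set h₀ := min (t₂/8) ((t₃ - t)/2) with hh₀def
    have hh₀1 : h₀ ≤ t₂/8 := min_le_left _ _
    have hh₀2 : h₀ ≤ (t₃ - t)/2 := min_le_right _ _
    have hh₀pos : 0 < h₀ := lt_min (by linarith) (by linarith)
    have hfd : ∀ s : ℝ, t < s → s < t + h₀ → m s - m t ≤ -(c * Δ) * (s - t) := by
      intro s hts hst
      have hh0 : 0 < s - t := by linarith
      have hht2 : s - t ≤ t₂/8 := by linarith
      have hst3 : s ≤ t₃ := by linarith
      have hcore := hCORE t s ht2t.le hts hst3 (by linarith)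
      set a1 := t - t₂/2 with ha1def
      set a2 := t - t₂/4 with ha2def
      have ha10 : 0 < a1 := by rw [ha1def]; linarith
      have ha12 : a1 < a2 := by rw [ha1def, ha2def]; linarith
      have ha2t : a2 < t := by rw [ha2def]; linarith
      have hsplitA : (∫ x in (0:ℝ)..t, (m (s - x) - m (t - x)) * f x)
          = ((∫ x in (0:ℝ)..a1, (m (s - x) - m (t - x)) * f x)
            + ∫ x in a1..a2, (m (s - x) - m (t - x)) * f x)
            + ∫ x in a2..t, (m (s - x) - m (t - x)) * f x := by
        rw [intervalIntegral.integral_add_adjacent_intervals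
          (hdiff_ii t s 0 a1 le_rfl ha10.le (by linarith) hts hst3)
          (hdiff_ii t s a1 a2 ha10.le ha12.le ha2t.le hts hst3),
          intervalIntegral.integral_add_adjacent_intervals
          (hdiff_ii t s 0 a2 le_rfl (by linarith) ha2t.le hts hst3)
          (hdiff_ii t s a2 t (by linarith) ha2t.le le_rfl hts hst3)]
      have hptle : ∀ x : ℝ, 0 ≤ x → x ≤ t → m (s - x) - m (t - x) ≤ 0 := by
        intro x hx0 hxt
        have h1 : m (s - x) ≤ m (t - x) :=
          hAnti3 ⟨by linarith, by linarith⟩ ⟨by linarith, by linarith⟩ (by linarith)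
        linarith
      have hpiece1 : (∫ x in (0:ℝ)..a1, (m (s - x) - m (t - x)) * f x) ≤ 0 := by
        have h9 := intervalIntegral.integral_mono_on ha10.le
          (hdiff_ii t s 0 a1 le_rfl ha10.le (by linarith) hts hst3)
          (intervalIntegrable_const (c := (0:ℝ))) ?_
        · simpa using h9
        · intro x hx
          have h5 := hptle x hx.1 (by rw [ha1def] at hx; linarith [hx.2])
          have h6 : 0 ≤ f x := (hf_pos x hx.1).le
          nlinarith
      have hpiece3 : (∫ x in a2..t, (m (s - x) - m (t - x)) * f x) ≤ 0 := by
        have h9 := intervalIntegral.integral_mono_on ha2t.le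
          (hdiff_ii t s a2 t (by linarith) ha2t.le le_rfl hts hst3)
          (intervalIntegrable_const (c := (0:ℝ))) ?_
        · simpa using h9
        · intro x hx
          have hx0 : 0 ≤ x := le_trans (by linarith) hx.1
          have h5 := hptle x hx0 hx.2
          have h6 : 0 ≤ f x := (hf_pos x hx0).le
          nlinarith
      have hdm_ii : IntervalIntegrable (fun x => c * (m (s - x) - m (t - x))) volume a1 a2 := by
        refine ContinuousOn.intervalIntegrable ?_
        rw [uIcc_of_le ha12.le]
        refine continuousOn_const.mul (ContinuousOn.sub ?_ ?_)
        · refine hmc.comp ((continuous_const.sub continuous_id).continuousOn) ?_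
          intro x hx; simp only [Set.mem_Ici, sub_nonneg, id]
          exact le_trans hx.2 (by linarith)
        · refine hmc.comp ((continuous_const.sub continuous_id).continuousOn) ?_
          intro x hx; simp only [Set.mem_Ici, sub_nonneg, id]
          exact le_trans hx.2 (by linarith)
      have hpiece2 : (∫ x in a1..a2, (m (s - x) - m (t - x)) * f x)
          ≤ c * ∫ x in a1..a2, (m (s - x) - m (t - x)) := by
        rw [← intervalIntegral.integral_const_mul]
        refine intervalIntegral.integral_mono_on ha12.le
          (hdiff_ii t s a1 a2 ha10.le ha12.le ha2t.le hts hst3) hdm_ii ?_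
        intro x hx
        have hx0 : 0 ≤ x := le_trans ha10.le hx.1
        have h5 := hptle x hx0 (by linarith [hx.2])
        have hcx : c ≤ f x := by
          refine hc x ⟨?_, by linarith [hx.2]⟩
          rw [ha1def] at hx
          linarith [hx.1]
        nlinarith [mul_nonneg (sub_nonneg.mpr hcx) (neg_nonneg.mpr h5)]
      -- compute the middle integral
      have hmid1 : (∫ x in a1..a2, m (s - x)) = ∫ y in (t₂/4 + (s - t))..(t₂/2 + (s - t)), m y := by
        have h1 := intervalIntegral.integral_comp_sub_left (a := a1) (b := a2) m s
        rw [h1]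
        have e1 : s - a2 = t₂/4 + (s - t) := by rw [ha2def]; ring
        have e2 : s - a1 = t₂/2 + (s - t) := by rw [ha1def]; ring
        rw [e1, e2]
      have hmid2 : (∫ x in a1..a2, m (t - x)) = ∫ y in (t₂/4)..(t₂/2), m y := by
        have h1 := intervalIntegral.integral_comp_sub_left (a := a1) (b := a2) m t
        rw [h1]
        have e1 : t - a2 = t₂/4 := by rw [ha2def]; ring
        have e2 : t - a1 = t₂/2 := by rw [ha1def]; ring
        rw [e1, e2]
      have hmidsub : (∫ x in a1..a2, (m (s - x) - m (t - x)))
          = (∫ y in (t₂/4 + (s - t))..(t₂/2 + (s - t)), m y) - ∫ y in (t₂/4)..(t₂/2), m y := by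
        rw [← hmid1, ← hmid2]
        refine intervalIntegral.integral_sub ?_ ?_
        · refine ContinuousOn.intervalIntegrable ?_
          rw [uIcc_of_le ha12.le]
          refine hmc.comp ((continuous_const.sub continuous_id).continuousOn) ?_
          intro x hx; simp only [Set.mem_Ici, sub_nonneg, id]
          exact le_trans hx.2 (by linarith)
        · refine ContinuousOn.intervalIntegrable ?_
          rw [uIcc_of_le ha12.le]
          refine hmc.comp ((continuous_const.sub continuous_id).continuousOn) ?_
          intro x hx; simp only [Set.mem_Ici, sub_nonneg, id]
          exact le_trans hx.2 (by linarith)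
      have hrearr : (∫ y in (t₂/4 + (s - t))..(t₂/2 + (s - t)), m y) - ∫ y in (t₂/4)..(t₂/2), m y
          = (∫ y in (t₂/2)..(t₂/2 + (s - t)), m y) - ∫ y in (t₂/4)..(t₂/4 + (s - t)), m y := by
        have h1 := intervalIntegral.integral_add_adjacent_intervals
          (hm_ii (t₂/4 + (s - t)) (t₂/2) (by linarith) (by linarith))
          (hm_ii (t₂/2) (t₂/2 + (s - t)) (by linarith) (by linarith))
        have h2 := intervalIntegral.integral_add_adjacent_intervals
          (hm_ii (t₂/4) (t₂/4 + (s - t)) (by linarith) (by linarith))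
          (hm_ii (t₂/4 + (s - t)) (t₂/2) (by linarith) (by linarith))
        linarith [h1, h2]
      have hb1 : (∫ y in (t₂/2)..(t₂/2 + (s - t)), m y) ≤ (s - t) * m (t₂/2) := by
        have h9 := intervalIntegral.integral_mono_on (by linarith :
            t₂/2 ≤ t₂/2 + (s - t))
          (hm_ii (t₂/2) (t₂/2 + (s - t)) (by linarith) (by linarith))
          (intervalIntegrable_const (c := m (t₂/2))) ?_
        · rw [intervalIntegral.integral_const, smul_eq_mul] at h9
          calc (∫ y in (t₂/2)..(t₂/2 + (s - t)), m y)
              ≤ (t₂/2 + (s - t) - t₂/2) * m (t₂/2) := h9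
            _ = (s - t) * m (t₂/2) := by ring_nf
        · intro y hy
          exact hAnti3 ⟨by linarith, by linarith⟩ ⟨by linarith [hy.1], by linarith [hy.2]⟩
            hy.1
      have hb2 : (s - t) * m (3*t₂/8) ≤ ∫ y in (t₂/4)..(t₂/4 + (s - t)), m y := by
        have h9 := intervalIntegral.integral_mono_on (by linarith :
            t₂/4 ≤ t₂/4 + (s - t))
          (intervalIntegrable_const (c := m (3*t₂/8)))
          (hm_ii (t₂/4) (t₂/4 + (s - t)) (by linarith) (by linarith)) ?_
        · rw [intervalIntegral.integral_const, smul_eq_mul] at h9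
          calc (s - t) * m (3*t₂/8) = (t₂/4 + (s - t) - t₂/4) * m (3*t₂/8) := by ring_nf
            _ ≤ ∫ y in (t₂/4)..(t₂/4 + (s - t)), m y := h9
        · intro y hy
          exact hAnti3 ⟨by linarith [hy.1], by linarith [hy.2]⟩ ⟨by linarith, by linarith⟩
            (by linarith [hy.2])
      have hmidle : (∫ x in a1..a2, (m (s - x) - m (t - x))) ≤ -(Δ * (s - t)) := by
        rw [hmidsub, hrearr, hΔdef]
        nlinarith [hb1, hb2]
      have hfinal : c * (∫ x in a1..a2, (m (s - x) - m (t - x))) ≤ c * (-(Δ * (s - t))) :=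
        mul_le_mul_of_nonneg_left hmidle hcpos.le
      calc m s - m t ≤ ∫ x in (0:ℝ)..t, (m (s - x) - m (t - x)) * f x := hcore
        _ = ((∫ x in (0:ℝ)..a1, (m (s - x) - m (t - x)) * f x)
            + ∫ x in a1..a2, (m (s - x) - m (t - x)) * f x)
            + ∫ x in a2..t, (m (s - x) - m (t - x)) * f x := hsplitA
        _ ≤ ∫ x in a1..a2, (m (s - x) - m (t - x)) * f x := by linarith [hpiece1, hpiece3]
        _ ≤ c * ∫ x in a1..a2, (m (s - x) - m (t - x)) := hpiece2
        _ ≤ c * (-(Δ * (s - t))) := hfinal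
        _ = -(c * Δ) * (s - t) := by ring
    have hder : HasDerivAt m (deriv m t) t := (hm_diff t (by linarith)).hasDerivAt
    have hslope := hasDerivAt_iff_tendsto_slope.mp hder
    have hmono : Filter.Tendsto (slope m t) (nhdsWithin t (Set.Ioi t)) (nhds (deriv m t)) :=
      hslope.mono_left (nhdsWithin_mono t (fun s hs => ne_of_gt hs))
    have hle : deriv m t ≤ -(c * Δ) := by
      refine le_of_tendsto hmono ?_
      filter_upwards [Ioo_mem_nhdsGT_of_mem
        (Set.mem_Ico.mpr ⟨le_rfl, (show t < t + h₀ by linarith)⟩)] with s hs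
      have h1 := hfd s hs.1 hs.2
      have h2 : 0 < s - t := by linarith [hs.1]
      rw [slope_def_field]
      rw [div_le_iff₀ h2]
      exact h1
    have h3 : 0 < c * Δ := mul_pos hcpos hΔpos
    linarith
  refine ⟨hd, ?_⟩
  refine strictAntiOn_of_deriv_neg (convex_Icc _ _) ?_ ?_
  · exact hmc.mono (fun x hx => le_trans ht₂.le hx.1)
  · intro x hx
    rw [interior_Icc] at hx
    exact hd x hx
end
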